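/- arXiv:1303.0374 — 9 statements merged into one kernel-verified Lean document; each statement's English description precedes it below -/
import Mathlib

section
/- Let B be a nonempty compact metric space and let F : B × [0,1] → B × [0,1] be a continuous map of the form F(b, y) = (f(b), g(b, y)) for some continuous maps f : B → B and g : B × [0,1] → [0,1]. Then F is not minimal, i.e. no fibre-preserving continuous selfmap of the product B × [0,1] has all forward orbits dense. -/
open Set Topology unitInterval

/-- No fibre-preserving continuous selfmap of `B × [0,1]` is minimal,
i.e. it cannot have all forward orbits dense. -/
theorem no_minimal_skew_product_on_interval
    {B : Type*} [MetricSpace B] [CompactSpace B] [Nonempty B]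
    (f : B → B) (hf : Continuous f)
    (g : B × I → I) (hg : Continuous g)
    (F : B × I → B × I) (hF : ∀ p, F p = (f p.1, g p)) :
    ¬ ∀ p : B × I, Dense (Set.range fun n => F^[n] p) := by
  intro hmin
  have hFc : Continuous F := by
    have hEq : F = fun p => (f p.1, g p) := funext hF
    rw [hEq]
    exact (hf.comp continuous_fst).prodMk hg
  -- (m1) every nonempty closed forward-invariant set is everything
  have m1 : ∀ A : Set (B × I), IsClosed A → Set.MapsTo F A A → A.Nonempty →
      ∀ x, x ∈ A := by
    rintro A hAc hAm ⟨x0, hx0⟩ x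
    have horb : ∀ n, F^[n] x0 ∈ A := by
      intro n
      induction n with
      | zero => simpa using hx0
      | succ n ih => rw [Function.iterate_succ_apply']; exact hAm ih
    have hsub : Set.range (fun n => F^[n] x0) ⊆ A := by
      rintro _ ⟨n, rfl⟩; exact horb n
    have h1 : (univ : Set (B × I)) ⊆ A := by
      rw [← (hmin x0).closure_eq, ← hAc.closure_eq]
      exact closure_mono hsub
    exact h1 (mem_univ x)
  -- (core) a closed nonempty set in which every point has a preimage is everything
  have core : ∀ C : Set (B × I), IsClosed C → C.Nonempty →
      (∀ z ∈ C, ∃ x ∈ C, F x = z) → ∀ x, x ∈ C := by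
    intro C hCc hCne hpre
    set S : ℕ → Set (B × I) := fun n => ⋂ (k : ℕ) (_ : k ≤ n), F^[k] ⁻¹' C with hSdef
    have hScl : ∀ n, IsClosed (S n) :=
      fun n => isClosed_iInter fun k => isClosed_iInter fun _ =>
        hCc.preimage (hFc.iterate k)
    have hSnest : ∀ n, S (n + 1) ⊆ S n := by
      intro n x hx
      simp only [hSdef, mem_iInter, mem_preimage] at hx ⊢
      exact fun k hk => hx k (hk.trans (Nat.le_succ n))
    have hSne : ∀ n, (S n).Nonempty := by
      intro n
      induction n with
      | zero =>
        obtain ⟨z, hz⟩ := hCne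
        refine ⟨z, ?_⟩
        simp only [hSdef, mem_iInter, mem_preimage]
        intro k hk
        interval_cases k
        simpa using hz
      | succ n ih =>
        obtain ⟨z, hz⟩ := ih
        have hzC : z ∈ C := by
          simp only [hSdef, mem_iInter, mem_preimage] at hz
          simpa using hz 0 (Nat.zero_le n)
        obtain ⟨x, hxC, hfx⟩ := hpre z hzC
        refine ⟨x, ?_⟩
        simp only [hSdef, mem_iInter, mem_preimage] at hz ⊢
        intro k hk
        match k with
        | 0 => simpa using hxC
        | (j+1) =>
          rw [Function.iterate_succ_apply, hfx]
          exact hz j (Nat.succ_le_succ_iff.mp hk)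
    have hKne : (⋂ n, S n).Nonempty := by
      exact IsCompact.nonempty_iInter_of_sequence_nonempty_isCompact_isClosed S hSnest hSne
        ((hScl 0).isCompact) hScl
    set K : Set (B × I) := {x | ∀ n : ℕ, F^[n] x ∈ C} with hKdef
    have hKne' : K.Nonempty := by
      obtain ⟨x, hx⟩ := hKne
      refine ⟨x, fun n => ?_⟩
      simp only [mem_iInter, hSdef, mem_preimage] at hx
      exact hx n n le_rfl
    have hKcl : IsClosed K := by
      have : K = ⋂ (n : ℕ), F^[n] ⁻¹' C := by
        ext x; simp [hKdef]
      rw [this]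
      exact isClosed_iInter fun n => hCc.preimage (hFc.iterate n)
    have hKm : Set.MapsTo F K K := by
      intro x hx n
      rw [← Function.iterate_succ_apply]
      exact hx (n + 1)
    intro x
    have hxK : x ∈ K := m1 K hKcl hKm hKne' x
    simpa using hxK 0
  -- surjectivity
  have hsurj : ∀ z, ∃ x, F x = z := by
    intro z
    have hz : z ∈ Set.range F := by
      refine m1 (Set.range F) (isCompact_range hFc).isClosed
        (fun a _ => ⟨a, rfl⟩) ⟨F (Classical.arbitrary B, 0), _, rfl⟩ z
    exact hz
  -- (key) a "hump" in some fibre map yields a contradiction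
  have key : ∀ (G : B × I → ℝ), Continuous G →
      (∀ (b : B) (y y' : I), G (b, y) = G (b, y') → g (b, y) = g (b, y')) →
      ∀ (b₁ : B) (c : I), max (G (b₁, 0)) (G (b₁, 1)) < G (b₁, c) → False := by
    intro G hGc hGinj b₁ c hhump
    set π : ℝ → I := fun t => Set.projIcc (0:ℝ) 1 zero_le_one t with hπdef
    have hπc : Continuous π := continuous_projIcc
    have hπmem : ∀ (t : ℝ) (ht : t ∈ Icc (0:ℝ) 1), ((π t : I) : ℝ) = t := by
      intro t ht
      rw [hπdef]
      simp only [Set.projIcc_of_mem zero_le_one ht]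
    have hπ0 : π 0 = 0 := Subtype.ext (hπmem 0 ⟨le_rfl, zero_le_one⟩)
    have hπ1 : π 1 = 1 := Subtype.ext (hπmem 1 ⟨zero_le_one, le_rfl⟩)
    have hπI : ∀ y : I, π (y : ℝ) = y := fun y => Subtype.ext (hπmem _ y.2)
    set v := max (G (b₁, 0)) (G (b₁, 1)) with hvdef
    set M := G (b₁, c) with hMdef
    have hvM : v < M := hhump
    set γ := (M - v) / 8 with hγdef
    have hγ : 0 < γ := by rw [hγdef]; linarith
    set w := (v + M) / 2 with hwdef
    -- path maps along fibres
    have hpath : ∀ b : B, Continuous fun t : ℝ => G (b, π t) := by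
      intro b
      exact hGc.comp (continuous_const.prodMk hπc)
    -- find q with G (b₁, π q) = w, 0 < q < c
    have hIVT1 := intermediate_value_Icc (c.2.1) ((hpath b₁).continuousOn (s := Icc 0 (c:ℝ)))
    have hwmem : w ∈ Icc ((fun t : ℝ => G (b₁, π t)) 0) ((fun t : ℝ => G (b₁, π t)) (c : ℝ)) := by
      simp only [hπ0, hπI c]
      constructor
      · have : G (b₁, 0) ≤ v := le_max_left _ _
        rw [hwdef]; linarith
      · rw [hwdef, ← hMdef]; linarith
    obtain ⟨q, hqmem, hqval⟩ := hIVT1 hwmem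
    simp only at hqval
    have hq01 : q ∈ Icc (0:ℝ) 1 := ⟨hqmem.1, hqmem.2.trans c.2.2⟩
    have hq0 : 0 < q := by
      rcases lt_or_eq_of_le hqmem.1 with h | h
      · exact h
      · exfalso
        rw [← h] at hqval
        rw [hπ0] at hqval
        have : G (b₁, 0) ≤ v := le_max_left _ _
        rw [hwdef] at hqval; linarith
    have hqc : q < (c : ℝ) := by
      rcases lt_or_eq_of_le hqmem.2 with h | h
      · exact h
      · exfalso
        rw [h, hπI c] at hqval
        rw [hwdef, ← hMdef] at hqval; linarith
    -- continuity moduli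
    obtain ⟨r, hr0, hrball⟩ := Metric.continuous_iff.mp hGc (b₁, π q) γ hγ
    obtain ⟨r2, hr20, hr2ball⟩ := Metric.continuous_iff.mp hGc (b₁, c) γ hγ
    obtain ⟨r3, hr30, hr3ball⟩ := Metric.continuous_iff.mp hGc (b₁, 1) γ hγ
    set ρ := min (r / 2) (min (q / 2) (((c : ℝ) - q) / 2)) with hρdef
    have hρ0 : 0 < ρ := by
      rw [hρdef]
      apply lt_min (by linarith)
      apply lt_min (by linarith) (by linarith)
    have hρq : ρ ≤ q / 2 := le_trans (min_le_right _ _) (min_le_left _ _)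
    have hρcq : ρ ≤ ((c : ℝ) - q) / 2 := le_trans (min_le_right _ _) (min_le_right _ _)
    have hρr : ρ ≤ r / 2 := min_le_left _ _
    set α := q - ρ with hαdef
    set β := q + ρ with hβdef
    have hα0 : 0 < α := by rw [hαdef]; linarith
    have hβc : β < (c : ℝ) := by rw [hβdef]; linarith
    set R := min r (min r2 r3) with hRdef
    have hR0 : 0 < R := by
      rw [hRdef]; exact lt_min hr0 (lt_min hr20 hr30)
    have hRr : R ≤ r := min_le_left _ _
    have hRr2 : R ≤ r2 := le_trans (min_le_right _ _) (min_le_left _ _)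
    have hRr3 : R ≤ r3 := le_trans (min_le_right _ _) (min_le_right _ _)
    set V := Metric.ball b₁ R with hVdef
    set O : Set (B × I) := {p | p.1 ∈ V ∧ α < (p.2 : ℝ) ∧ (p.2 : ℝ) < β} with hOdef
    have hOopen : IsOpen O := by
      have : O = (Prod.fst ⁻¹' V) ∩ ((fun p : B × I => (p.2 : ℝ)) ⁻¹' Ioo α β) := by
        ext p
        simp only [hOdef, mem_setOf_eq, mem_inter_iff, mem_preimage, mem_Ioo]
      rw [this]
      exact (Metric.isOpen_ball.preimage continuous_fst).inter
        (isOpen_Ioo.preimage (continuous_subtype_val.comp continuous_snd))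
    have hCcl : IsClosed Oᶜ := hOopen.isClosed_compl
    have hCne : (b₁, c) ∈ Oᶜ := by
      rintro ⟨-, -, hlt⟩
      simp only at hlt
      linarith
    have hpreC : ∀ z ∈ Oᶜ, ∃ x ∈ Oᶜ, F x = z := by
      intro z _
      obtain ⟨x, hxz⟩ := hsurj z
      by_cases hxO : x ∈ O
      · obtain ⟨b2, y0⟩ := x
        obtain ⟨hbV, hy0a, hy0b⟩ := hxO
        simp only at hbV hy0a hy0b
        have hdb : dist b2 b₁ < R := hbV
        -- value of G near w at (b2, y0)
        have hdy : dist y0 (π q) < r := by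
          have h1 : dist y0 (π q) = |(y0 : ℝ) - q| := by
            rw [Subtype.dist_eq, Real.dist_eq, hπmem q hq01]
          rw [h1, abs_lt]
          constructor <;> [linarith; linarith]
        have hw0 : dist (G (b2, y0)) (G (b₁, π q)) < γ := by
          apply hrball
          rw [Prod.dist_eq]
          exact max_lt (lt_of_lt_of_le hdb hRr) hdy
        rw [hqval, Real.dist_eq] at hw0
        set w0 := G (b2, y0) with hw0def
        have hw0w : |w0 - w| < γ := hw0
        -- G (b2, c) is large
        have hGc2 : |G (b2, c) - M| < γ := by
          have := hr2ball (b2, c) (by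
            rw [Prod.dist_eq]
            have : dist (c : I) c = 0 := dist_self c
            rw [this]
            exact max_lt (lt_of_lt_of_le hdb hRr2) hr20)
          rw [Real.dist_eq, ← hMdef] at this
          exact this
        -- G (b2, 1) is small
        have hG12 : |G (b2, 1) - G (b₁, 1)| < γ := by
          have := hr3ball (b2, 1) (by
            rw [Prod.dist_eq]
            have : dist (1 : I) 1 = 0 := dist_self 1
            rw [this]
            exact max_lt (lt_of_lt_of_le hdb hRr3) hr30)
          rw [Real.dist_eq] at this
          exact this
        have hv1 : G (b₁, 1) ≤ v := le_max_right _ _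
        have habs1 : w - γ < w0 ∧ w0 < w + γ := abs_lt.mp hw0w |>.imp (by intro h; linarith) (by intro h; linarith)
        have habs2 : M - γ < G (b2, c) := by have := (abs_lt.mp hGc2).1; linarith
        have habs3 : G (b2, 1) < G (b₁, 1) + γ := by have := (abs_lt.mp hG12).2; linarith
        -- recovery IVT on [c, 1]
        have hIVT2 := intermediate_value_Icc' (c.2.2) ((hpath b2).continuousOn (s := Icc (c:ℝ) 1))
        have hw0mem : w0 ∈ Icc ((fun t : ℝ => G (b2, π t)) 1) ((fun t : ℝ => G (b2, π t)) (c : ℝ)) := by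
          simp only [hπ1, hπI c]
          constructor
          · linarith [habs1.1, habs3, hv1, hγdef, hwdef]
          · linarith [habs1.2, habs2, hγdef, hwdef]
        obtain ⟨ξ, hξmem, hξval⟩ := hIVT2 hw0mem
        simp only at hξval
        have hξ01 : ξ ∈ Icc (0:ℝ) 1 := ⟨le_trans c.2.1 hξmem.1, hξmem.2⟩
        refine ⟨(b2, π ξ), ?_, ?_⟩
        · rintro ⟨-, -, hlt⟩
          simp only at hlt
          rw [hπmem ξ hξ01] at hlt
          have := hξmem.1
          linarith
        · have hgeq : g (b2, π ξ) = g (b2, y0) := hGinj b2 _ _ (by rw [hξval])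
          calc F (b2, π ξ) = (f b2, g (b2, π ξ)) := hF _
            _ = (f b2, g (b2, y0)) := by rw [hgeq]
            _ = F (b2, y0) := by rw [hF (b2, y0)]
            _ = z := hxz
      · exact ⟨x, hxO, hxz⟩
    have hall := core Oᶜ hCcl ⟨(b₁, c), hCne⟩ hpreC (b₁, π q)
    apply hall
    refine ⟨Metric.mem_ball_self hR0, ?_, ?_⟩ <;> simp only [hπmem q hq01]
    · linarith
    · linarith
  -- endgame: either some fibre map has a hump, or all values lie between endpoint values
  by_cases hP : ∃ p : B × I, max ((g (p.1, 0) : ℝ)) ((g (p.1, 1) : ℝ)) < (g p : ℝ) ∨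
      (g p : ℝ) < min ((g (p.1, 0) : ℝ)) ((g (p.1, 1) : ℝ))
  · obtain ⟨p, hp⟩ := hP
    obtain ⟨b₁, c⟩ := p
    rcases hp with h | h
    · exact key (fun p => (g p : ℝ)) (continuous_subtype_val.comp hg)
        (fun b y y' hyy => Subtype.ext hyy) b₁ c h
    · refine key (fun p => -(g p : ℝ)) ((continuous_subtype_val.comp hg).neg)
        (fun b y y' hyy => Subtype.ext (neg_inj.mp hyy)) b₁ c ?_
      show max (-(g (b₁, 0) : ℝ)) (-(g (b₁, 1) : ℝ)) < -(g (b₁, c) : ℝ)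
      rw [max_neg_neg]
      exact neg_lt_neg h
  · push_neg at hP
    set Bd : Set (B × I) := {p | p.2 = 0 ∨ p.2 = 1} with hBddef
    have hBdcl : IsClosed Bd := by
      have : Bd = (Prod.snd ⁻¹' {(0 : I)}) ∪ (Prod.snd ⁻¹' {(1 : I)}) := by
        ext p; simp [hBddef]
      rw [this]
      exact (isClosed_singleton.preimage continuous_snd).union
        (isClosed_singleton.preimage continuous_snd)
    have hBdne : Bd.Nonempty := ⟨(Classical.arbitrary B, 0), Or.inl rfl⟩
    have hBdpre : ∀ z ∈ Bd, ∃ x ∈ Bd, F x = z := by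
      intro z hz
      obtain ⟨x, hxz⟩ := hsurj z
      obtain ⟨b, y⟩ := x
      have hfx : (f b, g (b, y)) = z := by rw [← hF (b, y)]; exact hxz
      have hP1 : (g (b, y) : ℝ) ≤ max ((g (b, 0) : ℝ)) ((g (b, 1) : ℝ)) := (hP (b, y)).1
      have hP2 : min ((g (b, 0) : ℝ)) ((g (b, 1) : ℝ)) ≤ (g (b, y) : ℝ) := (hP (b, y)).2
      rcases hz with hz0 | hz1
      · have hgy : g (b, y) = (0 : I) := by
          have : z.2 = g (b, y) := by rw [← hfx]
          rw [← this, hz0]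
        have hgy' : (g (b, y) : ℝ) = 0 := by rw [hgy]; rfl
        have hmin : min ((g (b, 0) : ℝ)) ((g (b, 1) : ℝ)) ≤ 0 := by
          rw [← hgy']; exact hP2
        have hzeq : z = (f b, (0 : I)) := by rw [← hfx, hgy]
        rcases le_total ((g (b, 0) : ℝ)) ((g (b, 1) : ℝ)) with hle | hle
        · have h0 : g (b, 0) = (0 : I) := by
            apply Subtype.ext
            have := (g (b, 0)).2.1
            rw [min_eq_left hle] at hmin
            exact le_antisymm hmin this
          exact ⟨(b, 0), Or.inl rfl, by rw [hF (b, 0), hzeq, h0]⟩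
        · have h0 : g (b, 1) = (0 : I) := by
            apply Subtype.ext
            have := (g (b, 1)).2.1
            rw [min_eq_right hle] at hmin
            exact le_antisymm hmin this
          exact ⟨(b, 1), Or.inr rfl, by rw [hF (b, 1), hzeq, h0]⟩
      · have hgy : g (b, y) = (1 : I) := by
          have : z.2 = g (b, y) := by rw [← hfx]
          rw [← this, hz1]
        have hgy' : (g (b, y) : ℝ) = 1 := by rw [hgy]; rfl
        have hmax : 1 ≤ max ((g (b, 0) : ℝ)) ((g (b, 1) : ℝ)) := by
          rw [← hgy']; exact hP1
        have hzeq : z = (f b, (1 : I)) := by rw [← hfx, hgy]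
        rcases le_total ((g (b, 0) : ℝ)) ((g (b, 1) : ℝ)) with hle | hle
        · have h1 : g (b, 1) = (1 : I) := by
            apply Subtype.ext
            have := (g (b, 1)).2.2
            rw [max_eq_right hle] at hmax
            exact le_antisymm this hmax
          exact ⟨(b, 1), Or.inr rfl, by rw [hF (b, 1), hzeq, h1]⟩
        · have h1 : g (b, 0) = (1 : I) := by
            apply Subtype.ext
            have := (g (b, 0)).2.2
            rw [max_eq_left hle] at hmax
            exact le_antisymm this hmax
          exact ⟨(b, 0), Or.inl rfl, by rw [hF (b, 0), hzeq, h1]⟩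
    have hall := core Bd hBdcl hBdne hBdpre (Classical.arbitrary B, ⟨1/2, by norm_num⟩)
    rcases hall with h | h
    · have := congrArg Subtype.val h
      norm_num at this
    · have := congrArg Subtype.val h
      norm_num at this
end

section
/- Let B be a nonempty compact metric space, f : B → B a continuous minimal map, S¹ = ℝ/ℤ the circle, and F : B × S¹ → B × S¹ a continuous map of the form F(b, y) = (f(b), g(b, y)) with g : B × S¹ → S¹ continuous. Let M be a minimal set of F that is nowhere dense in B × S¹. Then either (E1) there is a residual set R ⊆ B such that for every b ∈ R the fibre M_b = {y ∈ S¹ : (b, y) ∈ M} is a Cantor set, or (E2) there are a positive integer N and a residual set R ⊆ B such that for every b ∈ R the fibre M_b has exactly N elements. -/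
open Set Topology
open Filter

namespace ST4

variable {B : Type*} [MetricSpace B] [CompactSpace B]

local notation "Y" => AddCircle (1 : ℝ)

/-- the fibre of `M` over `b` -/
def fib (M : Set (B × Y)) (b : B) : Set Y := {y | (b, y) ∈ M}

variable {M : Set (B × Y)}

lemma isClosed_fib (hMcl : IsClosed M) (b : B) : IsClosed (fib M b) :=
  hMcl.preimage (Continuous.prodMk_right b)

lemma isCompact_fib (hMcl : IsClosed M) (b : B) : IsCompact (fib M b) :=
  (isClosed_fib hMcl b).isCompact

lemma isClosed_meets (hMcl : IsClosed M) {K : Set Y} (hK : IsClosed K) :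
    IsClosed {b : B | ∃ y ∈ K, (b, y) ∈ M} := by
  have h1 : {b : B | ∃ y ∈ K, (b, y) ∈ M} = Prod.fst '' (M ∩ (univ ×ˢ K)) := by
    ext b
    constructor
    · rintro ⟨y, hyK, hyM⟩
      exact ⟨(b, y), ⟨hyM, ⟨trivial, hyK⟩⟩, rfl⟩
    · rintro ⟨⟨b', y⟩, ⟨hM, ⟨-, hK'⟩⟩, rfl⟩
      exact ⟨y, hK', hM⟩
  rw [h1]
  exact (((hMcl.inter (isClosed_univ.prod hK)).isCompact).image continuous_fst).isClosed

/-- upper semicontinuity of fibres -/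
lemma usc_fib (hMcl : IsClosed M) (b₀ : B) {V : Set Y} (hV : IsOpen V)
    (hfibV : fib M b₀ ⊆ V) : ∀ᶠ b in 𝓝 b₀, fib M b ⊆ V := by
  have hC : IsClosed {b : B | ∃ y ∈ Vᶜ, (b, y) ∈ M} := isClosed_meets hMcl hV.isClosed_compl
  have hb₀ : b₀ ∈ {b : B | ∃ y ∈ Vᶜ, (b, y) ∈ M}ᶜ := by
    rintro ⟨y, hyV, hyM⟩
    exact hyV (hfibV hyM)
  filter_upwards [hC.isOpen_compl.mem_nhds hb₀] with b hb y hy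
  by_contra hyV
  exact hb ⟨y, hyV, hy⟩

/-- `b` is a point of lower semicontinuity of the fibre map -/
def lscPt (M : Set (B × Y)) (b : B) : Prop :=
  ∀ y ∈ fib M b, ∀ δ > (0:ℝ), ∀ᶠ b' in 𝓝 b, ∃ y' ∈ fib M b', dist y' y < δ

lemma residual_lscPt (hMcl : IsClosed M) : {b : B | lscPt M b} ∈ residual B := by
  obtain ⟨D, hDc, hDd⟩ := TopologicalSpace.exists_countable_dense Y
  haveI : Countable ↥D := hDc.to_subtype
  set S : Y → ℚ → Set B := fun q r => {b | ∃ y ∈ Metric.closedBall q (r:ℝ), (b, y) ∈ M} with hS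
  have hScl : ∀ q r, IsClosed (S q r) := fun q r =>
    isClosed_meets hMcl Metric.isClosed_closedBall
  apply mem_of_superset
    (countable_iInter_mem.2 (fun q : D => countable_iInter_mem.2 (fun r : ℚ =>
      residual_of_dense_open (isClosed_frontier (s := S q r)).isOpen_compl
        (interior_eq_empty_iff_dense_compl.mp (interior_frontier (hScl q r))))))
  intro b hb
  simp only [mem_iInter] at hb
  intro y hy δ hδ
  obtain ⟨q, hqD, hq⟩ := hDd.exists_dist_lt y (by linarith : (0:ℝ) < δ/4)
  obtain ⟨r, hr1, hr2⟩ := exists_rat_btwn (by linarith : (δ:ℝ)/4 < δ/3)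
  have hbS : b ∈ S q r := ⟨y, by
    simp only [Metric.mem_closedBall]
    linarith, hy⟩
  have hbint : b ∈ interior (S q r) := by
    have h := hb ⟨q, hqD⟩ r
    rw [(hScl q r).frontier_eq] at h
    simp only [mem_compl_iff, mem_diff, not_and, not_not] at h
    exact h hbS
  filter_upwards [mem_interior_iff_mem_nhds.1 hbint] with b' hb'
  obtain ⟨y', hy'ball, hy'M⟩ := hb'
  refine ⟨y', hy'M, ?_⟩
  have h1 : dist y' q ≤ (r:ℝ) := Metric.mem_closedBall.1 hy'ball
  have h2 : dist q y < δ/4 := by rw [dist_comm]; exact hq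
  calc dist y' y ≤ dist y' q + dist q y := dist_triangle _ _ _
    _ < δ/3 + δ/4 := by linarith
    _ < δ := by linarith
section Counting

open Classical in
/-- separation constant of a finite set -/
lemma exists_sep {α : Type*} [MetricSpace α] (T : Finset α) :
    ∃ δ > (0:ℝ), ∀ y ∈ T, ∀ z ∈ T, y ≠ z → δ ≤ dist y z := by
  by_cases h : T.offDiag.Nonempty
  · refine ⟨(T.offDiag.image (fun p => dist p.1 p.2)).min' (h.image _), ?_, ?_⟩
    · obtain ⟨p, hp, hmin⟩ := Finset.mem_image.1 ((T.offDiag.image (fun p => dist p.1 p.2)).min'_mem (h.image _))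
      rw [← hmin]
      obtain ⟨-, -, hne⟩ := Finset.mem_offDiag.1 hp
      exact dist_pos.2 hne
    · intro y hy z hz hne
      exact Finset.min'_le _ _ (Finset.mem_image.2 ⟨(y, z), Finset.mem_offDiag.2 ⟨hy, hz, hne⟩, rfl⟩)
  · exact ⟨1, one_pos, fun y hy z hz hne =>
      absurd (⟨(y,z), Finset.mem_offDiag.2 ⟨hy, hz, hne⟩⟩ : T.offDiag.Nonempty) h⟩

open Classical in
/-- approximating a `δ`-separated finite set inside `S` -/
lemma finset_approx {α : Type*} [MetricSpace α] {T : Finset α} {S : Set α} {δ : ℝ}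
    (hδ : 0 < δ) (hsep : ∀ y ∈ T, ∀ z ∈ T, y ≠ z → δ ≤ dist y z)
    (happ : ∀ y ∈ T, ∃ z ∈ S, dist z y < δ/2) :
    ∃ T' : Finset α, ↑T' ⊆ S ∧ T'.card = T.card := by
  choose c hcS hcd using fun (y : {x // x ∈ T}) => happ y.1 y.2
  refine ⟨T.attach.image c, ?_, ?_⟩
  · intro z hz
    simp only [Finset.coe_image, Set.mem_image] at hz
    obtain ⟨y, -, rfl⟩ := hz
    exact hcS y
  · rw [Finset.card_image_of_injOn, Finset.card_attach]
    intro y _ z _ hyz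
    by_contra hne
    have hne' : y.1 ≠ z.1 := fun h => hne (Subtype.ext h)
    have h1 := hsep y.1 y.2 z.1 z.2 hne'
    have h4 : dist (y:α) (z:α) ≤ dist (y:α) (c y) + dist (c y) (z:α) := dist_triangle _ _ _
    rw [hyz] at h4
    have h5 : dist (c z) (z:α) < δ/2 := hcd z
    have h6 : dist (y:α) (c y) < δ/2 := by rw [dist_comm]; exact hcd y
    rw [hyz] at h6
    linarith [h4, h1]

open Classical in
lemma finset_in_image {α β : Type*} {φ : α → β} {S : Set α} {T : Finset β}
    (h : ↑T ⊆ φ '' S) : ∃ T' : Finset α, ↑T' ⊆ S ∧ T'.card = T.card := by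
  choose c hcS hc using fun (t : {x // x ∈ T}) => h t.2
  refine ⟨T.attach.image c, ?_, ?_⟩
  · intro z hz
    simp only [Finset.coe_image, Set.mem_image] at hz
    obtain ⟨y, -, rfl⟩ := hz
    exact hcS y
  · rw [Finset.card_image_of_injOn, Finset.card_attach]
    intro y _ z _ hyz
    have : φ (c y) = φ (c z) := by rw [hyz]
    rw [hc y, hc z] at this
    exact Subtype.ext this

end Counting
section Dynamics

variable {B : Type*} [MetricSpace B] [CompactSpace B] [Nonempty B]

variable {f : B → B} {g : B × Y → Y} {F : B × Y → B × Y} {M : Set (B × Y)}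

lemma orbit_hits (hfmin : ∀ b : B, Dense (Set.range fun n => f^[n] b)) (b : B)
    {U : Set B} (hU : IsOpen U) (hUne : U.Nonempty) : ∃ n, f^[n] b ∈ U := by
  obtain ⟨x, hx1, hx2⟩ := dense_iff_inter_open.1 (hfmin b) U hU hUne
  obtain ⟨n, rfl⟩ := hx2
  exact ⟨n, hx1⟩

lemma F_iter_fst (hF : ∀ p, F p = (f p.1, g p)) :
    ∀ (n : ℕ) (p : B × Y), (F^[n] p).1 = f^[n] p.1 := by
  intro n
  induction n with
  | zero => simp
  | succ n ih =>
    intro p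
    rw [Function.iterate_succ_apply', Function.iterate_succ_apply', hF, ih]

lemma mem_M_iter (hMinv : Set.MapsTo F M M) {p : B × Y} (hp : p ∈ M) (n : ℕ) :
    F^[n] p ∈ M := by
  induction n with
  | zero => simpa
  | succ n ih => rw [Function.iterate_succ_apply']; exact hMinv ih

lemma F_image_eq (hf : Continuous f) (hg : Continuous g)
    (hF : ∀ p, F p = (f p.1, g p)) (hMne : M.Nonempty) (hMcl : IsClosed M)
    (hMinv : Set.MapsTo F M M)
    (hMmin : ∀ p ∈ M, M ⊆ closure (Set.range fun n => F^[n] p)) :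
    F '' M = M := by
  have hFc : Continuous F := by
    have : F = fun p => (f p.1, g p) := funext hF
    rw [this]
    exact (hf.comp continuous_fst).prodMk hg
  have hAcl : IsClosed (F '' M) := ((hMcl.isCompact).image hFc).isClosed
  refine Set.Subset.antisymm hMinv.image_subset ?_
  obtain ⟨p₀, hp₀⟩ := hMne
  have hp₀A : F p₀ ∈ F '' M := ⟨p₀, hp₀, rfl⟩
  have horb : (Set.range fun n => F^[n] (F p₀)) ⊆ F '' M := by
    rintro x ⟨n, rfl⟩
    exact ⟨F^[n] p₀, mem_M_iter hMinv hp₀ n,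
      (Function.iterate_succ_apply' F n p₀).symm.trans (Function.iterate_succ_apply F n p₀)⟩
  calc M ⊆ closure (Set.range fun n => F^[n] (F p₀)) := hMmin _ (hMinv hp₀)
    _ ⊆ closure (F '' M) := closure_mono horb
    _ = F '' M := hAcl.closure_eq

lemma M_sub_iter_image (hf : Continuous f) (hg : Continuous g)
    (hF : ∀ p, F p = (f p.1, g p)) (hMne : M.Nonempty) (hMcl : IsClosed M)
    (hMinv : Set.MapsTo F M M)
    (hMmin : ∀ p ∈ M, M ⊆ closure (Set.range fun n => F^[n] p)) :
    ∀ n, M ⊆ F^[n] '' M := by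
  intro n
  induction n with
  | zero => simp
  | succ n ih =>
    have h1 : F^[n+1] '' M = F^[n] '' (F '' M) := by
      rw [← Set.image_comp, ← Function.iterate_succ]
    rw [h1, F_image_eq hf hg hF hMne hMcl hMinv hMmin]
    exact ih

lemma fib_nonempty (hf : Continuous f)
    (hfmin : ∀ b : B, Dense (Set.range fun n => f^[n] b))
    (hF : ∀ p, F p = (f p.1, g p)) (hMne : M.Nonempty) (hMcl : IsClosed M)
    (hMinv : Set.MapsTo F M M) :
    ∀ b, (fib M b).Nonempty := by
  intro b
  obtain ⟨⟨b₀, y₀⟩, hp₀⟩ := hMne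
  have hPcl : IsClosed (Prod.fst '' M) := ((hMcl.isCompact).image continuous_fst).isClosed
  have horb : ∀ n, f^[n] b₀ ∈ Prod.fst '' M := by
    intro n
    refine ⟨F^[n] (b₀, y₀), mem_M_iter hMinv hp₀ n, ?_⟩
    exact F_iter_fst hF n (b₀, y₀)
  have hdense : (Set.range fun n => f^[n] b₀) ⊆ Prod.fst '' M := by
    rintro x ⟨n, rfl⟩; exact horb n
  have huniv : (Set.univ : Set B) ⊆ Prod.fst '' M := by
    calc Set.univ = closure (Set.range fun n => f^[n] b₀) := ((hfmin b₀).closure_eq).symm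
      _ ⊆ closure (Prod.fst '' M) := closure_mono hdense
      _ = Prod.fst '' M := hPcl.closure_eq
  obtain ⟨⟨b', y⟩, hbyM, hb'⟩ := huniv (Set.mem_univ b)
  dsimp at hb'
  subst hb'
  exact ⟨y, hbyM⟩

lemma f_surj (hf : Continuous f)
    (hfmin : ∀ b : B, Dense (Set.range fun n => f^[n] b)) :
    Function.Surjective f := by
  intro b
  obtain ⟨b₀⟩ := ‹Nonempty B›
  have hcl : IsClosed (f '' Set.univ) := ((isCompact_univ).image hf).isClosed
  have horb : (Set.range fun n => f^[n] (f b₀)) ⊆ f '' Set.univ := by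
    rintro x ⟨n, rfl⟩
    exact ⟨f^[n] b₀, Set.mem_univ _,
      (Function.iterate_succ_apply' f n b₀).symm.trans (Function.iterate_succ_apply f n b₀)⟩
  have : (Set.univ : Set B) ⊆ f '' Set.univ := by
    calc Set.univ = closure (Set.range fun n => f^[n] (f b₀)) := ((hfmin (f b₀)).closure_eq).symm
      _ ⊆ closure (f '' Set.univ) := closure_mono horb
      _ = f '' Set.univ := hcl.closure_eq
  obtain ⟨a, -, ha⟩ := this (Set.mem_univ b)
  exact ⟨a, ha⟩

/-- minimal maps are irreducible -/
lemma f_irred (hf : Continuous f)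
    (hfmin : ∀ b : B, Dense (Set.range fun n => f^[n] b))
    {A : Set B} (hAcl : IsClosed A) (hA : ∀ b, ∃ a ∈ A, f a = b) :
    A = Set.univ := by
  obtain ⟨b₀⟩ := ‹Nonempty B›
  -- build a backward chain in A
  choose c hcA hcf using hA
  set a : ℕ → B := fun n => c^[n+1] b₀ with ha
  have haA : ∀ n, a n ∈ A := fun n => by
    rw [ha]; simp only [Function.iterate_succ_apply']; exact hcA _
  have haf : ∀ n, f (a (n+1)) = a n := fun n => by
    rw [ha]; simp only [Function.iterate_succ_apply' c (n+1)]; exact hcf _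
  set L : Set B := ⋂ N : ℕ, closure (a '' Set.Ici N) with hL
  have hLne : L.Nonempty := by
    apply IsCompact.nonempty_iInter_of_directed_nonempty_isCompact_isClosed
    · intro i j
      refine ⟨max i j, closure_mono (Set.image_mono fun x hx => ?_),
        closure_mono (Set.image_mono fun x hx => ?_)⟩
      · exact le_trans (le_max_left i j) hx
      · exact le_trans (le_max_right i j) hx
    · exact fun N => ⟨a N, subset_closure ⟨N, Set.self_mem_Ici, rfl⟩⟩
    · exact fun N => isClosed_closure.isCompact
    · exact fun N => isClosed_closure
  have hLA : L ⊆ A := by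
    intro x hx
    have h1 : x ∈ closure (a '' Set.Ici 0) := Set.mem_iInter.1 hx 0
    have h2 : a '' Set.Ici 0 ⊆ A := by rintro y ⟨n, -, rfl⟩; exact haA n
    exact hAcl.closure_subset_iff.2 h2 h1
  have hLinv : ∀ x ∈ L, f x ∈ L := by
    intro x hx
    rw [hL, Set.mem_iInter]
    intro N
    have h1 : x ∈ closure (a '' Set.Ici (N+1)) := Set.mem_iInter.1 hx (N+1)
    have h2 : f '' (a '' Set.Ici (N+1)) ⊆ a '' Set.Ici N := by
      rintro y ⟨z, ⟨n, hn, rfl⟩, rfl⟩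
      obtain ⟨m, rfl⟩ := Nat.exists_eq_add_of_le hn
      refine ⟨N + m, Set.mem_Ici.2 (by omega), ?_⟩
      have hidx : N + 1 + m = (N + m) + 1 := by omega
      rw [hidx, haf]
    exact closure_mono h2 (image_closure_subset_closure_image hf ⟨x, h1, rfl⟩)
  obtain ⟨x, hx⟩ := hLne
  have horbL : ∀ n, f^[n] x ∈ L := by
    intro n
    induction n with
    | zero => simpa
    | succ n ih => rw [Function.iterate_succ_apply']; exact hLinv _ ih
  have hLcl : IsClosed L := isClosed_iInter fun N => isClosed_closure
  have : (Set.univ : Set B) ⊆ A := by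
    calc Set.univ = closure (Set.range fun n => f^[n] x) := ((hfmin x).closure_eq).symm
      _ ⊆ closure L := closure_mono (by rintro z ⟨n, rfl⟩; exact horbL n)
      _ = L := hLcl.closure_eq
      _ ⊆ A := hLA
  exact Set.eq_univ_of_univ_subset this

end Dynamics
section Residual

variable {B : Type*} [MetricSpace B] [CompactSpace B] [Nonempty B]

variable {f : B → B}

lemma residual_of_dense_interior {S : Set B}
    (h : ∀ V : Set B, IsOpen V → V.Nonempty → ∃ W, IsOpen W ∧ W.Nonempty ∧ W ⊆ V ∧ W ⊆ S) :
    S ∈ residual B := by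
  refine Filter.mem_of_superset (residual_of_dense_open isOpen_interior ?_) interior_subset
  rw [dense_iff_inter_open]
  intro V hV hVne
  obtain ⟨W, hWo, hWne, hWV, hWS⟩ := h V hV hVne
  obtain ⟨x, hx⟩ := hWne
  exact ⟨x, hWV hx, (subset_interior_iff.2 ⟨W, hWo, Set.Subset.rfl, hWS⟩) hx⟩

/-- the "star" of an open set: points all of whose preimages are in `U` -/
lemma star_lemma (hf : Continuous f)
    (hfmin : ∀ b : B, Dense (Set.range fun n => f^[n] b))
    {U : Set B} (hU : IsOpen U) (hUne : U.Nonempty) :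
    ∃ W : Set B, IsOpen W ∧ W.Nonempty ∧ W ⊆ f '' U ∧ ∀ b ∈ W, f ⁻¹' {b} ⊆ U := by
  refine ⟨(f '' Uᶜ)ᶜ, (((hU.isClosed_compl).isCompact).image hf).isClosed.isOpen_compl, ?_, ?_, ?_⟩
  · -- nonempty, else f '' Uᶜ = univ and irreducibility forces Uᶜ = univ
    rw [Set.nonempty_compl]
    intro hcontra
    have : Uᶜ = Set.univ := by
      apply f_irred hf hfmin hU.isClosed_compl
      intro b
      have : b ∈ f '' Uᶜ := hcontra ▸ Set.mem_univ b
      obtain ⟨a, ha, rfl⟩ := this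
      exact ⟨a, ha, rfl⟩
    obtain ⟨x, hx⟩ := hUne
    have hxc : x ∈ Uᶜ := this ▸ Set.mem_univ x
    exact hxc hx
  · intro b hb
    obtain ⟨a, ha⟩ := f_surj hf hfmin b
    refine ⟨a, ?_, ha⟩
    by_contra haU
    exact hb ⟨a, haU, ha⟩
  · intro b hb x hx
    by_contra hxU
    exact hb ⟨x, hxU, hx⟩

lemma residual_preimage_point_subset_open (hf : Continuous f)
    (hfmin : ∀ b : B, Dense (Set.range fun n => f^[n] b))
    {U : Set B} (hU : IsOpen U) (hUd : Dense U) :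
    {b : B | f ⁻¹' {b} ⊆ U} ∈ residual B := by
  apply residual_of_dense_interior
  intro V hV hVne
  have hpre : (f ⁻¹' V).Nonempty := by
    obtain ⟨v, hv⟩ := hVne
    obtain ⟨a, ha⟩ := f_surj hf hfmin v
    exact ⟨a, by simp [ha, hv]⟩
  have hU'ne : (U ∩ f ⁻¹' V).Nonempty :=
    dense_iff_inter_open.1 hUd _ (hV.preimage hf) hpre |>.imp (fun x ⟨h1, h2⟩ => ⟨h2, h1⟩)
  obtain ⟨W, hWo, hWne, hWim, hWpre⟩ := star_lemma hf hfmin (hU.inter (hV.preimage hf)) hU'ne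
  refine ⟨W, hWo, hWne, ?_, ?_⟩
  · intro b hb
    obtain ⟨a, ⟨-, haV⟩, rfl⟩ := hWim hb
    exact haV
  · intro b hb
    exact fun x hx => (hWpre b hb hx).1

lemma residual_preimage_point_subset (hf : Continuous f)
    (hfmin : ∀ b : B, Dense (Set.range fun n => f^[n] b))
    {S : Set B} (hS : S ∈ residual B) :
    {b : B | f ⁻¹' {b} ⊆ S} ∈ residual B := by
  obtain ⟨T, hTo, hTd, hTc, hTsub⟩ := mem_residual_iff.1 hS
  have key : (⋂ t ∈ T, {b : B | f ⁻¹' {b} ⊆ t}) ∈ residual B := by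
    haveI := hTc.to_subtype
    rw [Set.biInter_eq_iInter]
    exact countable_iInter_mem.2 fun t =>
      residual_preimage_point_subset_open hf hfmin (hTo t t.2) (hTd t t.2)
  refine Filter.mem_of_superset key ?_
  intro b hb x hx
  apply hTsub
  rw [Set.mem_sInter]
  intro t ht
  exact (Set.mem_iInter₂.1 hb t ht) hx

lemma dense_preimage_open (hf : Continuous f)
    (hfmin : ∀ b : B, Dense (Set.range fun n => f^[n] b))
    {U : Set B} (hU : IsOpen U) (hUd : Dense U) : Dense (f ⁻¹' U) := by
  rw [dense_iff_inter_open]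
  intro V hV hVne
  obtain ⟨W, hWo, hWne, hWim, hWpre⟩ := star_lemma hf hfmin hV hVne
  obtain ⟨d, hd1, hd2⟩ := dense_iff_inter_open.1 hUd W hWo hWne
  obtain ⟨a, ha⟩ := f_surj hf hfmin d
  refine ⟨a, hWpre d hd1 (by simp [ha]), by simp [Set.mem_preimage, ha, hd2]⟩

lemma residual_preimage (hf : Continuous f)
    (hfmin : ∀ b : B, Dense (Set.range fun n => f^[n] b))
    {S : Set B} (hS : S ∈ residual B) : f ⁻¹' S ∈ residual B := by
  obtain ⟨T, hTo, hTd, hTc, hTsub⟩ := mem_residual_iff.1 hS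
  have key : (⋂ t ∈ T, f ⁻¹' t) ∈ residual B := by
    haveI := hTc.to_subtype
    rw [Set.biInter_eq_iInter]
    exact countable_iInter_mem.2 fun t =>
      residual_of_dense_open ((hTo t t.2).preimage hf) (dense_preimage_open hf hfmin (hTo t t.2) (hTd t t.2))
  refine Filter.mem_of_superset key ?_
  intro b hb
  apply hTsub
  rw [Set.mem_sInter]
  intro t ht
  exact Set.mem_iInter₂.1 hb t ht

lemma residual_preimage_iter (hf : Continuous f)
    (hfmin : ∀ b : B, Dense (Set.range fun n => f^[n] b))
    {S : Set B} (hS : S ∈ residual B) (n : ℕ) : (f^[n]) ⁻¹' S ∈ residual B := by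
  induction n with
  | zero => simpa
  | succ n ih =>
    rw [Function.iterate_succ, Set.preimage_comp]
    exact residual_preimage hf hfmin ih

lemma residual_subsingleton_preimage (hf : Continuous f)
    (hfmin : ∀ b : B, Dense (Set.range fun n => f^[n] b)) :
    {b : B | (f ⁻¹' {b}).Subsingleton} ∈ residual B := by
  have key : ∀ k : ℕ, {b : B | ∃ U' : Set B, f ⁻¹' {b} ⊆ U' ∧
      ∀ x ∈ U', ∀ y ∈ U', dist x y ≤ 1/(k+1)} ∈ residual B := by
    intro k
    apply residual_of_dense_interior
    intro V hV hVne
    have hpre : (f ⁻¹' V).Nonempty := by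
      obtain ⟨v, hv⟩ := hVne
      obtain ⟨a, ha⟩ := f_surj hf hfmin v
      exact ⟨a, by simp [ha, hv]⟩
    obtain ⟨x₀, hx₀⟩ := hpre
    have hball : IsOpen (Metric.ball x₀ (1/(2*((k:ℝ)+1))) ∩ f ⁻¹' V) :=
      Metric.isOpen_ball.inter (hV.preimage hf)
    have hballne : (Metric.ball x₀ (1/(2*((k:ℝ)+1))) ∩ f ⁻¹' V).Nonempty :=
      ⟨x₀, Metric.mem_ball_self (by positivity), hx₀⟩
    obtain ⟨W, hWo, hWne, hWim, hWpre⟩ := star_lemma hf hfmin hball hballne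
    refine ⟨W, hWo, hWne, ?_, ?_⟩
    · intro b hb
      obtain ⟨a, ⟨-, haV⟩, rfl⟩ := hWim hb
      exact haV
    · intro b hb
      refine ⟨Metric.ball x₀ (1/(2*((k:ℝ)+1))), fun x hx => (hWpre b hb hx).1, ?_⟩
      intro x hx y hy
      have h1 : dist x x₀ < 1/(2*((k:ℝ)+1)) := Metric.mem_ball.1 hx
      have h2 : dist y x₀ < 1/(2*((k:ℝ)+1)) := Metric.mem_ball.1 hy
      have h3 : dist x y ≤ dist x x₀ + dist y x₀ := dist_triangle_right _ _ _
      have hk : (0:ℝ) < k + 1 := by positivity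
      have hsum : 1/(2*((k:ℝ)+1)) = (1/((k:ℝ)+1))/2 := by
        rw [one_div, one_div, mul_inv, div_eq_mul_inv]
        ring
      rw [hsum] at h1 h2
      linarith
  have inter : (⋂ k : ℕ, {b : B | ∃ U' : Set B, f ⁻¹' {b} ⊆ U' ∧
      ∀ x ∈ U', ∀ y ∈ U', dist x y ≤ 1/(k+1)}) ∈ residual B :=
    countable_iInter_mem.2 key
  refine Filter.mem_of_superset inter ?_
  intro b hb x hx y hy
  rw [Set.mem_iInter] at hb
  rw [← dist_le_zero]
  by_contra hpos
  push_neg at hpos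
  obtain ⟨k, hk⟩ := exists_nat_one_div_lt hpos
  obtain ⟨U', hU'sub, hU'd⟩ := hb k
  exact absurd (hU'd x (hU'sub hx) y (hU'sub hy)) (not_le.2 hk)

end Residual
section Clean

variable {B : Type*} [MetricSpace B] [CompactSpace B] [Nonempty B]

variable {f : B → B} {g : B × Y → Y} {F : B × Y → B × Y} {M : Set (B × Y)}

/-- `b` is a clean point: distinct points can never merge onto the orbit of `b` -/
def clean (f : B → B) (b : B) : Prop := ∀ n x, f^[n] x = f^[n] b → x = b

/-- the auxiliary sets whose points have unique iterated preimages -/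
private def Pset (f : B → B) : ℕ → Set B
  | 0 => {b : B | (f ⁻¹' {b}).Subsingleton}
  | (n+1) => {b : B | (f ⁻¹' {b}).Subsingleton} ∩ {b : B | f ⁻¹' {b} ⊆ Pset f n}

lemma residual_Pset (hf : Continuous f)
    (hfmin : ∀ b : B, Dense (Set.range fun n => f^[n] b)) :
    ∀ n, Pset f n ∈ residual B := by
  intro n
  induction n with
  | zero => exact residual_subsingleton_preimage hf hfmin
  | succ n ih =>
    exact Filter.inter_mem (residual_subsingleton_preimage hf hfmin)
      (residual_preimage_point_subset hf hfmin ih)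

lemma Pset_unique {n : ℕ} {b : B} (hb : b ∈ Pset f n) :
    ∀ x y, f^[n+1] x = b → f^[n+1] y = b → x = y := by
  induction n generalizing b with
  | zero =>
    intro x y hx hy
    exact hb (by simpa using hx) (by simpa using hy)
  | succ n ih =>
    intro x y hx hy
    obtain ⟨hb1, hb2⟩ := hb
    rw [Function.iterate_succ_apply'] at hx hy
    have hu : f^[n+1] x = f^[n+1] y := hb1 (Set.mem_preimage.2 (by rw [hx]; exact rfl))
      (Set.mem_preimage.2 (by rw [hy]; exact rfl))
    have hmem : f^[n+1] x ∈ Pset f n := hb2 (Set.mem_preimage.2 (by rw [hx]; exact rfl))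
    exact ih hmem x y rfl hu.symm

/-- the set of clean points is residual -/
lemma residual_clean (hf : Continuous f)
    (hfmin : ∀ b : B, Dense (Set.range fun n => f^[n] b)) :
    {b : B | clean f b} ∈ residual B := by
  have key : (⋂ n : ℕ, (f^[n+1]) ⁻¹' (Pset f n)) ∈ residual B :=
    countable_iInter_mem.2 fun n =>
      residual_preimage_iter hf hfmin (residual_Pset hf hfmin n) (n+1)
  refine Filter.mem_of_superset key ?_
  intro b hb n x hx
  match n with
  | 0 => simpa using hx
  | (m+1) =>
    have hmem : f^[m+1] b ∈ Pset f m := Set.mem_iInter.1 hb m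
    exact Pset_unique hmem x b hx rfl

/-- the fibre over an iterate of a clean point is the image of the fibre -/
lemma fib_image_of_clean (hf : Continuous f) (hg : Continuous g)
    (hF : ∀ p, F p = (f p.1, g p)) (hMne : M.Nonempty) (hMcl : IsClosed M)
    (hMinv : Set.MapsTo F M M)
    (hMmin : ∀ p ∈ M, M ⊆ closure (Set.range fun n => F^[n] p))
    {b : B} (hb : clean f b) (n : ℕ) :
    fib M (f^[n] b) = (fun y => (F^[n] (b, y)).2) '' fib M b := by
  ext z
  constructor
  · intro hz
    have hz' : (f^[n] b, z) ∈ M := hz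
    obtain ⟨⟨b', y'⟩, hp'M, hp'⟩ := M_sub_iter_image hf hg hF hMne hMcl hMinv hMmin n hz'
    have hfst : f^[n] b' = f^[n] b := by
      have := congrArg Prod.fst hp'
      rwa [F_iter_fst hF n (b', y')] at this
    have hb' : b' = b := hb n b' hfst
    subst hb'
    refine ⟨y', hp'M, ?_⟩
    exact congrArg Prod.snd hp'
  · rintro ⟨y, hy, rfl⟩
    have h1 : F^[n] (b, y) ∈ M := mem_M_iter hMinv hy n
    have h2 : (F^[n] (b, y)).1 = f^[n] b := F_iter_fst hF n (b, y)
    have : F^[n] (b, y) = (f^[n] b, (F^[n] (b, y)).2) := by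
      rw [← h2]
    rw [this] at h1
    exact h1

end Clean
section Transfer

variable {B : Type*} [MetricSpace B] [CompactSpace B] [Nonempty B]

variable {f : B → B} {g : B × Y → Y} {F : B × Y → B × Y} {M : Set (B × Y)}

/-- the fibre over `b` contains at least `m` points -/
def HasGe (M : Set (B × Y)) (m : ℕ) (b : B) : Prop :=
  ∃ T : Finset Y, ↑T ⊆ fib M b ∧ T.card = m

lemma lsc_eventually_meets {b : B} (hb : lscPt M b) {T : Finset Y} (hT : ↑T ⊆ fib M b)
    {δ : ℝ} (hδ : 0 < δ) :
    ∀ᶠ b' in 𝓝 b, ∀ y ∈ T, ∃ y' ∈ fib M b', dist y' y < δ :=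
  T.eventually_all.2 fun y hy => hb y (hT hy) δ hδ

lemma transfer_hasGe (hf : Continuous f)
    (hfmin : ∀ b : B, Dense (Set.range fun n => f^[n] b)) (hg : Continuous g)
    (hF : ∀ p, F p = (f p.1, g p)) (hMne : M.Nonempty) (hMcl : IsClosed M)
    (hMinv : Set.MapsTo F M M)
    (hMmin : ∀ p ∈ M, M ⊆ closure (Set.range fun n => F^[n] p))
    {b b' : B} (hb' : lscPt M b') (hb : clean f b) {m : ℕ} (hm : HasGe M m b') :
    HasGe M m b := by
  obtain ⟨T, hT, hTcard⟩ := hm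
  obtain ⟨δ, hδ, hsep⟩ := exists_sep T
  have hev := lsc_eventually_meets hb' hT (half_pos hδ)
  obtain ⟨U, hUprop, hUo, hbU⟩ := eventually_nhds_iff.1 hev
  obtain ⟨n, hn⟩ := orbit_hits hfmin b hUo ⟨b', hbU⟩
  obtain ⟨T'', hT''sub, hT''card⟩ :=
    finset_approx hδ hsep (fun y hy => hUprop _ hn y hy)
  rw [fib_image_of_clean hf hg hF hMne hMcl hMinv hMmin hb n] at hT''sub
  obtain ⟨T₀, hT₀, hT₀card⟩ := finset_in_image hT''sub
  exact ⟨T₀, hT₀, by rw [hT₀card, hT''card, hTcard]⟩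

end Transfer
section Circle

variable {B : Type*} [MetricSpace B] [CompactSpace B] [Nonempty B]

variable {M : Set (B × Y)}

/-- the open arc `{y + s : s ∈ Ioo a c}` -/
lemma isOpen_arc (y : Y) (a c : ℝ) :
    IsOpen ((fun s : ℝ => y + (s : Y)) '' Ioo a c) := by
  have : (fun s : ℝ => y + (s : Y)) = (fun z : Y => y + z) ∘ (fun s : ℝ => (s : Y)) := rfl
  rw [this, image_comp]
  exact (Homeomorph.addLeft y).isOpenMap _ (QuotientAddGroup.isOpenMap_coe _ isOpen_Ioo)

/-- `b` has no arc of any size in its fibre -/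
def arcFree (M : Set (B × Y)) (b : B) : Prop :=
  ∀ (y : Y) (n : ℕ), ∃ s ∈ Icc (0:ℝ) (1/(n+1)), y + (s : Y) ∉ fib M b

lemma residual_arcFree (hMcl : IsClosed M) (hND : IsNowhereDense M) :
    {b : B | arcFree M b} ∈ residual B := by
  classical
  set A : ℕ → Set B := fun n => {b | ∃ y : Y, ∀ s ∈ Icc (0:ℝ) (1/(n+1)), y + (s : Y) ∈ fib M b}
    with hA
  have hMeq : closure M = M := hMcl.closure_eq
  have hMint : interior M = ∅ := by rw [← hMeq]; exact hND
  -- each A n is nowhere dense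
  have hAnd : ∀ n, IsNowhereDense (A n) := by
    intro n
    have hAcl : IsClosed (A n) := by
      rw [← isSeqClosed_iff_isClosed]
      intro bs b hbs hlim
      choose ys hys using hbs
      obtain ⟨y, -, φ, hφ, hyφ⟩ := isCompact_univ.tendsto_subseq (fun j => mem_univ (ys j))
      refine ⟨y, fun s hs => ?_⟩
      have hmem : ∀ j, (bs (φ j), ys (φ j) + (s : Y)) ∈ M := fun j => hys (φ j) s hs
      have hlim2 : Filter.Tendsto (fun j => (bs (φ j), ys (φ j) + (s : Y))) Filter.atTop
          (𝓝 (b, y + (s : Y))) := by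
        refine Filter.Tendsto.prodMk_nhds (hlim.comp hφ.tendsto_atTop) ?_
        exact (hyφ.add tendsto_const_nhds :)
      exact hMcl.mem_of_tendsto hlim2 (Filter.Eventually.of_forall hmem)
    rw [hAcl.isNowhereDense_iff]
    by_contra hint
    obtain ⟨b₀, hb₀⟩ := nonempty_iff_ne_empty.2 hint
    -- countable dense set of Y
    obtain ⟨D, hDc, hDd⟩ := TopologicalSpace.exists_countable_dense Y
    haveI := hDc.to_subtype
    set ℓ : ℝ := 1/(2*((n:ℝ)+1)) with hℓ
    have hℓpos : 0 < ℓ := by positivity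
    set C : Y → Set B := fun q => {b | ∀ s ∈ Icc (0:ℝ) ℓ, (b, q + (s:Y)) ∈ M} with hC
    have hCcl : ∀ q, IsClosed (C q) := by
      intro q
      have : C q = ⋂ s : Icc (0:ℝ) ℓ, {b : B | (b, q + ((s:ℝ) : Y)) ∈ M} := by
        ext b
        simp only [hC, mem_setOf_eq, Set.mem_iInter]
        exact ⟨fun h s => h s.1 s.2, fun h s hs => h ⟨s, hs⟩⟩
      rw [this]
      exact isClosed_iInter fun s =>
        hMcl.preimage (continuous_id.prodMk continuous_const)
    have hcover : interior (A n) ⊆ ⋃ q : D, C q := by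
      intro b hb
      obtain ⟨y, hy⟩ := interior_subset hb
      have harc : ((fun s : ℝ => y + (s : Y)) '' Ioo 0 ℓ).Nonempty :=
        ⟨y + ((ℓ/2 : ℝ) : Y), ⟨ℓ/2, ⟨by positivity, by linarith⟩, rfl⟩⟩
      obtain ⟨q, hq1, hq2⟩ := dense_iff_inter_open.1 hDd _ (isOpen_arc y 0 ℓ) harc
      obtain ⟨s₀, hs₀, rfl⟩ := hq1
      refine mem_iUnion.2 ⟨⟨_, hq2⟩, fun s hs => ?_⟩
      have hadd : y + ((s₀:ℝ):Y) + ((s:ℝ):Y) = y + ((s₀ + s : ℝ):Y) := by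
        rw [AddCircle.coe_add 1 s₀ s, add_assoc]
      rw [hadd]
      have hinterval : s₀ + s ∈ Icc (0:ℝ) (1/(n+1)) := by
        obtain ⟨h1, h2⟩ := hs₀
        obtain ⟨h3, h4⟩ := hs
        constructor
        · linarith
        · have hhalf : ℓ = (1/((n:ℝ)+1))/2 := by
            rw [hℓ, one_div, one_div, mul_inv, div_eq_mul_inv]; ring
          rw [hhalf] at h2 h4
          linarith
      exact hy (s₀ + s) hinterval
    -- Baire: some C q has nonempty interior
    have : ∃ q : D, (interior (C (q:Y))).Nonempty := by
      by_contra hemp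
      push_neg at hemp
      have hmeag : ∀ q : D, ((C (q:Y))ᶜ : Set B) ∈ residual B := fun q =>
        residual_of_dense_open (hCcl _).isOpen_compl
          (interior_eq_empty_iff_dense_compl.mp (hemp q))
      have hall : (⋂ q : D, ((C (q:Y))ᶜ : Set B)) ∈ residual B := countable_iInter_mem.2 hmeag
      have hdense := dense_of_mem_residual hall
      obtain ⟨x, hx1, hx2⟩ := dense_iff_inter_open.1 hdense _ isOpen_interior
        (nonempty_iff_ne_empty.2 hint)
      obtain ⟨q, hq⟩ := mem_iUnion.1 (hcover hx1)
      exact (mem_iInter.1 hx2 q) hq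
    obtain ⟨q, x₀, hx₀⟩ := this
    -- then M contains an open box
    have hbox : interior (C (q:Y)) ×ˢ ((fun s : ℝ => (q:Y) + (s : Y)) '' Ioo 0 ℓ) ⊆ M := by
      rintro ⟨b, z⟩ ⟨hb, ⟨s, hs, rfl⟩⟩
      exact interior_subset hb s (Ioo_subset_Icc_self hs)
    have hopen : IsOpen (interior (C (q:Y)) ×ˢ ((fun s : ℝ => (q:Y) + (s : Y)) '' Ioo 0 ℓ)) :=
      isOpen_interior.prod (isOpen_arc _ _ _)
    have hne : (interior (C (q:Y)) ×ˢ ((fun s : ℝ => (q:Y) + (s : Y)) '' Ioo 0 ℓ)).Nonempty := by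
      refine ⟨(x₀, (q:Y) + ((ℓ/2:ℝ):Y)), hx₀, ⟨ℓ/2, ⟨by positivity, by linarith⟩, rfl⟩⟩
    have : (interior M).Nonempty := by
      obtain ⟨p, hp⟩ := hne
      exact ⟨p, (subset_interior_iff.2 ⟨_, hopen, Set.Subset.rfl, hbox⟩) hp⟩
    rw [hMint] at this
    exact not_nonempty_empty this
  -- conclude
  have key : (⋂ n : ℕ, ((A n)ᶜ : Set B)) ∈ residual B := by
    refine countable_iInter_mem.2 fun n => ?_
    obtain ⟨t, hsub, htnd, htcl⟩ := (hAnd n).subset_of_closed_isNowhereDense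
    refine Filter.mem_of_superset
      (residual_of_dense_open htcl.isOpen_compl ?_) (compl_subset_compl.2 hsub)
    rw [htcl.isNowhereDense_iff] at htnd
    exact interior_eq_empty_iff_dense_compl.mp htnd
  refine Filter.mem_of_superset key ?_
  intro b hb y n
  by_contra hcon
  push_neg at hcon
  exact (mem_iInter.1 hb n) ⟨y, fun s hs => hcon s hs⟩

end Circle
section TotDisc

variable {B : Type*} [MetricSpace B] [CompactSpace B] [Nonempty B]

variable {M : Set (B × Y)}

lemma exists_rep (z : Y) (a : ℝ) : ∃ s : ℝ, s ∈ Ico a (a+1) ∧ (s : Y) = z :=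
  ⟨(AddCircle.equivIco 1 a z : ℝ), (AddCircle.equivIco 1 a z).2,
    (AddCircle.equivIco 1 a).symm_apply_apply z⟩

lemma gap_of_arcFree {b : B} (hb : arcFree M b) (y : Y) {a c : ℝ} (hac : a < c) :
    ∃ s ∈ Ioo a c, y + (s : Y) ∉ fib M b := by
  obtain ⟨n, hn⟩ := exists_nat_one_div_lt (show (0:ℝ) < (c - a)/2 by linarith)
  set a' : ℝ := a + (c - a)/4 with ha'
  obtain ⟨s', hs', hnot⟩ := hb (y + (a' : Y)) n
  refine ⟨a' + s', ⟨by
      obtain ⟨h1, -⟩ := hs'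
      rw [ha']; linarith, by
      obtain ⟨-, h2⟩ := hs'
      have hpos : (0:ℝ) < 1/(n+1) := by positivity
      rw [ha']; linarith⟩, ?_⟩
  intro hmem
  apply hnot
  have : y + ((a' + s' : ℝ) : Y) = y + (a' : Y) + (s' : Y) := by
    rw [AddCircle.coe_add 1 a' s', add_assoc]
  rw [this] at hmem
  exact hmem

lemma totallyDisconnected_of_arcFree {b : B} (hb : arcFree M b) :
    IsTotallyDisconnected (fib M b) := by
  intro C hCsub hCconn u hu v hv
  by_contra hne
  -- representative of v - u
  obtain ⟨t, ht, htv⟩ := exists_rep (v - u) 0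
  rw [zero_add] at ht
  have ht0 : t ≠ 0 := by
    intro h
    rw [h] at htv
    simp only [QuotientAddGroup.mk_zero] at htv
    exact hne (by
      have : v - u = 0 := htv.symm
      have := sub_eq_zero.1 this
      exact this.symm ▸ rfl)
  have htIoo : t ∈ Ioo (0:ℝ) 1 := ⟨lt_of_le_of_ne ht.1 (Ne.symm ht0), ht.2⟩
  have hveq : v = u + (t : Y) := by
    rw [htv]; abel
  -- two gaps
  obtain ⟨s₁, hs₁, hgap₁⟩ := gap_of_arcFree hb u htIoo.1
  obtain ⟨s₂, hs₂, hgap₂⟩ := gap_of_arcFree hb u htIoo.2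
  set U : Set Y := (fun s : ℝ => u + (s : Y)) '' Ioo s₁ s₂ with hU
  set V : Set Y := (fun s : ℝ => u + (s : Y)) '' Ioo s₂ (s₁+1) with hV
  have hs₁pos : 0 < s₁ := hs₁.1
  have hs₁t : s₁ < t := hs₁.2
  have hts₂ : t < s₂ := hs₂.1
  have hs₂1 : s₂ < 1 := hs₂.2
  have hvU : v ∈ U := ⟨t, ⟨hs₁t, hts₂⟩, hveq.symm⟩
  have huV : u ∈ V := ⟨1, ⟨by linarith, by linarith⟩, by
    show u + ((1:ℝ) : Y) = u
    rw [AddCircle.coe_period 1, add_zero]⟩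
  have hcover : C ⊆ U ∪ V := by
    intro x hx
    obtain ⟨r, hr, hrx⟩ := exists_rep (x - u) s₁
    have hxeq : x = u + (r : Y) := by rw [hrx]; abel
    have hrne₁ : r ≠ s₁ := by
      intro h
      rw [h] at hxeq
      exact hgap₁ (hxeq ▸ hCsub hx)
    have hrne₂ : r ≠ s₂ := by
      intro h
      rw [h] at hxeq
      exact hgap₂ (hxeq ▸ hCsub hx)
    rcases lt_or_gt_of_ne hrne₂ with hlt | hgt
    · exact Or.inl ⟨r, ⟨lt_of_le_of_ne hr.1 (Ne.symm hrne₁), hlt⟩, hxeq.symm⟩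
    · exact Or.inr ⟨r, ⟨hgt, hr.2⟩, hxeq.symm⟩
  have hUV : (C ∩ (U ∩ V)).Nonempty :=
    hCconn U V (isOpen_arc u s₁ s₂) (isOpen_arc u s₂ (s₁+1)) hcover
      ⟨v, hv, hvU⟩ ⟨u, hu, huV⟩
  obtain ⟨x, -, ⟨⟨s, hs, hsx⟩, ⟨s', hs', hsx'⟩⟩⟩ := hUV
  have hcoe : (s : Y) = (s' : Y) := by
    have := hsx.trans hsx'.symm
    exact add_left_cancel this
  have hmem1 : s ∈ Ico s₁ (s₁ + 1) := ⟨le_of_lt hs.1, by obtain ⟨-, h⟩ := hs; linarith⟩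
  have hmem2 : s' ∈ Ico s₁ (s₁ + 1) := ⟨by obtain ⟨h, -⟩ := hs'; linarith, hs'.2⟩
  have := (AddCircle.coe_eq_coe_iff_of_mem_Ico hmem1 hmem2).1 hcoe
  rw [this] at hs
  exact absurd hs.2 (not_lt.2 (le_of_lt hs'.1))

end TotDisc
section Iso

variable {B : Type*} [MetricSpace B] [CompactSpace B] [Nonempty B]

variable {M : Set (B × Y)}

/-- `y` is an `ε`-isolated point of the fibre over `b` -/
def isoPt (M : Set (B × Y)) (ε : ℝ) (b : B) (y : Y) : Prop :=
  y ∈ fib M b ∧ ∀ z ∈ fib M b, dist z y < ε → z = y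

/-- the fibre over `b` has at least `m` many `ε`-isolated points -/
def HasGeIso (M : Set (B × Y)) (ε : ℝ) (m : ℕ) (b : B) : Prop :=
  ∃ T : Finset Y, (↑T : Set Y) ⊆ {y | isoPt M ε b y} ∧ T.card = m

lemma isoPt_mono {ε ε' : ℝ} (h : ε' ≤ ε) {b : B} {y : Y} (hy : isoPt M ε b y) :
    isoPt M ε' b y :=
  ⟨hy.1, fun z hz hd => hy.2 z hz (lt_of_lt_of_le hd h)⟩

lemma iso_sep {ε : ℝ} {b : B} {y y' : Y} (hy : isoPt M ε b y) (hy' : isoPt M ε b y')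
    (hne : y ≠ y') : ε ≤ dist y y' := by
  by_contra h
  push_neg at h
  exact hne (hy'.2 y hy.1 h)

lemma hasGeIso_mono {ε : ℝ} {b : B} {m m' : ℕ} (h : m' ≤ m) (hm : HasGeIso M ε m b) :
    HasGeIso M ε m' b := by
  obtain ⟨T, hT, hTcard⟩ := hm
  obtain ⟨T', hT'sub, hT'card⟩ := Finset.exists_subset_card_eq (s := T) (n := m') (by omega)
  exact ⟨T', fun y hy => hT (hT'sub hy), hT'card⟩

lemma hasGeIso_bound {ε : ℝ} (hε : 0 < ε) :
    ∃ Cb : ℕ, ∀ (b : B) (m : ℕ), HasGeIso M ε m b → m ≤ Cb := by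
  obtain ⟨t, -, htfin, hcov⟩ := finite_cover_balls_of_compact (isCompact_univ (X := Y))
    (half_pos hε)
  refine ⟨htfin.toFinset.card, ?_⟩
  rintro b m ⟨T, hT, rfl⟩
  classical
  refine Finset.card_le_card_of_injOn (fun y => ?_) (fun y hy => ?_) ?_
  · by_cases hy : ∃ c ∈ t, y ∈ Metric.ball c (ε/2)
    · exact hy.choose
    · exact Classical.arbitrary Y  -- unreachable case, fixed below
  · -- membership
    have hcv := hcov (mem_univ y)
    simp only [mem_iUnion] at hcv
    obtain ⟨c, hc, hyc⟩ := hcv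
    have hex : ∃ c ∈ t, y ∈ Metric.ball c (ε/2) := ⟨c, hc, hyc⟩
    simp only [hex, dif_pos]
    rw [Finset.mem_coe, Set.Finite.mem_toFinset]
    exact hex.choose_spec.1
  · intro y₁ h₁ y₂ h₂ heq
    by_contra hne
    have hex₁ : ∃ c ∈ t, y₁ ∈ Metric.ball c (ε/2) := by
      have hcv := hcov (mem_univ y₁); simp only [mem_iUnion] at hcv
      obtain ⟨c, hc, hyc⟩ := hcv; exact ⟨c, hc, hyc⟩
    have hex₂ : ∃ c ∈ t, y₂ ∈ Metric.ball c (ε/2) := by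
      have hcv := hcov (mem_univ y₂); simp only [mem_iUnion] at hcv
      obtain ⟨c, hc, hyc⟩ := hcv; exact ⟨c, hc, hyc⟩
    simp only [hex₁, hex₂, dif_pos] at heq
    have hc₁ : dist y₁ hex₁.choose < ε/2 := hex₁.choose_spec.2
    have hc₂ : dist y₂ hex₂.choose < ε/2 := hex₂.choose_spec.2
    rw [heq] at hc₁
    have hsep := iso_sep (hT h₁) (hT h₂) hne
    have htr : dist y₁ y₂ ≤ dist y₁ hex₂.choose + dist y₂ hex₂.choose :=
      dist_triangle_right _ _ _
    linarith

/-- a limit of `ε`-isolated points over a lsc point is `ε`-isolated -/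
lemma iso_limit (hMcl : IsClosed M) {ε : ℝ} {b : B} (hlsc : lscPt M b)
    {bs : ℕ → B} (hbs : Filter.Tendsto bs Filter.atTop (𝓝 b))
    {ys : ℕ → Y} (hys : ∀ j, isoPt M ε (bs j) (ys j))
    {y : Y} (hy : Filter.Tendsto ys Filter.atTop (𝓝 y)) : isoPt M ε b y := by
  have hyfib : y ∈ fib M b := by
    have hlim : Filter.Tendsto (fun j => (bs j, ys j)) Filter.atTop (𝓝 (b, y)) :=
      hbs.prodMk_nhds hy
    exact hMcl.mem_of_tendsto hlim (Filter.Eventually.of_forall fun j => (hys j).1)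
  refine ⟨hyfib, fun z hz hdz => ?_⟩
  by_contra hne
  set ρ := dist z y with hρ
  have hρpos : 0 < ρ := dist_pos.2 hne
  set δ := (min (ε - ρ) ρ)/4 with hδ
  have hδpos : 0 < δ := by
    apply div_pos _ (by norm_num)
    exact lt_min (by linarith) hρpos
  have hδ1 : δ ≤ (ε - ρ)/4 := by
    apply div_le_div_of_nonneg_right (min_le_left _ _) (by norm_num)
  have hδ2 : δ ≤ ρ/4 := by
    apply div_le_div_of_nonneg_right (min_le_right _ _) (by norm_num)
  have hev1 : ∀ᶠ j in Filter.atTop, ∃ z' ∈ fib M (bs j), dist z' z < δ :=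
    hbs.eventually (hlsc z hz δ hδpos)
  have hev2 : ∀ᶠ j in Filter.atTop, dist (ys j) y < δ :=
    Filter.eventually_atTop.2 ((Metric.tendsto_atTop.1 hy) δ hδpos)
  obtain ⟨j, hj1, hj2⟩ := (hev1.and hev2).exists
  obtain ⟨z', hz'fib, hz'd⟩ := hj1
  have hd1 : dist z' (ys j) ≤ dist z' z + dist z y + dist y (ys j) := dist_triangle4 _ _ _ _
  have hyd : dist y (ys j) < δ := by rw [dist_comm]; exact hj2
  have hlt : dist z' (ys j) < ε := by
    have hsum : ρ + 2*δ < ε := by linarith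
    rw [← hρ] at hd1
    linarith
  have heq := (hys j).2 z' hz'fib hlt
  have hd2 : ρ ≤ dist z z' + dist z' (ys j) + dist (ys j) y := by
    rw [hρ]
    exact dist_triangle4 z z' (ys j) y
  have h3 : dist z z' < δ := by rw [dist_comm]; exact hz'd
  have h4 : dist z' (ys j) = 0 := by rw [heq, dist_self]
  linarith

/-- extraction of a convergent enumeration of `ε`-isolated points -/
lemma iso_limit_enum (hMcl : IsClosed M) {ε : ℝ} {b : B} (hlsc : lscPt M b)
    {bs : ℕ → B} (hbs : Filter.Tendsto bs Filter.atTop (𝓝 b))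
    {m : ℕ} (hm : ∀ j, HasGeIso M ε m (bs j)) (hε : 0 < ε) :
    ∃ w : Fin m → Y, Function.Injective w ∧ (∀ i, isoPt M ε b (w i)) ∧
      ∃ φ : ℕ → ℕ, StrictMono φ ∧ ∃ ws : ℕ → Fin m → Y,
        (∀ j i, isoPt M ε (bs (φ j)) (ws j i)) ∧
        ∀ i, Filter.Tendsto (fun j => ws j i) Filter.atTop (𝓝 (w i)) := by
  classical
  choose T hT hTcard using hm
  set e : (j : ℕ) → Fin m → Y := fun j i => ((T j).equivFinOfCardEq (hTcard j)).symm i with he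
  have heiso : ∀ j i, isoPt M ε (bs j) (e j i) := fun j i =>
    hT j (((T j).equivFinOfCardEq (hTcard j)).symm i).2
  have heinj : ∀ j, Function.Injective (e j) := fun j i i' hii =>
    (Equiv.injective _) (Subtype.ext hii)
  obtain ⟨w, -, φ, hφ, hconv⟩ := isCompact_univ.tendsto_subseq
    (x := fun j => e j) (fun j => mem_univ _)
  rw [tendsto_pi_nhds] at hconv
  refine ⟨w, ?_, ?_, φ, hφ, fun j => e (φ j), fun j i => heiso (φ j) i, fun i => hconv i⟩
  · intro i i' hii
    by_contra hne
    have hsep : ∀ j, ε ≤ dist (e (φ j) i) (e (φ j) i') := fun j =>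
      iso_sep (heiso (φ j) i) (heiso (φ j) i') (fun h => hne (heinj (φ j) h))
    have hlim : Filter.Tendsto (fun j => dist (e (φ j) i) (e (φ j) i'))
        Filter.atTop (𝓝 (dist (w i) (w i'))) := (hconv i).dist (hconv i')
    have : ε ≤ dist (w i) (w i') := le_of_tendsto_of_tendsto' tendsto_const_nhds hlim hsep
    rw [hii] at this
    simp at this
    linarith
  · intro i
    exact iso_limit hMcl hlsc (hbs.comp hφ.tendsto_atTop) (fun j => heiso (φ j) i) (hconv i)

lemma hasGeIso_limit (hMcl : IsClosed M) {ε : ℝ} (hε : 0 < ε) {b : B} (hlsc : lscPt M b)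
    {bs : ℕ → B} (hbs : Filter.Tendsto bs Filter.atTop (𝓝 b))
    {m : ℕ} (hm : ∀ j, HasGeIso M ε m (bs j)) : HasGeIso M ε m b := by
  classical
  obtain ⟨w, hwinj, hwiso, -⟩ := iso_limit_enum hMcl hlsc hbs hm hε
  refine ⟨Finset.image w Finset.univ, ?_, ?_⟩
  · intro y hy
    simp only [Finset.coe_image, mem_image] at hy
    obtain ⟨i, -, rfl⟩ := hy
    exact hwiso i
  · rw [Finset.card_image_of_injective _ hwinj, Finset.card_univ, Fintype.card_fin]

lemma not_isMeagre_open {V : Set B} (hV : IsOpen V) (hVne : V.Nonempty) : ¬ IsMeagre V := by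
  intro h
  obtain ⟨x, hx1, hx2⟩ := dense_iff_inter_open.1 (dense_of_mem_residual h) V hV hVne
  exact hx2 hx1

lemma nonempty_interior_closure_of_not_isMeagre {s : Set B} (h : ¬ IsMeagre s) :
    (interior (closure s)).Nonempty := by
  rw [nonempty_iff_ne_empty]
  intro hemp
  apply h
  rw [isMeagre_iff_countable_union_isNowhereDense]
  exact ⟨{closure s}, by
    rintro t rfl
    · exact (show IsNowhereDense (closure s) by rwa [IsNowhereDense, closure_closure]),
    countable_singleton _, by
    rw [sUnion_singleton]
    exact subset_closure⟩

end Iso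
section Crux

variable {B : Type*} [MetricSpace B] [CompactSpace B] [Nonempty B]

variable {f : B → B} {g : B × Y → Y} {F : B × Y → B × Y} {M : Set (B × Y)}

lemma cover_lemma (hf : Continuous f) (hg : Continuous g)
    (hF : ∀ p, F p = (f p.1, g p)) (hMcl : IsClosed M)
    (hMmin : ∀ p ∈ M, M ⊆ closure (Set.range fun n => F^[n] p))
    {W : Set (B × Y)} (hWo : IsOpen W) {pp : B × Y} (hppM : pp ∈ M) (hppW : pp ∈ W) :
    ∃ L : ℕ, ∀ p ∈ M, ∃ n ≤ L, F^[n] p ∈ W := by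
  have hFc : Continuous F := by
    have : F = fun p => (f p.1, g p) := funext hF
    rw [this]
    exact (hf.comp continuous_fst).prodMk hg
  have hcov : M ⊆ ⋃ n : ℕ, F^[n] ⁻¹' W := by
    intro p hp
    have hcl : pp ∈ closure (Set.range fun n => F^[n] p) := hMmin p hp hppM
    obtain ⟨x, hxW, n, rfl⟩ := mem_closure_iff.1 hcl W hWo hppW
    exact mem_iUnion.2 ⟨n, hxW⟩
  obtain ⟨t, ht⟩ := hMcl.isCompact.elim_finite_subcover _
    (fun n : ℕ => (hFc.iterate n).isOpen_preimage W hWo) hcov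
  refine ⟨t.sup id, ?_⟩
  intro p hp
  obtain ⟨n, hn, hnW⟩ := mem_iUnion₂.1 (ht hp)
  exact ⟨n, Finset.le_sup (f := id) hn, hnW⟩

lemma isMeagre_union {s t : Set B} (hs : IsMeagre s) (ht : IsMeagre t) :
    IsMeagre (s ∪ t) := by
  rw [IsMeagre, compl_union]
  exact Filter.inter_mem hs ht

/-- THE CRUX: generically infinite fibres are incompatible with a non-meagre set of
fibres having isolated points. -/
lemma crux (hf : Continuous f)
    (hfmin : ∀ b : B, Dense (Set.range fun n => f^[n] b)) (hg : Continuous g)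
    (hF : ∀ p, F p = (f p.1, g p)) (hMne : M.Nonempty) (hMcl : IsClosed M)
    (hMinv : Set.MapsTo F M M)
    (hMmin : ∀ p ∈ M, M ⊆ closure (Set.range fun n => F^[n] p))
    (hinf : {b : B | (fib M b).Infinite} ∈ residual B)
    (hE : ¬ IsMeagre {b : B | lscPt M b ∧ ∃ y, ∃ ε > (0:ℝ), isoPt M ε b y}) : False := by
  classical
  -- Step 1: a scale ε on which isolated points are non-meagrely common
  have hEsub : {b : B | lscPt M b ∧ ∃ y, ∃ ε > (0:ℝ), isoPt M ε b y} ⊆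
      ⋃ k : ℕ, {b : B | lscPt M b ∧ ∃ y, isoPt M (1/(k+1)) b y} := by
    rintro b ⟨hb, y, ε, hεpos, hiso⟩
    obtain ⟨k, hk⟩ := exists_nat_one_div_lt hεpos
    exact mem_iUnion.2 ⟨k, hb, y, isoPt_mono (le_of_lt hk) hiso⟩
  have hk : ∃ k : ℕ, ¬ IsMeagre {b : B | lscPt M b ∧ ∃ y, isoPt M (1/(k+1)) b y} := by
    by_contra hcon
    push_neg at hcon
    exact hE ((isMeagre_iUnion hcon).mono hEsub)
  obtain ⟨k, hEk⟩ := hk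
  set ε : ℝ := 1/((k:ℝ)+1) with hε
  have hεpos : 0 < ε := by positivity
  set Ek := {b : B | lscPt M b ∧ ∃ y, isoPt M ε b y} with hEkdef
  set V₀ := interior (closure Ek) with hV₀
  have hV₀o : IsOpen V₀ := isOpen_interior
  have hV₀ne : V₀.Nonempty := nonempty_interior_closure_of_not_isMeagre hEk
  -- Step 2: survival of isolated points on V₀
  have hsurv1 : ∀ b ∈ V₀, lscPt M b → HasGeIso M ε 1 b := by
    intro b hbV hblsc
    obtain ⟨bs, hbsE, hbslim⟩ := mem_closure_iff_seq_limit.1 (interior_subset hbV)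
    refine hasGeIso_limit hMcl hεpos hblsc hbslim (fun j => ?_)
    obtain ⟨-, y, hy⟩ := hbsE j
    exact ⟨{y}, by simpa using hy, Finset.card_singleton y⟩
  -- Step 3: the maximal non-meagre isolated-count i₀
  set A : ℕ → Set B := fun m => {b | b ∈ V₀ ∧ lscPt M b ∧ HasGeIso M ε m b} with hA
  obtain ⟨Cb, hCb⟩ := hasGeIso_bound (M := M) hεpos
  have hlscm : IsMeagre ({b : B | lscPt M b}ᶜ) := by
    rw [IsMeagre, compl_compl]; exact residual_lscPt hMcl
  have hA1 : ¬ IsMeagre (A 1) := by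
    intro hmeag
    apply not_isMeagre_open hV₀o hV₀ne
    refine (isMeagre_union hmeag hlscm).mono ?_
    intro b hb
    by_cases h : lscPt M b
    · exact Or.inl ⟨hb, h, hsurv1 b hb h⟩
    · exact Or.inr h
  set P : ℕ → Prop := fun m => ¬ IsMeagre (A m) with hP
  have hPbound : ∀ m, Cb + 1 ≤ m → ¬ P m := by
    intro m hm hPm
    have hAe : A m = ∅ := by
      rw [eq_empty_iff_forall_notMem]
      intro b hb
      exact absurd (hCb b m hb.2.2) (by omega)
    rw [hP] at hPm
    simp only [hAe] at hPm
    exact hPm IsMeagre.empty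
  set i₀ := Nat.findGreatest P (Cb+1) with hi₀
  have hi₀1 : 1 ≤ i₀ := Nat.le_findGreatest (by omega) hA1
  have hPi₀ : P i₀ := Nat.findGreatest_spec (m := 1) (by omega) hA1
  have hnotPsucc : ¬ P (i₀ + 1) := by
    by_cases hle : i₀ + 1 ≤ Cb + 1
    · exact Nat.findGreatest_is_greatest (by omega) hle
    · exact hPbound _ (by omega)
  have hmeagA : IsMeagre (A (i₀+1)) := not_not.1 hnotPsucc
  -- Step 4: the open set V₁' where exactly i₀ isolated points are generic
  set V₁ := interior (closure (A i₀)) with hV₁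
  have hV₁ne : V₁.Nonempty := nonempty_interior_closure_of_not_isMeagre hPi₀
  have hmeet : (V₁ ∩ A i₀).Nonempty := by
    obtain ⟨x, hx⟩ := hV₁ne
    exact mem_closure_iff.1 (interior_subset hx) V₁ isOpen_interior hx
  set V₁' := V₁ ∩ V₀ with hV₁'
  have hV₁'o : IsOpen V₁' := isOpen_interior.inter hV₀o
  have hV₁'ne : V₁'.Nonempty := by
    obtain ⟨x, hx1, hx2⟩ := hmeet
    exact ⟨x, hx1, hx2.1⟩
  have hGe : ∀ b ∈ V₁, lscPt M b → HasGeIso M ε i₀ b := by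
    intro b hbV hblsc
    obtain ⟨bs, hbsA, hbslim⟩ := mem_closure_iff_seq_limit.1 (interior_subset hbV)
    exact hasGeIso_limit hMcl hεpos hblsc hbslim (fun j => (hbsA j).2.2)
  -- Step 5: the master residual forward-invariant set
  set S := ({b : B | lscPt M b} ∩ {b : B | clean f b}) ∩
    ({b : B | (fib M b).Infinite} ∩ (A (i₀+1))ᶜ) with hSdef
  have hSres : S ∈ residual B :=
    Filter.inter_mem (Filter.inter_mem (residual_lscPt hMcl) (residual_clean hf hfmin))
      (Filter.inter_mem hinf hmeagA)
  set Gm := ⋂ n : ℕ, (f^[n]) ⁻¹' S with hGm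
  have hGmres : Gm ∈ residual B :=
    countable_iInter_mem.2 (fun n => residual_preimage_iter hf hfmin hSres n)
  have hGmS : Gm ⊆ S := by
    intro b hb
    have := mem_iInter.1 hb 0
    simpa using this
  have hGmfwd : ∀ b ∈ Gm, ∀ n, f^[n] b ∈ Gm := by
    intro b hb n
    rw [mem_iInter]
    intro m
    have h1 := mem_iInter.1 hb (m + n)
    rwa [Set.mem_preimage, Function.iterate_add_apply f m n b] at h1
  -- Step 6: the point bh and its isolated points
  have hbhex : (V₁' ∩ Gm).Nonempty :=
    dense_iff_inter_open.1 (dense_of_mem_residual hGmres) V₁' hV₁'o hV₁'ne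
  obtain ⟨bh, hbhV', hbhG⟩ := hbhex
  obtain ⟨⟨hbhlsc, hbhclean⟩, hbhinf, hbhext⟩ := hGmS hbhG
  have hbhV₁ : bh ∈ V₁ := hbhV'.1
  have hbhV₀ : bh ∈ V₀ := hbhV'.2
  obtain ⟨Th, hThiso, hThcard⟩ := hGe bh hbhV₁ hbhlsc
  have hThne : Th.Nonempty := Finset.card_pos.1 (by omega)
  obtain ⟨yh, hyhT⟩ := hThne
  have hyhiso : isoPt M ε bh yh := hThiso hyhT
  have hnoMore : ¬ HasGeIso M ε (i₀+1) bh := fun hcon => hbhext ⟨hbhV₀, hbhlsc, hcon⟩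
  have hisoTh : ∀ y, isoPt M ε bh y → y ∈ Th := by
    intro y hy
    by_contra hyT
    refine hnoMore ⟨insert y Th, ?_, ?_⟩
    · intro z hz
      rw [Finset.coe_insert] at hz
      rcases hz with rfl | hz
      · exact hy
      · exact hThiso hz
    · rw [Finset.card_insert_of_notMem hyT, hThcard]
  -- Step 7: the trap
  obtain ⟨r₀, hr₀pos, hr₀sub⟩ := Metric.isOpen_iff.1 hV₁'o bh hbhV'
  have htrap : ∃ ρ > (0:ℝ), ∃ r > (0:ℝ), r ≤ r₀ ∧
      ∀ b' ∈ Metric.ball bh r, lscPt M b' → ¬HasGeIso M ε (i₀+1) b' →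
        (fib M b' ∩ Metric.ball yh ρ).Subsingleton := by
    by_contra hcon
    push_neg at hcon
    -- extract a bad sequence
    have hbad : ∀ j : ℕ, ∃ b' ∈ Metric.ball bh (min r₀ (1/(j+1))), lscPt M b' ∧
        ¬HasGeIso M ε (i₀+1) b' ∧ (fib M b' ∩ Metric.ball yh (1/(j+1))).Nontrivial := by
      intro j
      have hmin : (0:ℝ) < min r₀ (1/(j+1)) := lt_min hr₀pos (by positivity)
      obtain ⟨b', hb'ball, hb'lsc, hb'no, hb'bad⟩ :=
        hcon (1/(j+1)) (by positivity) (min r₀ (1/(j+1))) hmin (min_le_left _ _)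
      exact ⟨b', hb'ball, hb'lsc, hb'no, hb'bad⟩
    choose bs hbsball hbslsc hbsno hbsbad using hbad
    have hbsV' : ∀ j, bs j ∈ V₁' := fun j =>
      hr₀sub (Metric.mem_ball.2 (lt_of_lt_of_le (Metric.mem_ball.1 (hbsball j)) (min_le_left _ _)))
    have hbslim : Filter.Tendsto bs Filter.atTop (𝓝 bh) := by
      rw [Metric.tendsto_atTop]
      intro δ hδ
      obtain ⟨N, hN⟩ := exists_nat_one_div_lt hδ
      refine ⟨N, fun j hj => ?_⟩
      have h1 : dist (bs j) bh < min r₀ (1/(j+1)) := Metric.mem_ball.1 (hbsball j)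
      have h2 : (1:ℝ)/(j+1) ≤ 1/(N+1) := by
        have hNj : ((N:ℝ)+1) ≤ ((j:ℝ)+1) := by
          have : (N:ℝ) ≤ j := Nat.cast_le.2 hj
          linarith
        exact one_div_le_one_div_of_le (by positivity) hNj
      calc dist (bs j) bh < min r₀ (1/(j+1)) := h1
        _ ≤ 1/(j+1) := min_le_right _ _
        _ ≤ 1/(N+1) := h2
        _ < δ := hN
    have hbsGe : ∀ j, HasGeIso M ε i₀ (bs j) := fun j =>
      hGe (bs j) (hbsV' j).1 (hbslsc j)
    obtain ⟨w, hwinj, hwiso, φ, hφ, ws, hwsiso, hwsconv⟩ :=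
      iso_limit_enum hMcl hbhlsc hbslim hbsGe hεpos
    -- the image of w is exactly Th, in particular yh is a limit of isolated points
    have himg : Finset.image w Finset.univ = Th := by
      apply Finset.eq_of_subset_of_card_le
      · intro y hy
        obtain ⟨i, -, rfl⟩ := Finset.mem_image.1 hy
        exact hisoTh _ (hwiso i)
      · rw [Finset.card_image_of_injective _ hwinj, Finset.card_univ, Fintype.card_fin, hThcard]
    have hyhim : yh ∈ Finset.image w Finset.univ := himg ▸ hyhT
    obtain ⟨i, -, hwi⟩ := Finset.mem_image.1 hyhim
    -- pick a large j
    have hev1 : ∀ᶠ j in Filter.atTop, dist (ws j i) yh < ε/3 := by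
      have := hwsconv i
      rw [hwi] at this
      exact Filter.eventually_atTop.2 ((Metric.tendsto_atTop.1 this) (ε/3) (by positivity))
    have hev2 : ∀ᶠ j in Filter.atTop, (1:ℝ)/(φ j + 1) < ε/3 := by
      obtain ⟨N, hN⟩ := exists_nat_one_div_lt (show (0:ℝ) < ε/3 by positivity)
      refine Filter.eventually_atTop.2 ⟨N, fun j hj => ?_⟩
      have hφj : N ≤ φ j := le_trans hj (StrictMono.le_apply hφ)
      have : (1:ℝ)/(φ j + 1) ≤ 1/(N+1) := by
        have hNj : ((N:ℝ)+1) ≤ ((φ j:ℝ)+1) := by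
          have : (N:ℝ) ≤ φ j := Nat.cast_le.2 hφj
          linarith
        exact one_div_le_one_div_of_le (by positivity) hNj
      linarith
    obtain ⟨j, hj1, hj2⟩ := (hev1.and hev2).exists
    -- two distinct fibre points near yh over bs (φ j)
    obtain ⟨u, ⟨hufib, huball⟩, v, ⟨hvfib, hvball⟩, huv⟩ := hbsbad (φ j)
    have hud : dist u (ws j i) < ε := by
      have h1 : dist u yh < 1/(φ j + 1) := Metric.mem_ball.1 huball
      have h2 : dist u (ws j i) ≤ dist u yh + dist yh (ws j i) := dist_triangle _ _ _
      have h3 : dist yh (ws j i) < ε/3 := by rw [dist_comm]; exact hj1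
      have hεthird : (0:ℝ) < ε/3 := by positivity
      linarith
    have hvd : dist v (ws j i) < ε := by
      have h1 : dist v yh < 1/(φ j + 1) := Metric.mem_ball.1 hvball
      have h2 : dist v (ws j i) ≤ dist v yh + dist yh (ws j i) := dist_triangle _ _ _
      have h3 : dist yh (ws j i) < ε/3 := by rw [dist_comm]; exact hj1
      linarith
    have hu' := (hwsiso j i).2 u hufib hud
    have hv' := (hwsiso j i).2 v hvfib hvd
    exact huv (hu'.trans hv'.symm)
  obtain ⟨ρ, hρpos, r, hrpos, hrr₀, htrapP⟩ := htrap
  -- Step 8: covering: every point of M enters the trap within L steps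
  have hppM : (bh, yh) ∈ M := hyhiso.1
  have hWo : IsOpen ((Metric.ball bh r) ×ˢ Metric.ball yh ρ) :=
    Metric.isOpen_ball.prod Metric.isOpen_ball
  have hppW : (bh, yh) ∈ (Metric.ball bh r) ×ˢ Metric.ball yh ρ :=
    ⟨Metric.mem_ball_self hrpos, Metric.mem_ball_self hρpos⟩
  obtain ⟨L, hL⟩ := cover_lemma hf hg hF hMcl hMmin hWo hppM hppW
  -- Step 9: counting: the fibre over f^[L] bh is finite, contradiction
  set φL : Y → Y := fun y => (F^[L] (bh, y)).2 with hφL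
  have hchoice : ∀ z, z ∈ fib M bh → ∃ n, n ≤ L ∧ F^[n] (bh, z) ∈
      (Metric.ball bh r) ×ˢ Metric.ball yh ρ := by
    intro z hz
    obtain ⟨n, hn1, hn2⟩ := hL (bh, z) hz
    exact ⟨n, hn1, hn2⟩
  choose! uu hu1 hu2 using hchoice
  have hSn : ∀ n : ℕ, (φL '' {z | z ∈ fib M bh ∧ uu z = n}).Subsingleton := by
    rintro n x ⟨z, ⟨hzfib, hzn⟩, rfl⟩ x' ⟨z', ⟨hz'fib, hz'n⟩, rfl⟩
    have hnL : n ≤ L := hzn ▸ hu1 z hzfib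
    -- both images at time n are in the trap over b' := f^[n] bh
    have hW1 := hu2 z hzfib
    have hW2 := hu2 z' hz'fib
    rw [hzn] at hW1
    rw [hz'n] at hW2
    have hfst : (F^[n] (bh, z)).1 = f^[n] bh := F_iter_fst hF n (bh, z)
    have hfst' : (F^[n] (bh, z')).1 = f^[n] bh := F_iter_fst hF n (bh, z')
    have hb'ball : f^[n] bh ∈ Metric.ball bh r := by rw [← hfst]; exact hW1.1
    have hb'Gm : f^[n] bh ∈ Gm := hGmfwd bh hbhG n
    obtain ⟨⟨hb'lsc, -⟩, -, hb'ext⟩ := hGmS hb'Gm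
    have hb'V' : f^[n] bh ∈ V₁' := hr₀sub (Metric.mem_ball.2
      (lt_of_lt_of_le (Metric.mem_ball.1 hb'ball) hrr₀))
    have hb'no : ¬ HasGeIso M ε (i₀+1) (f^[n] bh) := fun hcon =>
      hb'ext ⟨hb'V'.2, hb'lsc, hcon⟩
    -- fibre membership of the two image points
    have hq1 : (F^[n] (bh, z)).2 ∈ fib M (f^[n] bh) := by
      have hmem : F^[n] (bh, z) ∈ M := mem_M_iter hMinv hzfib n
      have : F^[n] (bh, z) = (f^[n] bh, (F^[n] (bh, z)).2) := by
        rw [← hfst]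
      rwa [this] at hmem
    have hq2 : (F^[n] (bh, z')).2 ∈ fib M (f^[n] bh) := by
      have hmem : F^[n] (bh, z') ∈ M := mem_M_iter hMinv hz'fib n
      have : F^[n] (bh, z') = (f^[n] bh, (F^[n] (bh, z')).2) := by
        rw [← hfst']
      rwa [this] at hmem
    have hqq' : (F^[n] (bh, z)).2 = (F^[n] (bh, z')).2 :=
      htrapP (f^[n] bh) hb'ball hb'lsc hb'no ⟨hq1, hW1.2⟩ ⟨hq2, hW2.2⟩
    -- hence the images at time L agree
    have hdec : ∀ y : Y, F^[L] (bh, y) = F^[L-n] (F^[n] (bh, y)) := by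
      intro y
      rw [← Function.iterate_add_apply]
      congr 1
      omega
    have hpair : F^[n] (bh, z) = (f^[n] bh, (F^[n] (bh, z)).2) := by rw [← hfst]
    have hpair' : F^[n] (bh, z') = (f^[n] bh, (F^[n] (bh, z')).2) := by rw [← hfst']
    show (F^[L] (bh, z)).2 = (F^[L] (bh, z')).2
    rw [hdec z, hdec z', hpair, hpair', hqq']
  have hfin : (fib M (f^[L] bh)).Finite := by
    rw [fib_image_of_clean hf hg hF hMne hMcl hMinv hMmin hbhclean L]
    have hsub2 : (fun y => (F^[L] (bh, y)).2) '' fib M bh ⊆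
        ⋃ n ∈ Finset.range (L+1), φL '' {z | z ∈ fib M bh ∧ uu z = n} := by
      rintro x ⟨z, hzfib, rfl⟩
      have hnL : uu z ≤ L := hu1 z hzfib
      exact mem_iUnion₂.2 ⟨uu z, Finset.mem_range.2 (by omega), ⟨z, ⟨hzfib, rfl⟩, rfl⟩⟩
    exact Set.Finite.subset (Set.Finite.biUnion (Finset.range (L+1)).finite_toSet
      (fun n _ => (hSn n).finite)) hsub2
  have hb'Gm : f^[L] bh ∈ Gm := hGmfwd bh hbhG L
  obtain ⟨-, hb'inf, -⟩ := hGmS hb'Gm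
  exact hb'inf hfin

end Crux
end ST4

open ST4 in
/-- If a minimal set `M` of a skew product on `B × S¹` over a minimal base
is nowhere dense, then either a typical fibre of `M` is a Cantor set, or there is a
positive integer `N` such that a typical fibre of `M` has exactly `N` elements. -/
theorem typical_fibre_of_nowhere_dense_minimal_set_cantor_or_finite
    {B : Type*} [MetricSpace B] [CompactSpace B] [Nonempty B]
    (f : B → B) (hf : Continuous f)
    (hfmin : ∀ b : B, Dense (Set.range fun n => f^[n] b))
    (g : B × AddCircle (1 : ℝ) → AddCircle (1 : ℝ)) (hg : Continuous g)
    (F : B × AddCircle (1 : ℝ) → B × AddCircle (1 : ℝ)) (hF : ∀ p, F p = (f p.1, g p))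
    (M : Set (B × AddCircle (1 : ℝ))) (hMne : M.Nonempty) (hMcl : IsClosed M)
    (hMinv : Set.MapsTo F M M)
    (hMmin : ∀ p ∈ M, M ⊆ closure (Set.range fun n => F^[n] p))
    (hND : IsNowhereDense M) :
    (∃ R ∈ residual B, ∀ b ∈ R,
        {y : AddCircle (1 : ℝ) | (b, y) ∈ M}.Nonempty ∧
        Perfect {y : AddCircle (1 : ℝ) | (b, y) ∈ M} ∧
        IsTotallyDisconnected {y : AddCircle (1 : ℝ) | (b, y) ∈ M}) ∨
    (∃ N : ℕ, 0 < N ∧ ∃ R ∈ residual B, ∀ b ∈ R,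
        {y : AddCircle (1 : ℝ) | (b, y) ∈ M}.ncard = N ∧
        {y : AddCircle (1 : ℝ) | (b, y) ∈ M}.Finite) := by
  classical
  have hfibeq : ∀ b : B, {y : AddCircle (1 : ℝ) | (b, y) ∈ M} = ST4.fib M b := fun b => rfl
  have hlscres : {b : B | lscPt M b} ∈ residual B := residual_lscPt hMcl
  have hcleanres : {b : B | clean f b} ∈ residual B := residual_clean hf hfmin
  have harcres : {b : B | arcFree M b} ∈ residual B := residual_arcFree hMcl hND
  have hfibne : ∀ b : B, (ST4.fib M b).Nonempty := fib_nonempty hf hfmin hF hMne hMcl hMinv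
  set G := {b : B | lscPt M b} ∩ {b : B | clean f b} with hG
  have hGres : G ∈ residual B := Filter.inter_mem hlscres hcleanres
  by_cases hfin : ∃ b₀ ∈ G, (ST4.fib M b₀).Finite
  · -- the finite case: E2
    right
    obtain ⟨b₀, ⟨hb₀lsc, hb₀clean⟩, hb₀fin⟩ := hfin
    set N := (ST4.fib M b₀).ncard with hN
    have hNpos : 0 < N := by
      rw [hN]
      exact (Set.ncard_pos hb₀fin).2 (hfibne b₀)
    refine ⟨N, hNpos, G, hGres, ?_⟩
    rintro b ⟨hblsc, hbclean⟩
    have hHG : HasGe M N b := by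
      refine transfer_hasGe hf hfmin hg hF hMne hMcl hMinv hMmin hb₀lsc hbclean ?_
      refine ⟨hb₀fin.toFinset, by rw [Set.Finite.coe_toFinset], ?_⟩
      rw [hN, Set.ncard_eq_toFinset_card _ hb₀fin]
    have hnoMore : ¬ HasGe M (N+1) b := by
      intro hcon
      have h2 : HasGe M (N+1) b₀ :=
        transfer_hasGe hf hfmin hg hF hMne hMcl hMinv hMmin hblsc hb₀clean hcon
      obtain ⟨T, hT, hTcard⟩ := h2
      have : T.card ≤ N := by
        rw [hN]
        have h3 : (↑T : Set (AddCircle (1:ℝ))).ncard ≤ (ST4.fib M b₀).ncard :=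
          Set.ncard_le_ncard hT hb₀fin
        rwa [Set.ncard_coe_finset] at h3
      omega
    have hbfin : (ST4.fib M b).Finite := by
      by_contra hinf
      obtain ⟨T, hT, hTcard⟩ :=
        (show (ST4.fib M b).Infinite from hinf).exists_subset_card_eq (N+1)
      exact hnoMore ⟨T, hT, hTcard⟩
    constructor
    · rw [hfibeq b]
      obtain ⟨T, hT, hTcard⟩ := hHG
      have hle : N ≤ (ST4.fib M b).ncard := by
        have h3 : (↑T : Set (AddCircle (1:ℝ))).ncard ≤ (ST4.fib M b).ncard :=
          Set.ncard_le_ncard hT hbfin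
        rwa [Set.ncard_coe_finset, hTcard] at h3
      have hge : (ST4.fib M b).ncard ≤ N := by
        by_contra hc
        push_neg at hc
        obtain ⟨T', hT'sub, hT'card⟩ := Finset.exists_subset_card_eq (s := hbfin.toFinset) (n := N+1) (by
          rw [← Set.ncard_eq_toFinset_card _ hbfin]
          omega)
        refine hnoMore ⟨T', ?_, hT'card⟩
        intro y hy
        have := hT'sub hy
        rwa [Set.Finite.mem_toFinset] at this
      omega
    · rw [hfibeq b]; exact hbfin
  · -- the infinite case
    push_neg at hfin
    have hinf : {b : B | (ST4.fib M b).Infinite} ∈ residual B := by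
      refine Filter.mem_of_superset hGres ?_
      intro b hb
      exact hfin b hb
    by_cases hEm : IsMeagre {b : B | lscPt M b ∧ ∃ y, ∃ ε > (0:ℝ), isoPt M ε b y}
    · -- E1
      left
      refine ⟨G ∩ {b : B | arcFree M b} ∩
        {b : B | lscPt M b ∧ ∃ y, ∃ ε > (0:ℝ), isoPt M ε b y}ᶜ,
        Filter.inter_mem (Filter.inter_mem hGres harcres) hEm, ?_⟩
      rintro b ⟨⟨⟨hblsc, -⟩, hbarc⟩, hbE⟩
      have h1 : {y : AddCircle (1 : ℝ) | (b, y) ∈ M}.Nonempty := hfibne b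
      have h3 : IsTotallyDisconnected {y : AddCircle (1 : ℝ) | (b, y) ∈ M} :=
        totallyDisconnected_of_arcFree hbarc
      refine ⟨h1, ?_, h3⟩
      refine ⟨isClosed_fib hMcl b, ?_⟩
      rw [preperfect_iff_nhds]
      intro y hy U hU
      obtain ⟨ε, hεpos, hball⟩ := Metric.mem_nhds_iff.1 hU
      have hniso : ¬ isoPt M ε b y := by
        intro hiso
        exact hbE ⟨hblsc, y, ε, hεpos, hiso⟩
      rw [isoPt] at hniso
      push_neg at hniso
      obtain ⟨z, hzfib, hzd, hzne⟩ := hniso hy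
      exact ⟨z, ⟨hball (Metric.mem_ball.2 hzd), hzfib⟩, hzne⟩
    · exact absurd (crux hf hfmin hg hF hMne hMcl hMinv hMmin hinf hEm) not_false
end

section
/- Let B be a nonempty compact metric space and f : B → B a continuous minimal map. Then there exists an irrational real number α such that the direct product map F : B × (ℝ/ℤ) → B × (ℝ/ℤ) defined by F(b, y) = (f(b), y + α mod 1) is minimal. -/
open Set Topology

noncomputable section RotProdAux

namespace RotProdAux

/-- The set of topological eigenvalues of `f` witnessed by unimodular continuous
eigenfunctions. -/
def Eigen {B : Type*} [TopologicalSpace B] (f : B → B) : Set ℂ :=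
  {l : ℂ | ∃ χ : B → ℂ, Continuous χ ∧ (∀ x, ‖χ x‖ = 1) ∧ ∀ x, χ (f x) = l * χ x}

lemma exists_pow_re_le (ν w : ℂ) (hν1 : ν ≠ 1) (hν : ‖ν‖ = 1) (hw : ‖w‖ = 1) :
    ∃ n : ℕ, (ν ^ n * w).re ≤ 1 / 2 := by
  by_contra h
  push_neg at h
  have hd : (0:ℝ) < ‖ν - 1‖ := by
    simpa [norm_pos_iff, sub_ne_zero] using hν1
  obtain ⟨m, hm⟩ := exists_nat_gt (4 / ‖ν - 1‖)
  have hsum : ∑ i ∈ Finset.range m, ν ^ i * w = ((ν ^ m - 1) / (ν - 1)) * w := by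
    rw [← Finset.sum_mul, geom_sum_eq hν1]
  have hnorm : ‖∑ i ∈ Finset.range m, ν ^ i * w‖ ≤ 2 / ‖ν - 1‖ := by
    rw [hsum, norm_mul, hw, mul_one, norm_div]
    gcongr
    calc ‖ν ^ m - 1‖ ≤ ‖ν ^ m‖ + ‖(1:ℂ)‖ := norm_sub_le _ _
    _ = 2 := by rw [norm_pow, hν]; norm_num
  have hre : (m : ℝ) / 2 ≤ (∑ i ∈ Finset.range m, ν ^ i * w).re := by
    rw [Complex.re_sum]
    calc (m : ℝ) / 2 = ∑ _i ∈ Finset.range m, (1:ℝ)/2 := by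
          simp [Finset.sum_const]; ring
    _ ≤ ∑ i ∈ Finset.range m, (ν ^ i * w).re :=
          Finset.sum_le_sum fun i _ => (h i).le
  have hre2 : (∑ i ∈ Finset.range m, ν ^ i * w).re ≤ 2 / ‖ν - 1‖ :=
    le_trans (Complex.re_le_norm _) (by exact hnorm)
  have h4 : 4 / ‖ν - 1‖ < (m:ℝ) := hm
  have : (m:ℝ) / 2 ≤ 2 / ‖ν - 1‖ := le_trans hre hre2
  rw [div_lt_iff₀ hd] at h4
  rw [div_le_div_iff₀ (by norm_num) hd] at this
  linarith

lemma eigen_sep {B : Type*} [Nonempty B] (f : B → B) {l m : ℂ}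
    (ψ φ : B → ℂ) (hψn : ∀ x, ‖ψ x‖ = 1) (hψe : ∀ x, ψ (f x) = l * ψ x)
    (hφn : ∀ x, ‖φ x‖ = 1) (hφe : ∀ x, φ (f x) = m * φ x) (hne : l ≠ m) :
    ∃ x, 1 ≤ ‖ψ x - φ x‖ := by
  obtain ⟨x₀⟩ := ‹Nonempty B›
  have hl1 : ‖l‖ = 1 := by
    have h1 := hψn (f x₀)
    rw [hψe, norm_mul, hψn x₀, mul_one] at h1
    exact h1
  have hm1 : ‖m‖ = 1 := by
    have h1 := hφn (f x₀)
    rw [hφe, norm_mul, hφn x₀, mul_one] at h1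
    exact h1
  set ν := l * (starRingEnd ℂ) m with hνdef
  have hνn : ‖ν‖ = 1 := by
    rw [hνdef, norm_mul, RCLike.norm_conj, hl1, hm1, mul_one]
  have hmm : (starRingEnd ℂ) m * m = 1 := by
    rw [mul_comm, Complex.mul_conj]
    have hns : Complex.normSq m = 1 := by
      rw [Complex.normSq_eq_norm_sq, hm1]; norm_num
    rw [hns]; norm_num
  have hν1 : ν ≠ 1 := by
    intro h
    apply hne
    calc l = l * ((starRingEnd ℂ) m * m) := by rw [hmm, mul_one]
    _ = ν * m := by rw [hνdef]; ring
    _ = m := by rw [h, one_mul]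
  set w := ψ x₀ * (starRingEnd ℂ) (φ x₀) with hwdef
  have hwn : ‖w‖ = 1 := by
    rw [hwdef, norm_mul, RCLike.norm_conj, hψn, hφn, mul_one]
  obtain ⟨n, hn⟩ := exists_pow_re_le ν w hν1 hνn hwn
  refine ⟨f^[n] x₀, ?_⟩
  have key : ∀ k : ℕ, ψ (f^[k] x₀) * (starRingEnd ℂ) (φ (f^[k] x₀)) = ν ^ k * w := by
    intro k
    induction k with
    | zero => simp [hwdef]
    | succ k ih =>
        rw [Function.iterate_succ_apply', hψe, hφe, map_mul]
        calc l * ψ (f^[k] x₀) * ((starRingEnd ℂ) m * (starRingEnd ℂ) (φ (f^[k] x₀)))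
            = (l * (starRingEnd ℂ) m) * (ψ (f^[k] x₀) * (starRingEnd ℂ) (φ (f^[k] x₀))) := by ring
        _ = ν * (ν ^ k * w) := by rw [← hνdef, ih]
        _ = ν ^ (k + 1) * w := by ring
  set y := f^[n] x₀
  have hrey : (ψ y * (starRingEnd ℂ) (φ y)).re ≤ 1/2 := by rw [key n]; exact hn
  have hsq : ‖ψ y - φ y‖^2 = 2 - 2 * (ψ y * (starRingEnd ℂ) (φ y)).re := by
    rw [Complex.sq_norm, Complex.normSq_sub]
    have e1 : Complex.normSq (ψ y) = 1 := by
      rw [← Complex.sq_norm, hψn]; norm_num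
    have e2 : Complex.normSq (φ y) = 1 := by
      rw [← Complex.sq_norm, hφn]; norm_num
    rw [e1, e2]; ring
  nlinarith [norm_nonneg (ψ y - φ y)]

lemma eigen_countable {B : Type*} [MetricSpace B] [CompactSpace B] [Nonempty B]
    (f : B → B) : (Eigen f).Countable := by
  classical
  have hch : ∀ l ∈ Eigen f, ∃ χ : C(B, ℂ), (∀ x, ‖χ x‖ = 1) ∧ ∀ x, χ (f x) = l * χ x := by
    rintro l ⟨χ, hc, hn, he⟩
    exact ⟨⟨χ, hc⟩, hn, he⟩
  choose! Ψ hΨn hΨe using hch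
  apply Set.PairwiseDisjoint.countable_of_isOpen
    (s := fun l : ℂ => Metric.ball (Ψ l) (1/2))
  · intro l hl m hm hne
    have hsep := eigen_sep f (Ψ l) (Ψ m) (hΨn l hl) (hΨe l hl) (hΨn m hm) (hΨe m hm) hne
    obtain ⟨x, hx⟩ := hsep
    have hdist : 1 ≤ dist (Ψ l) (Ψ m) := by
      refine le_trans ?_ (ContinuousMap.dist_apply_le_dist x)
      rw [dist_eq_norm]
      exact hx
    exact Metric.ball_disjoint_ball (by linarith)
  · intro l _
    exact Metric.isOpen_ball
  · intro l _
    exact ⟨Ψ l, Metric.mem_ball_self (by norm_num)⟩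

/-- The character `y ↦ exp (2 π i k y)` of `AddCircle 1`, as a map to `ℂ`. -/
def chara (k : ℤ) (y : AddCircle (1:ℝ)) : ℂ := (AddCircle.toCircle (k • y) : ℂ)

lemma chara_continuous (k : ℤ) : Continuous (chara k) :=
  continuous_subtype_val.comp (AddCircle.continuous_toCircle.comp (continuous_zsmul k))

lemma chara_add (k : ℤ) (y z : AddCircle (1:ℝ)) :
    chara k (y + z) = chara k y * chara k z := by
  unfold chara
  rw [smul_add, AddCircle.toCircle_add, Circle.coe_mul]

lemma chara_norm (k : ℤ) (y : AddCircle (1:ℝ)) : ‖chara k y‖ = 1 := by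
  unfold chara
  rw [Circle.norm_coe]

lemma chara_eq_one (k : ℤ) (y : AddCircle (1:ℝ)) (h : k • y = 0) : chara k y = 1 := by
  unfold chara
  rw [h, AddCircle.toCircle_zero, Circle.coe_one]

lemma chara_fiber_countable (k : ℤ) (hk : k ≠ 0) (l : ℂ) :
    {α : ℝ | chara k ((α : AddCircle (1:ℝ))) = l}.Countable := by
  rcases Set.eq_empty_or_nonempty {α : ℝ | chara k ((α : AddCircle (1:ℝ))) = l} with he | ⟨α₀, hα₀⟩
  · rw [he]; exact Set.countable_empty
  · apply Set.Countable.mono _ (Set.countable_range fun n : ℤ => α₀ + (n : ℝ) / (k : ℝ))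
    intro α hα
    have h1 : AddCircle.toCircle (k • ((α:ℝ) : AddCircle (1:ℝ)))
        = AddCircle.toCircle (k • ((α₀:ℝ) : AddCircle (1:ℝ))) := by
      apply Subtype.coe_injective
      exact (hα.trans hα₀.symm : chara k _ = chara k _)
    have h2 := AddCircle.injective_toCircle (one_ne_zero) h1
    have h3 : ((k • α - k • α₀ : ℝ) : AddCircle (1:ℝ)) = 0 := by
      rw [AddCircle.coe_sub, AddCircle.coe_zsmul, AddCircle.coe_zsmul, h2, sub_self]
    rw [AddCircle.coe_eq_zero_iff] at h3
    obtain ⟨n, hn⟩ := h3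
    refine ⟨n, ?_⟩
    have hk' : (k:ℝ) ≠ 0 := Int.cast_ne_zero.mpr hk
    have hn' : (n : ℝ) = (k:ℝ) * α - (k:ℝ) * α₀ := by
      have := hn
      simp only [zsmul_eq_mul, mul_one] at this
      push_cast
      linarith
    field_simp
    rw [hn']
    ring


section Core

variable {B : Type*} [MetricSpace B] [CompactSpace B] [Nonempty B]

/-- Minimality of `f` restated: no proper nonempty closed invariant subsets. -/
lemma no_proper_invariant (f : B → B)
    (hfmin : ∀ b : B, Dense (Set.range fun n => f^[n] b)) :
    ∀ A : Set B, IsClosed A → A.Nonempty → Set.MapsTo f A A → A = univ := by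
  intro A hAc ⟨b, hb⟩ hAi
  have horb : ∀ n : ℕ, f^[n] b ∈ A := by
    intro n
    induction n with
    | zero => simpa using hb
    | succ n ih => rw [Function.iterate_succ_apply']; exact hAi ih
  have h1 : (Set.range fun n => f^[n] b) ⊆ A := by
    rintro _ ⟨n, rfl⟩; exact horb n
  have h2 : closure (Set.range fun n => f^[n] b) ⊆ A := hAc.closure_subset_iff.mpr h1
  rw [(hfmin b).closure_eq] at h2
  exact eq_univ_of_univ_subset h2

/-- Core step: a minimal closed invariant subset of the product system is everything,
provided `α` avoids all eigenvalue characters. -/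
lemma minimal_is_univ (f : B → B) (hf : Continuous f)
    (hBmin : ∀ A : Set B, IsClosed A → A.Nonempty → Set.MapsTo f A A → A = univ)
    (α : ℝ) (hα : ∀ k : ℤ, k ≠ 0 → chara k ((α : ℝ) : AddCircle (1:ℝ)) ∉ Eigen f)
    (M : Set (B × AddCircle (1:ℝ))) (hMc : IsClosed M) (hMne : M.Nonempty)
    (hMinv : Set.MapsTo (fun q : B × AddCircle (1:ℝ) =>
      (f q.1, q.2 + ((α : ℝ) : AddCircle (1:ℝ)))) M M)
    (hMmin : ∀ N, N ⊆ M → IsClosed N → N.Nonempty →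
      Set.MapsTo (fun q : B × AddCircle (1:ℝ) =>
        (f q.1, q.2 + ((α : ℝ) : AddCircle (1:ℝ)))) N N → N = M) :
    M = univ := by
  classical
  set a : (AddCircle (1:ℝ)) := ((α : ℝ) : (AddCircle (1:ℝ))) with ha
  set F : B × (AddCircle (1:ℝ)) → B × (AddCircle (1:ℝ)) := fun q => (f q.1, q.2 + a) with hF
  set τ : (AddCircle (1:ℝ)) → B × (AddCircle (1:ℝ)) → B × (AddCircle (1:ℝ)) := fun β q => (q.1, q.2 + β) with hτ
  have hτcont : ∀ β, Continuous (τ β) :=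
    fun β => continuous_fst.prodMk (continuous_snd.add continuous_const)
  have hτF : ∀ β q, τ β (F q) = F (τ β q) := by
    intro β q
    simp only [hτ, hF]
    rw [add_right_comm]
  have hMcp : IsCompact M := hMc.isCompact
  have htcl : ∀ β, IsClosed (τ β '' M) := fun β => (hMcp.image (hτcont β)).isClosed
  have htne : ∀ β, (τ β '' M).Nonempty := fun β => hMne.image _
  have htinv : ∀ β, Set.MapsTo F (τ β '' M) (τ β '' M) := by
    rintro β _ ⟨q, hq, rfl⟩
    rw [← hτF]
    exact ⟨F q, hMinv hq, rfl⟩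
  have hτadd : ∀ (β γ : (AddCircle (1:ℝ))) (q : B × (AddCircle (1:ℝ))), τ β (τ γ q) = τ (γ + β) q := by
    intro β γ q; simp only [hτ]; rw [add_assoc]
  have hτzero : ∀ q, τ 0 q = q := by intro q; simp [hτ]
  set H : Set (AddCircle (1:ℝ)) := {β | τ β '' M ⊆ M} with hHdef
  have hmem : ∀ β, β ∈ H ↔ ∀ q ∈ M, τ β q ∈ M := by
    intro β
    constructor
    · intro h q hq; exact h ⟨q, hq, rfl⟩
    · rintro h _ ⟨q, hq, rfl⟩; exact h q hq
  have hsubeq : ∀ β ∈ H, τ β '' M = M :=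
    fun β hβ => hMmin _ hβ (htcl β) (htne β) (htinv β)
  have hH0 : (0:(AddCircle (1:ℝ))) ∈ H := by
    rw [hmem]; intro q hq; rw [hτzero]; exact hq
  have hHadd : ∀ β ∈ H, ∀ γ ∈ H, β + γ ∈ H := by
    intro β hβ γ hγ
    rw [hmem]
    intro q hq
    have h1 : τ γ q ∈ M := (hmem γ).mp hγ q hq
    have h2 : τ β (τ γ q) ∈ M := (hmem β).mp hβ _ h1
    rwa [hτadd, add_comm γ β] at h2
  have hHneg : ∀ β ∈ H, -β ∈ H := by
    intro β hβ
    have heq := hsubeq β hβ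
    rw [hmem]
    intro q hq
    rw [← heq] at hq
    obtain ⟨p, hp, rfl⟩ := hq
    have : τ (-β) (τ β p) = p := by rw [hτadd, add_neg_cancel, hτzero]
    rw [this]; exact hp
  -- pairwise difference of fiber elements lies in H
  have hHdiff : ∀ (x : B) (y y' : (AddCircle (1:ℝ))), (x, y) ∈ M → (x, y') ∈ M → y' - y ∈ H := by
    intro x y y' hy hy'
    set β := y' - y with hβ
    set N := τ (-β) '' (M ∩ τ β '' M) with hN
    have hτβxy : τ β (x, y) = (x, y') := by
      simp only [hτ, hβ]; rw [add_sub_cancel]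
    have hNne : N.Nonempty := ⟨τ (-β) (x, y'), ⟨(x, y'), ⟨hy', ⟨(x, y), hy, hτβxy⟩⟩, rfl⟩⟩
    have hNsub : N ⊆ M := by
      rintro _ ⟨q, ⟨_, ⟨p, hp, rfl⟩⟩, rfl⟩
      have : τ (-β) (τ β p) = p := by rw [hτadd, add_neg_cancel, hτzero]
      rw [this]; exact hp
    have hNcl : IsClosed N :=
      (((hMcp.inter_right (htcl β)).image (hτcont (-β)))).isClosed
    have hNinv : Set.MapsTo F N N := by
      rintro _ ⟨q, ⟨hq1, hq2⟩, rfl⟩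
      rw [← hτF]
      exact ⟨F q, ⟨hMinv hq1, htinv β hq2⟩, rfl⟩
    have hNM : N = M := hMmin N hNsub hNcl hNne hNinv
    rw [hmem]
    intro q hq
    rw [← hNM] at hq
    obtain ⟨p, ⟨hp1, hp2⟩, rfl⟩ := hq
    have : τ β (τ (-β) p) = p := by rw [hτadd, neg_add_cancel, hτzero]
    rw [this]; exact hp1
  -- projection to B is onto
  have hproj : ∀ x : B, ∃ y : (AddCircle (1:ℝ)), (x, y) ∈ M := by
    have h1 : Prod.fst '' M = univ := by
      apply hBmin _ ((hMcp.image continuous_fst).isClosed) (hMne.image _)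
      rintro _ ⟨q, hq, rfl⟩
      exact ⟨F q, hMinv hq, rfl⟩
    intro x
    have : x ∈ Prod.fst '' M := h1 ▸ mem_univ x
    obtain ⟨q, hq, hqx⟩ := this
    exact ⟨q.2, by rwa [← hqx, Prod.mk.eta] ⟩
  by_cases hall : ∀ β : (AddCircle (1:ℝ)), β ∈ H
  · apply eq_univ_of_forall
    intro q
    obtain ⟨y₀, hy₀⟩ := hproj q.1
    have h1 := (hmem (q.2 - y₀)).mp (hall (q.2 - y₀)) (q.1, y₀) hy₀
    have h2 : τ (q.2 - y₀) (q.1, y₀) = q := by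
      simp only [hτ]; rw [add_sub_cancel]
    rwa [h2] at h1
  · exfalso
    push_neg at hall
    obtain ⟨β₀, hβ₀⟩ := hall
    -- H is closed
    have hHclosed : IsClosed H := by
      have heq : H = ⋂ q ∈ M, {β : (AddCircle (1:ℝ)) | (q.1, q.2 + β) ∈ M} := by
        ext β
        rw [hmem]
        simp only [mem_iInter₂, mem_setOf_eq]
        exact Iff.rfl
      rw [heq]
      refine isClosed_biInter fun q hq => ?_
      exact hMc.preimage ((continuous_const (y := q.1)).prodMk
        (continuous_const.add continuous_id))
    -- pull back to a subgroup of ℝ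
    set G : AddSubgroup ℝ :=
      { carrier := {r : ℝ | ((r : ℝ) : (AddCircle (1:ℝ))) ∈ H}
        zero_mem' := by
          show (((0:ℝ) : (AddCircle (1:ℝ)))) ∈ H
          have h0 : (((0:ℝ)) : (AddCircle (1:ℝ))) = 0 := by norm_cast
          rw [h0]
          exact hH0
        add_mem' := by
          intro r s hr hs
          show (((r + s :ℝ) : (AddCircle (1:ℝ)))) ∈ H
          rw [AddCircle.coe_add]
          exact hHadd _ hr _ hs
        neg_mem' := by
          intro r hr
          show (((-r :ℝ) : (AddCircle (1:ℝ)))) ∈ H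
          rw [AddCircle.coe_neg]
          exact hHneg _ hr } with hG
    have hGmem : ∀ r : ℝ, r ∈ G ↔ ((r : ℝ) : (AddCircle (1:ℝ))) ∈ H := fun r => Iff.rfl
    have h1G : (1:ℝ) ∈ G := by
      rw [hGmem]
      have : (((1:ℝ)) : (AddCircle (1:ℝ))) = 0 := AddCircle.coe_period (p := (1:ℝ))
      rw [this]; exact hH0
    rcases G.dense_or_cyclic with hdense | ⟨c, hc⟩
    · -- then H = everything, contradiction
      apply hβ₀
      have hsurj : ∀ β : (AddCircle (1:ℝ)), ∃ r : ℝ, ((r:ℝ) : (AddCircle (1:ℝ))) = β := by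
        intro β
        induction β using QuotientAddGroup.induction_on with
        | H r => exact ⟨r, rfl⟩
      have himg : (fun r : ℝ => ((r:ℝ) : (AddCircle (1:ℝ)))) '' (G : Set ℝ) ⊆ H := by
        rintro _ ⟨r, hr, rfl⟩; exact hr
      have hdimg : Dense ((fun r : ℝ => ((r:ℝ) : (AddCircle (1:ℝ)))) '' (G : Set ℝ)) := by
        intro β
        obtain ⟨r, rfl⟩ := hsurj β
        have hr : r ∈ closure (G : Set ℝ) := hdense r
        have := image_closure_subset_closure_image
          (f := fun r : ℝ => ((r:ℝ) : (AddCircle (1:ℝ)))) (s := (G : Set ℝ)) (AddCircle.continuous_mk' 1)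
        exact this ⟨r, hr, rfl⟩
      have : Dense H := hdimg.mono himg
      have : closure H = univ := this.closure_eq
      rw [hHclosed.closure_eq] at this
      rw [this]; exact mem_univ β₀
    · -- H is killed by a character
      rw [← AddSubgroup.zmultiples_eq_closure] at hc
      have h1c : ∃ k : ℤ, k • c = 1 := by
        have := h1G
        rw [hc, AddSubgroup.mem_zmultiples_iff] at this
        exact this
      obtain ⟨k, hkc⟩ := h1c
      have hk0 : k ≠ 0 := by
        intro h; rw [h, zero_smul] at hkc; exact one_ne_zero hkc.symm
      -- the character chara k kills H
      have hkill : ∀ β ∈ H, chara k β = 1 := by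
        intro β hβ
        have hsurj : ∃ r : ℝ, ((r:ℝ) : (AddCircle (1:ℝ))) = β := by
          induction β using QuotientAddGroup.induction_on with
          | H r => exact ⟨r, rfl⟩
        obtain ⟨r, rfl⟩ := hsurj
        have hrG : r ∈ G := hβ
        rw [hc, AddSubgroup.mem_zmultiples_iff] at hrG
        obtain ⟨m, hm⟩ := hrG
        apply chara_eq_one
        have : k • ((r:ℝ) : (AddCircle (1:ℝ))) = (((k • r : ℝ)) : (AddCircle (1:ℝ))) := (AddCircle.coe_zsmul _).symm
        rw [this]
        rw [AddCircle.coe_eq_zero_iff]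
        refine ⟨m, ?_⟩
        rw [← hm]
        rw [smul_comm k m c, hkc]
    -- build the eigenfunction
      set yx : B → (AddCircle (1:ℝ)) := fun x => (hproj x).choose with hyx
      have hyxM : ∀ x, (x, yx x) ∈ M := fun x => (hproj x).choose_spec
      set g : B → ℂ := fun x => chara k (yx x) with hg
      have hwd : ∀ (x : B) (y y' : (AddCircle (1:ℝ))), (x, y) ∈ M → (x, y') ∈ M →
          chara k y = chara k y' := by
        intro x y y' hy hy'
        have hd := hHdiff x y y' hy hy'
        have h1 : chara k (y' - y) = 1 := hkill _ hd
        calc chara k y = chara k y * chara k (y' - y) := by rw [h1, mul_one]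
        _ = chara k (y + (y' - y)) := (chara_add _ _ _).symm
        _ = chara k y' := by rw [add_sub_cancel]
      -- continuity via the quotient map M → B
      haveI : CompactSpace M := isCompact_iff_compactSpace.mp hMcp
      set p : M → B := fun q => (q : B × (AddCircle (1:ℝ))).1 with hp
      have hpc : Continuous p := continuous_fst.comp continuous_subtype_val
      have hps : Function.Surjective p := fun x => ⟨⟨(x, yx x), hyxM x⟩, rfl⟩
      have hquot : IsQuotientMap p := (hpc.isClosedMap).isQuotientMap hpc hps
      have hgp : (g ∘ p) = fun q : M => chara k ((q : B × (AddCircle (1:ℝ))).2) := by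
        funext q
        exact hwd ((q : B × (AddCircle (1:ℝ))).1) (yx _) ((q : B × (AddCircle (1:ℝ))).2) (hyxM _)
          (by rw [Prod.mk.eta]; exact q.property)
      have hgc : Continuous g := by
        rw [hquot.continuous_iff, hgp]
        exact (chara_continuous k).comp (continuous_snd.comp continuous_subtype_val)
      have hgn : ∀ x, ‖g x‖ = 1 := fun x => chara_norm k (yx x)
      have hge : ∀ x, g (f x) = chara k a * g x := by
        intro x
        have h1 : (f x, yx x + a) ∈ M := hMinv (hyxM x)
        have h2 := hwd (f x) (yx (f x)) (yx x + a) (hyxM (f x)) h1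
        rw [hg]
        show chara k (yx (f x)) = chara k a * chara k (yx x)
        rw [h2, chara_add, mul_comm]
      exact hα k hk0 ⟨g, hgc, hgn, hge⟩

end Core

end RotProdAux

end RotProdAux

open RotProdAux in
/-- For every minimal map `f` of a nonempty compact metric space `B` there is
an irrational `α` such that the direct product of `f` with the rotation of the circle
`ℝ/ℤ` by `α` is minimal. -/
theorem exists_irrational_rotation_product_minimal
    {B : Type*} [MetricSpace B] [CompactSpace B] [Nonempty B]
    (f : B → B) (hf : Continuous f)
    (hfmin : ∀ b : B, Dense (Set.range fun n => f^[n] b)) :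
    ∃ α : ℝ, Irrational α ∧
      ∀ p : B × AddCircle (1 : ℝ),
        Dense (Set.range fun n =>
          (fun q : B × AddCircle (1 : ℝ) => (f q.1, q.2 + (α : AddCircle (1 : ℝ))))^[n] p) := by
  classical
  -- minimality of f restated
  have hBmin := RotProdAux.no_proper_invariant f hfmin
  -- choose a good α
  obtain ⟨α, hirr, hα⟩ : ∃ α : ℝ, Irrational α ∧
      ∀ k : ℤ, k ≠ 0 → chara k ((α : ℝ) : AddCircle (1:ℝ)) ∉ Eigen f := by
    have hcnt : (Eigen f).Countable := eigen_countable f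
    set Bad : Set ℝ := (Set.range ((↑) : ℚ → ℝ)) ∪
      ⋃ l ∈ Eigen f, ⋃ k : ℤ, ⋃ (_ : k ≠ 0),
        {α : ℝ | chara k ((α : ℝ) : AddCircle (1:ℝ)) = l} with hBad
    have hBadc : Bad.Countable := by
      apply Set.Countable.union (Set.countable_range _)
      refine hcnt.biUnion fun l _ => ?_
      refine Set.countable_iUnion fun k => ?_
      refine Set.countable_iUnion fun hk => ?_
      exact chara_fiber_countable k hk l
    have hex : ∃ α : ℝ, α ∉ Bad := by
      by_contra h
      push_neg at h
      have : (Set.univ : Set ℝ).Countable := by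
        refine hBadc.mono ?_
        intro x _
        exact h x
      exact Cardinal.not_countable_real this
    obtain ⟨α, hαBad⟩ := hex
    refine ⟨α, ?_, ?_⟩
    · intro hrat
      exact hαBad (Or.inl hrat)
    · intro k hk hmemE
      apply hαBad
      refine Or.inr ?_
      refine Set.mem_biUnion hmemE ?_
      refine Set.mem_iUnion.mpr ⟨k, ?_⟩
      refine Set.mem_iUnion.mpr ⟨hk, rfl⟩
  refine ⟨α, hirr, ?_⟩
  intro p
  set F : B × AddCircle (1:ℝ) → B × AddCircle (1:ℝ) :=
    fun q => (f q.1, q.2 + ((α : ℝ) : AddCircle (1:ℝ))) with hFdef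
  have hFc : Continuous F :=
    (hf.comp continuous_fst).prodMk (continuous_snd.add continuous_const)
  -- every nonempty closed invariant set is everything
  have hkey : ∀ A : Set (B × AddCircle (1:ℝ)), IsClosed A → A.Nonempty →
      Set.MapsTo F A A → A = univ := by
    intro A hAc hAne hAinv
    set S : Set (Set (B × AddCircle (1:ℝ))) :=
      {N | N.Nonempty ∧ IsClosed N ∧ Set.MapsTo F N N} with hS
    have hAS : A ∈ S := ⟨hAne, hAc, hAinv⟩
    have hzorn := zorn_superset_nonempty S ?_ A hAS
    · obtain ⟨M, hMA, hMmin⟩ := hzorn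
      obtain ⟨⟨hMne, hMc, hMinv⟩, hMle⟩ := hMmin
      have hMuniv : M = univ := by
        refine minimal_is_univ f hf hBmin α hα M hMc hMne hMinv ?_
        intro N hNM hNc hNne hNinv
        have := hMle (y := N) ⟨hNne, hNc, hNinv⟩ hNM
        exact le_antisymm hNM this
      exact eq_univ_of_univ_subset (hMuniv ▸ hMA)
    · -- chains have lower bounds
      intro c hcS hchain hcne
      refine ⟨⋂₀ c, ⟨?_, ?_, ?_⟩, fun s hs => sInter_subset_of_mem hs⟩
      · -- nonempty
        haveI : Nonempty c := hcne.to_subtype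
        apply IsCompact.nonempty_sInter_of_directed_nonempty_isCompact_isClosed
        · intro x hx y hy
          rcases hchain.total hx hy with h | h
          · exact ⟨x, hx, le_refl _, h⟩
          · exact ⟨y, hy, h, le_refl _⟩
        · exact fun U hU => (hcS hU).1
        · exact fun U hU => (hcS hU).2.1.isCompact
        · exact fun U hU => (hcS hU).2.1
      · exact isClosed_sInter fun U hU => (hcS hU).2.1
      · intro q hq
        rw [mem_sInter] at hq ⊢
        intro U hU
        exact (hcS hU).2.2 (hq U hU)
  -- conclude: the orbit closure of p is everything
  have horb : Set.MapsTo F (closure (Set.range fun n => F^[n] p))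
      (closure (Set.range fun n => F^[n] p)) := by
    have h1 : F '' (Set.range fun n => F^[n] p) ⊆ (Set.range fun n => F^[n] p) := by
      rintro _ ⟨_, ⟨n, rfl⟩, rfl⟩
      exact ⟨n + 1, (Function.iterate_succ_apply' F n p)⟩
    intro q hq
    have h2 : F q ∈ closure (F '' (Set.range fun n => F^[n] p)) :=
      image_closure_subset_closure_image hFc ⟨q, hq, rfl⟩
    exact closure_mono h1 h2
  have hcl : closure (Set.range fun n => F^[n] p) = univ :=
    hkey _ isClosed_closure ⟨p, subset_closure ⟨0, rfl⟩⟩ horb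
  rw [dense_iff_closure_eq]
  exact hcl
end

section
/- For every strictly increasing sequence (n_k)_{k≥1} of positive integers there exists a real number α such that, for every point s of the circle ℝ/ℤ, the set {s + n_k·α mod 1 : k ≥ 1} is dense in ℝ/ℤ (i.e. the rotation of the circle by α is minimal with respect to the sequence (n_k)). -/
open Set Topology

/-- For every strictly increasing sequence of positive integers `(n_k)` there
is `α ∈ ℝ` such that the rotation of the circle `ℝ/ℤ` by `α` is minimal with respect to
`(n_k)`: for every `s` the set `{s + n_k·α mod 1 : k}` is dense in `ℝ/ℤ`. -/
theorem exists_rotation_minimal_wrt_sequence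
    (n : ℕ → ℕ) (hmono : StrictMono n) (hpos : ∀ k, 0 < n k) :
    ∃ α : ℝ, ∀ s : AddCircle (1 : ℝ),
      Dense (Set.range fun k : ℕ => s + (((n k : ℝ) * α : ℝ) : AddCircle (1 : ℝ))) := by
  obtain ⟨B, hBc, -, hB⟩ := TopologicalSpace.exists_countable_basis (AddCircle (1 : ℝ))
  haveI : Countable {U : Set (AddCircle (1 : ℝ)) // U ∈ B ∧ U.Nonempty} :=
    (hBc.mono (fun U h => h.1 : {U | U ∈ B ∧ U.Nonempty} ⊆ B)).to_subtype
  set S : {U : Set (AddCircle (1 : ℝ)) // U ∈ B ∧ U.Nonempty} → Set ℝ :=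
    fun U => {α : ℝ | ∃ k, (((n k : ℝ) * α : ℝ) : AddCircle (1 : ℝ)) ∈ U.1} with hS
  have hopen : ∀ U, IsOpen (S U) := by
    intro U
    have : S U = ⋃ k, (fun α : ℝ => (((n k : ℝ) * α : ℝ) : AddCircle (1 : ℝ))) ⁻¹' U.1 := by
      ext α; simp [hS]
    rw [this]
    exact isOpen_iUnion fun k =>
      ((hB.isOpen U.2.1).preimage ((AddCircle.continuous_mk' 1).comp
        (continuous_const.mul continuous_id)))
  have hdense : ∀ U, Dense (S U) := by
    intro U
    rw [Metric.dense_iff]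
    intro x r hr
    obtain ⟨u, hu⟩ := U.2.2
    obtain ⟨t, rfl⟩ := QuotientAddGroup.mk_surjective u
    -- choose k with n k large
    obtain ⟨k, hk⟩ : ∃ k, 1 / r < (n k : ℝ) := by
      obtain ⟨k, hk⟩ := exists_nat_gt (1 / r)
      exact ⟨k, lt_of_lt_of_le hk (by exact_mod_cast hmono.le_apply.trans (le_refl (n k)))⟩
    have hnk : (0 : ℝ) < n k := by exact_mod_cast hpos k
    set m : ℤ := round ((n k : ℝ) * x - t) with hm
    set α : ℝ := (t + m) / (n k) with hα
    refine ⟨α, ?_, k, ?_⟩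
    · rw [Metric.mem_ball, Real.dist_eq]
      have h1 : α - x = (t + m - (n k : ℝ) * x) / (n k) := by
        rw [hα, eq_div_iff hnk.ne', sub_mul, div_mul_cancel₀ _ hnk.ne']; ring
      have h2 : |t + (m : ℝ) - (n k : ℝ) * x| ≤ 1 / 2 := by
        have := abs_sub_round ((n k : ℝ) * x - t)
        calc |t + (m : ℝ) - (n k : ℝ) * x| = |(n k : ℝ) * x - t - (m : ℝ)| := by
              rw [abs_sub_comm]; ring_nf
          _ ≤ 1 / 2 := this
      rw [h1, abs_div, abs_of_pos hnk]
      calc |t + (m : ℝ) - (n k : ℝ) * x| / (n k) ≤ (1 / 2) / (n k) :=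
            by gcongr
        _ < r := by
          rw [div_lt_iff₀ hnk]
          have h1r : 1 / r < (n k : ℝ) := hk
          have : 1 < (n k : ℝ) * r := by
            rw [div_lt_iff₀ hr] at h1r
            linarith
          linarith
    · have : (n k : ℝ) * α = t + m := by rw [hα]; field_simp
      rw [this]
      have : ((t + (m : ℝ) : ℝ) : AddCircle (1 : ℝ)) = (t : AddCircle (1 : ℝ)) := by
        rw [AddCircle.coe_add, add_eq_left, AddCircle.coe_eq_zero_iff]
        exact ⟨m, by simp⟩
      rw [this]; exact hu
  have hd := dense_iInter_of_isOpen hopen hdense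
  obtain ⟨α, hα⟩ := hd.nonempty
  refine ⟨α, fun s => ?_⟩
  have hdr : DenseRange fun k : ℕ => (((n k : ℝ) * α : ℝ) : AddCircle (1 : ℝ)) := by
    rw [DenseRange, hB.dense_iff]
    intro o ho hne
    obtain ⟨k, hk⟩ := Set.mem_iInter.1 hα ⟨o, ho, hne⟩
    exact ⟨_, hk, Set.mem_range_self k⟩
  have hsurj : Function.Surjective (fun y : AddCircle (1 : ℝ) => s + y) :=
    fun y => ⟨y - s, by simp⟩
  exact hsurj.denseRange.comp hdr (continuous_const.add continuous_id)
end

section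
/- Let E and B be compact metric spaces, p : E → B a continuous surjection, f : B → B a continuous minimal map, and F : E → E a continuous map with p ∘ F = f ∘ p. Let M be a minimal set of F with p(M) = B, let H be the homeo-part of (B, f), and suppose that the fibre M ∩ p⁻¹(z) is finite for some z ∈ H. Then N := min{card(M ∩ p⁻¹(x)) : x ∈ H} is a positive integer and there is a residual set R ⊆ B such that card(M ∩ p⁻¹(b)) = N for every b ∈ R. -/
set_option linter.unusedSectionVars false
set_option linter.unusedVariables false
set_option maxHeartbeats 1000000

open Set Topology

/-- The homeo-part of a dynamical system `(X, f)`: the set of points `x₀` whose full orbit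
`{y | ∃ i j ≥ 0, f^[i] y = f^[j] x₀}` has the form `{…, x₋₁, x₀, x₁, …}` for a two-sided
sequence with `f(xₙ) = xₙ₊₁`. -/
def homeoPart {X : Type*} (f : X → X) : Set X :=
  {x₀ | ∃ u : ℤ → X, u 0 = x₀ ∧ (∀ n : ℤ, f (u n) = u (n + 1)) ∧
    {y | ∃ i j : ℕ, f^[i] y = f^[j] x₀} = Set.range u}

section Aux
variable {B : Type*} [MetricSpace B] [CompactSpace B] {f : B → B}

lemma minimal_surjective [Nonempty B] (hf : Continuous f)
    (hmin : ∀ b : B, Dense (Set.range fun n => f^[n] b)) : Function.Surjective f := by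
  have b : B := Classical.arbitrary B
  have hcl : IsClosed (Set.range f) := (isCompact_range hf).isClosed
  have hsub : (Set.range fun n => f^[n] (f b)) ⊆ Set.range f := by
    rintro y ⟨n, rfl⟩
    exact ⟨f^[n] b, ((Function.iterate_succ_apply' f n b).symm.trans
      (Function.iterate_succ_apply f n b))⟩
  have hd : Dense (Set.range f) := (hmin (f b)).mono hsub
  rw [← Set.range_eq_univ, ← hcl.closure_eq, hd.closure_eq]

lemma minimal_irred [Nonempty B] (hf : Continuous f)
    (hmin : ∀ b : B, Dense (Set.range fun n => f^[n] b))
    (K : Set B) (hK : IsClosed K) (himg : f '' K = univ) : K = univ := by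
  by_contra hne
  have hU : (Kᶜ).Nonempty := by
    rw [nonempty_compl]; exact hne
  have hUo : IsOpen Kᶜ := hK.isOpen_compl
  have hcov : (univ : Set B) ⊆ ⋃ n : ℕ, f^[n] ⁻¹' Kᶜ := by
    intro b _
    obtain ⟨y, ⟨n, rfl⟩, hyU⟩ := (hmin b).exists_mem_open hUo hU
    exact mem_iUnion.mpr ⟨n, hyU⟩
  obtain ⟨t, ht⟩ := isCompact_univ.elim_finite_subcover (fun n : ℕ => f^[n] ⁻¹' Kᶜ)
    (fun n => hUo.preimage (hf.iterate n)) hcov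
  have hpre : ∀ y : B, ∃ w, w ∈ K ∧ f w = y := by
    intro y
    have hy : y ∈ f '' K := by rw [himg]; trivial
    obtain ⟨w, hwK, hwy⟩ := hy
    exact ⟨w, hwK, hwy⟩
  choose pre hpreK hpref using hpre
  set c : ℕ → B := fun k => pre^[k] (Classical.arbitrary B) with hc
  have hcK : ∀ k, 0 < k → c k ∈ K := by
    intro k hk
    match k, hk with
    | (m+1), _ =>
      have : c (m+1) = pre (c m) := Function.iterate_succ_apply' pre m _
      rw [this]; exact hpreK _
  have hstep : ∀ (n k : ℕ), f^[n] (c (k+n)) = c k := by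
    intro n
    induction n with
    | zero => intro k; simp
    | succ n ih =>
      intro k
      have h1 : c (k+n+1) = pre (c (k+n)) := Function.iterate_succ_apply' pre _ _
      have h2 : f^[n+1] (c (k+n+1)) = f^[n] (f (c (k+n+1))) := Function.iterate_succ_apply f _ _
      rw [show k + (n+1) = k+n+1 by omega, h2, h1, hpref, ih]
  set Nb := t.sup id with hNb
  have hmem : c (Nb + 1) ∈ ⋃ n ∈ t, f^[n] ⁻¹' Kᶜ := ht (mem_univ _)
  obtain ⟨n, hnt, hcn⟩ := mem_iUnion₂.mp hmem
  have hnle : n ≤ Nb := Finset.le_sup (f := id) hnt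
  have heq : f^[n] (c (Nb + 1 - n + n)) = c (Nb + 1 - n) := hstep n _
  rw [show Nb + 1 - n + n = Nb + 1 by omega] at heq
  have hcn' : f^[n] (c (Nb + 1)) ∈ Kᶜ := hcn
  rw [heq] at hcn'
  exact hcn' (hcK _ (by omega))

lemma minimal_semiopen [Nonempty B] (hf : Continuous f)
    (hmin : ∀ b : B, Dense (Set.range fun n => f^[n] b))
    (U : Set B) (hU : IsOpen U) (hUne : U.Nonempty) :
    ∃ V : Set B, IsOpen V ∧ V.Nonempty ∧ V ⊆ f '' U := by
  have hsurj := minimal_surjective hf hmin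
  have hKcl : IsClosed (f '' Uᶜ) := ((hU.isClosed_compl).isCompact.image hf).isClosed
  have hne2 : (f '' Uᶜ) ≠ univ := by
    intro h
    have : Uᶜ = univ := minimal_irred hf hmin _ hU.isClosed_compl h
    rw [compl_univ_iff] at this
    exact hUne.ne_empty this
  refine ⟨(f '' Uᶜ)ᶜ, hKcl.isOpen_compl, nonempty_compl.mpr hne2, ?_⟩
  intro v hv
  obtain ⟨w, rfl⟩ := hsurj v
  rcases em (w ∈ U) with h | h
  · exact ⟨w, h, rfl⟩
  · exact absurd ⟨w, h, rfl⟩ hv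

lemma minimal_semiopen_iter [Nonempty B] (hf : Continuous f)
    (hmin : ∀ b : B, Dense (Set.range fun n => f^[n] b)) (j : ℕ)
    (U : Set B) (hU : IsOpen U) (hUne : U.Nonempty) :
    ∃ V : Set B, IsOpen V ∧ V.Nonempty ∧ V ⊆ f^[j] '' U := by
  induction j with
  | zero => exact ⟨U, hU, hUne, by simp⟩
  | succ j ih =>
    obtain ⟨V, hVo, hVne, hVsub⟩ := ih
    obtain ⟨W, hWo, hWne, hWsub⟩ := minimal_semiopen hf hmin V hVo hVne
    refine ⟨W, hWo, hWne, ?_⟩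
    refine hWsub.trans ?_
    rw [Function.iterate_succ']
    rw [Set.image_comp]
    exact Set.image_mono hVsub

lemma injective_of_periodic [Nonempty B] (hf : Continuous f)
    (hmin : ∀ b : B, Dense (Set.range fun n => f^[n] b))
    (hper : ∃ (b : B) (n : ℕ), 0 < n ∧ f^[n] b = b) : Function.Injective f := by
  obtain ⟨b, n, hn, hbn⟩ := hper
  have hq : ∀ q : ℕ, f^[n * q] b = b := by
    intro q
    induction q with
    | zero => simp
    | succ q ih =>
      rw [show n * (q+1) = n*q + n by ring, Function.iterate_add_apply, hbn, ih]
  have hmod : ∀ m : ℕ, f^[m] b = f^[m % n] b := by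
    intro m
    conv_lhs => rw [← Nat.mod_add_div m n]
    rw [Function.iterate_add_apply, hq]
  have hsub : (Set.range fun m => f^[m] b) ⊆ (fun k => f^[k] b) '' (Set.Iio n) := by
    rintro y ⟨m, rfl⟩
    exact ⟨m % n, Nat.mod_lt _ hn, (hmod m).symm⟩
  have himfin : ((fun k => f^[k] b) '' (Set.Iio n)).Finite := (Set.finite_Iio n).image _
  have huniv : (univ : Set B) ⊆ (fun k => f^[k] b) '' (Set.Iio n) := by
    have h1 : (univ : Set B) ⊆ closure (Set.range fun m => f^[m] b) := by
      rw [(hmin b).closure_eq]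
    refine h1.trans ?_
    rw [← himfin.isClosed.closure_eq]
    exact closure_mono hsub
  have : (univ : Set B).Finite := himfin.subset huniv
  haveI : Finite B := Set.finite_univ_iff.mp this
  exact Finite.injective_iff_surjective.mpr (minimal_surjective hf hmin)

end Aux


section Aux2
variable {B : Type*} [MetricSpace B] [CompactSpace B] {f : B → B}

lemma line_iterate {u : ℤ → B} (hu : ∀ n : ℤ, f (u n) = u (n + 1)) (n : ℤ) (k : ℕ) :
    f^[k] (u n) = u (n + k) := by
  induction k with
  | zero => simp
  | succ k ih =>
      rw [Function.iterate_succ_apply', ih, hu]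
      congr 1
      push_cast
      ring

lemma line_injective {u : ℤ → B} (hu : ∀ n : ℤ, f (u n) = u (n + 1))
    (hnp : ∀ (b : B) (n : ℕ), 0 < n → f^[n] b ≠ b) : Function.Injective u := by
  have key : ∀ a b : ℤ, a < b → u a = u b → False := by
    intro a b hab heq
    have h1 : f^[(b - a).toNat] (u a) = u b := by
      rw [line_iterate hu, Int.toNat_of_nonneg (by omega)]
      congr 1
      omega
    rw [heq] at h1
    exact hnp (u b) (b - a).toNat (by omega) h1
  intro a b hab
  rcases lt_trichotomy a b with h | h | h
  · exact absurd (key a b h hab) not_false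
  · exact h
  · exact absurd (key b a h hab.symm) not_false

lemma GO_subsingleton (hdi : Function.Injective f ∨ ∀ (b : B) (n : ℕ), 0 < n → f^[n] b ≠ b)
    {x : B} (hx : x ∈ homeoPart f) (y : B) (hy : ∃ i j : ℕ, f^[i] y = f^[j] x) :
    (f ⁻¹' {y}).Subsingleton := by
  obtain ⟨u, hu0, hus, hGO⟩ := hx
  intro w hw w' hw'
  have hwy : f w = y := hw
  have hw'y : f w' = y := hw'
  rcases hdi with hinj | hnp
  · exact hinj (hwy.trans hw'y.symm)
  · have huinj := line_injective hus hnp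
    obtain ⟨i, j, hij⟩ := hy
    have hwGO : w ∈ {y | ∃ i j : ℕ, f^[i] y = f^[j] x} :=
      ⟨i+1, j, by rw [Function.iterate_succ_apply, hwy]; exact hij⟩
    have hw'GO : w' ∈ {y | ∃ i j : ℕ, f^[i] y = f^[j] x} :=
      ⟨i+1, j, by rw [Function.iterate_succ_apply, hw'y]; exact hij⟩
    rw [hGO] at hwGO hw'GO
    obtain ⟨a, rfl⟩ := hwGO
    obtain ⟨b, rfl⟩ := hw'GO
    have : u (a + 1) = u (b + 1) := by
      rw [← hus, ← hus, hwy, hw'y]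
    have : a + 1 = b + 1 := huinj this
    have : a = b := by omega
    rw [this]

lemma S_dense [Nonempty B] (hf : Continuous f)
    (hmin : ∀ b : B, Dense (Set.range fun n => f^[n] b))
    (hdi : Function.Injective f ∨ ∀ (b : B) (n : ℕ), 0 < n → f^[n] b ≠ b)
    {z : B} (hz : z ∈ homeoPart f) :
    Dense {y : B | (f ⁻¹' {y}).Subsingleton} := by
  have hsub : (Set.range fun n => f^[n] (f z)) ⊆ {y : B | (f ⁻¹' {y}).Subsingleton} := by
    rintro y ⟨n, rfl⟩
    refine GO_subsingleton hdi hz _ ⟨0, n+1, ?_⟩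
    rw [Function.iterate_zero_apply, Function.iterate_succ_apply]
  exact (hmin (f z)).mono hsub

lemma S_compl_meagre (hf : Continuous f)
    (hSd : Dense {y : B | (f ⁻¹' {y}).Subsingleton}) :
    ∃ C : ℕ → Set B, (∀ n, IsClosed (C n)) ∧ (∀ n, interior (C n) = ∅) ∧
      {y : B | (f ⁻¹' {y}).Subsingleton}ᶜ ⊆ ⋃ n, C n := by
  set S := {y : B | (f ⁻¹' {y}).Subsingleton} with hS
  set C : ℕ → Set B := fun n =>
    (fun q : B × B => f q.1) '' {q : B × B | f q.1 = f q.2 ∧ 1/(n+1 : ℝ) ≤ dist q.1 q.2} with hC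
  have hDcl : ∀ n : ℕ, IsClosed {q : B × B | f q.1 = f q.2 ∧ 1/(n+1 : ℝ) ≤ dist q.1 q.2} :=
    fun n => (isClosed_eq (hf.comp continuous_fst) (hf.comp continuous_snd)).inter
      (isClosed_le continuous_const continuous_dist)
  have hCcl : ∀ n, IsClosed (C n) :=
    fun n => (((hDcl n).isCompact).image (hf.comp continuous_fst)).isClosed
  have hCS : ∀ n, C n ⊆ Sᶜ := by
    rintro n y ⟨⟨w, w'⟩, ⟨heq, hd⟩, rfl⟩
    intro hy
    have h1 : w ∈ f ⁻¹' {f w} := rfl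
    have h2 : w' ∈ f ⁻¹' {f w} := by
      simp only [mem_preimage, mem_singleton_iff]
      exact heq.symm
    have : w = w' := hy h1 h2
    rw [this] at hd
    simp only [dist_self] at hd
    have : (0:ℝ) < 1/(n+1:ℝ) := by positivity
    linarith
  refine ⟨C, hCcl, ?_, ?_⟩
  · intro n
    have h1 : interior (C n) ⊆ interior Sᶜ := interior_mono (hCS n)
    have h2 : interior Sᶜ = ∅ := by
      rw [interior_compl, hSd.closure_eq, compl_univ]
    exact subset_empty_iff.mp (h1.trans h2.subset)
  · intro y hy
    simp only [mem_compl_iff, hS, mem_setOf_eq, Set.Subsingleton] at hy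
    push_neg at hy
    obtain ⟨w, hw, w', hw', hne⟩ := hy
    have hwy : f w = y := hw
    have hw'y : f w' = y := hw'
    have hd : 0 < dist w w' := dist_pos.mpr hne
    obtain ⟨n, hn⟩ := exists_nat_one_div_lt hd
    refine mem_iUnion.mpr ⟨n, ⟨(w, w'), ⟨by rw [hwy, hw'y], le_of_lt hn⟩, hwy⟩⟩

lemma image_nwd [Nonempty B] (hf : Continuous f)
    (hsurj : Function.Surjective f)
    (hsemi : ∀ U : Set B, IsOpen U → U.Nonempty →
      ∃ V : Set B, IsOpen V ∧ V.Nonempty ∧ V ⊆ f '' U)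
    (hSd : Dense {y : B | (f ⁻¹' {y}).Subsingleton})
    {K : Set B} (hK : IsClosed K) (hKnd : interior K = ∅) :
    IsClosed (f '' K) ∧ interior (f '' K) = ∅ := by
  refine ⟨(hK.isCompact.image hf).isClosed, ?_⟩
  by_contra hne
  have hVne : (interior (f '' K)).Nonempty := nonempty_iff_ne_empty.mpr hne
  have hWo : IsOpen (f ⁻¹' interior (f '' K)) := isOpen_interior.preimage hf
  have hWne : (f ⁻¹' interior (f '' K)).Nonempty := by
    obtain ⟨v, hv⟩ := hVne
    obtain ⟨w, hwK, rfl⟩ := interior_subset hv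
    exact ⟨w, hv⟩
  have hWK : (f ⁻¹' interior (f '' K) \ K).Nonempty := by
    rw [diff_nonempty]
    intro hsub
    have h1 : f ⁻¹' interior (f '' K) ⊆ interior K := interior_maximal hsub hWo
    rw [hKnd, subset_empty_iff] at h1
    exact hWne.ne_empty h1
  obtain ⟨O, hOo, hOne, hOsub⟩ := hsemi _ (hWo.sdiff hK) hWK
  obtain ⟨y, hyS, hyO⟩ := hSd.exists_mem_open hOo hOne
  obtain ⟨w', hw', rfl⟩ := hOsub hyO
  have h2 : f w' ∈ f '' K := interior_subset hw'.1
  obtain ⟨a, haK, ha⟩ := h2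
  have : a = w' := hyS (by exact ha : a ∈ f ⁻¹' {f w'}) rfl
  rw [this] at haK
  exact hw'.2 haK

lemma preimage_nwd {g : B → B} (hsemi : ∀ U : Set B, IsOpen U → U.Nonempty →
      ∃ V : Set B, IsOpen V ∧ V.Nonempty ∧ V ⊆ g '' U)
    {K : Set B} (hKnd : interior K = ∅) : interior (g ⁻¹' K) = ∅ := by
  by_contra h
  have hne : (interior (g ⁻¹' K)).Nonempty := nonempty_iff_ne_empty.mpr h
  obtain ⟨V, hVo, hVne, hVsub⟩ := hsemi _ isOpen_interior hne
  have h1 : V ⊆ K := hVsub.trans ((Set.image_mono (f := g) interior_subset).trans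
    (Set.image_preimage_subset g K))
  have h2 : V ⊆ interior K := interior_maximal h1 hVo
  rw [hKnd, subset_empty_iff] at h2
  exact hVne.ne_empty h2

lemma homeoPart_shift {x : B} (hx : x ∈ homeoPart f) : f x ∈ homeoPart f := by
  obtain ⟨u, hu0, hus, hGO⟩ := hx
  have hu1 : u 1 = f x := by
    have h := hus 0
    rw [hu0] at h
    simpa using h.symm
  refine ⟨fun n => u (n+1), by simpa using hu1, fun n => by rw [hus (n+1)], ?_⟩
  ext y
  simp only [mem_setOf_eq, Set.mem_range]
  constructor
  · rintro ⟨i, j, hij⟩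
    have h1 : f^[i] y = f^[j+1] x := by
      rw [hij, Function.iterate_succ_apply]
    have hyGO : y ∈ {y | ∃ i j : ℕ, f^[i] y = f^[j] x} := ⟨i, j+1, h1⟩
    rw [hGO] at hyGO
    obtain ⟨a, rfl⟩ := hyGO
    exact ⟨a - 1, by rw [show a - 1 + 1 = a by omega]⟩
  · rintro ⟨a, rfl⟩
    rcases le_or_gt a 0 with h | h
    · refine ⟨(-a).toNat, 0, ?_⟩
      rw [line_iterate hus, Function.iterate_zero_apply, ← hu1]
      congr 1
      omega
    · refine ⟨0, a.toNat, ?_⟩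
      rw [Function.iterate_zero_apply]
      have : f^[a.toNat] (f x) = f^[a.toNat] (u 1) := by rw [hu1]
      rw [this, line_iterate hus]
      congr 1
      omega

end Aux2


section Aux3
variable {B : Type*} [MetricSpace B] [CompactSpace B] {f : B → B}

lemma residual_subset_homeoPart [Nonempty B] (hf : Continuous f)
    (hmin : ∀ b : B, Dense (Set.range fun n => f^[n] b))
    {z : B} (hz : z ∈ homeoPart f) :
    ∃ T : Set B, T ∈ residual B ∧ T ⊆ homeoPart f := by
  classical
  have hdi : Function.Injective f ∨ ∀ (b : B) (n : ℕ), 0 < n → f^[n] b ≠ b := by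
    by_cases hper : ∃ (b : B) (n : ℕ), 0 < n ∧ f^[n] b = b
    · exact Or.inl (injective_of_periodic hf hmin hper)
    · push_neg at hper
      exact Or.inr fun b n hn => hper b n hn
  have hsurj := minimal_surjective hf hmin
  have hsemi := minimal_semiopen hf hmin
  have hSd := S_dense hf hmin hdi hz
  obtain ⟨C, hCcl, hCnd, hCcov⟩ := S_compl_meagre hf hSd
  have hiter : ∀ (i n : ℕ), IsClosed (f^[i] '' C n) ∧ interior (f^[i] '' C n) = ∅ := by
    intro i n
    induction i with
    | zero => simpa using ⟨hCcl n, hCnd n⟩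
    | succ i ih =>
      have h1 : f^[i+1] '' C n = f '' (f^[i] '' C n) := by
        rw [Function.iterate_succ', Set.image_comp]
      rw [h1]
      exact image_nwd hf hsurj hsemi hSd ih.1 ih.2
  set T : Set B := ⋂ (i : ℕ), ⋂ (j : ℕ), ⋂ (n : ℕ), (f^[j] ⁻¹' (f^[i] '' C n))ᶜ with hT
  have hTres : T ∈ residual B := by
    refine (countable_iInter_mem).mpr fun i => (countable_iInter_mem).mpr fun j =>
      (countable_iInter_mem).mpr fun n => ?_
    have hcl : IsClosed (f^[j] ⁻¹' (f^[i] '' C n)) := (hiter i n).1.preimage (hf.iterate j)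
    have hnd : interior (f^[j] ⁻¹' (f^[i] '' C n)) = ∅ :=
      preimage_nwd (minimal_semiopen_iter hf hmin j) (hiter i n).2
    refine residual_of_dense_open hcl.isOpen_compl ?_
    rw [← interior_eq_empty_iff_dense_compl]
    exact hnd
  refine ⟨T, hTres, ?_⟩
  intro x hx
  have hSall : ∀ y : B, (∃ i j : ℕ, f^[i] y = f^[j] x) → (f ⁻¹' {y}).Subsingleton := by
    intro y ⟨i, j, hij⟩
    by_contra hy
    have hyC : y ∈ ⋃ n, C n := hCcov hy
    obtain ⟨n, hn⟩ := mem_iUnion.mp hyC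
    have h1 : f^[i] y ∈ f^[i] '' C n := ⟨y, hn, rfl⟩
    rw [hij] at h1
    have h2 : x ∈ (f^[j] ⁻¹' (f^[i] '' C n))ᶜ := by
      have := hx
      rw [hT] at this
      simp only [mem_iInter] at this
      exact this i j n
    exact h2 h1
  have hpreex : ∀ b : B, ∃ a : B, f a = b := hsurj
  choose pre hpre using hpreex
  have hfpre_iter : ∀ m : ℕ, f (pre^[m+1] x) = pre^[m] x := by
    intro m
    rw [Function.iterate_succ_apply', hpre]
  set u : ℤ → B := fun n => match n with
    | Int.ofNat k => f^[k] x
    | Int.negSucc k => pre^[k+1] x with hu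
  have hu0 : u 0 = x := rfl
  have hustep : ∀ n : ℤ, f (u n) = u (n + 1) := by
    intro n
    match n with
    | Int.ofNat k =>
      have h1 : (Int.ofNat k) + 1 = ((k+1 : ℕ) : ℤ) := by rw [Int.ofNat_eq_natCast]; push_cast; ring
      rw [h1]
      show f (f^[k] x) = f^[k+1] x
      exact (Function.iterate_succ_apply' f k x).symm
    | Int.negSucc 0 =>
      have h1 : Int.negSucc 0 + 1 = ((0:ℕ) : ℤ) := by decide
      rw [h1]
      show f (pre^[1] x) = f^[0] x
      simpa using hfpre_iter 0
    | Int.negSucc (m+1) =>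
      have h1 : Int.negSucc (m+1) + 1 = Int.negSucc m := by rw [Int.negSucc_eq, Int.negSucc_eq]; push_cast; ring
      rw [h1]
      show f (pre^[m+1+1] x) = pre^[m+1] x
      exact hfpre_iter (m+1)
  have hcancel : ∀ m : ℕ, f^[m] (pre^[m] x) = x := by
    intro m
    induction m with
    | zero => simp
    | succ m ih =>
      rw [Function.iterate_succ_apply f, Function.iterate_succ_apply' pre, hpre]
      exact ih
  have hRange : ∀ a : ℤ, ∃ i j : ℕ, f^[i] (u a) = f^[j] x := by
    intro a
    match a with
    | Int.ofNat k => exact ⟨0, k, rfl⟩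
    | Int.negSucc k => exact ⟨k+1, 0, by show f^[k+1] (pre^[k+1] x) = x; exact hcancel (k+1)⟩
  refine ⟨u, hu0, hustep, ?_⟩
  ext y
  simp only [mem_setOf_eq, Set.mem_range]
  constructor
  · rintro ⟨i, j, hij⟩
    have main : ∀ (i : ℕ) (y : B), f^[i] y = f^[j] x → ∃ a : ℤ, u a = y := by
      intro i
      induction i with
      | zero =>
        intro y hy
        rw [Function.iterate_zero_apply] at hy
        exact ⟨Int.ofNat j, hy.symm⟩
      | succ i ih =>
        intro y hy
        rw [Function.iterate_succ_apply] at hy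
        obtain ⟨a, ha⟩ := ih (f y) hy
        refine ⟨a - 1, ?_⟩
        have h1 : f (u (a-1)) = u a := by
          rw [hustep (a-1)]
          congr 1
          ring
        have hsub := hSall (u a) (hRange a)
        have hy1 : y ∈ f ⁻¹' {u a} := by
          simp only [mem_preimage, mem_singleton_iff]
          exact ha.symm
        have hy2 : u (a-1) ∈ f ⁻¹' {u a} := by
          simp only [mem_preimage, mem_singleton_iff]
          exact h1
        exact hsub hy2 hy1
    exact main i y hij
  · rintro ⟨a, rfl⟩
    exact hRange a

end Aux3


/-- If some fibre of a minimal set `M` (with full projection) over a point of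
the homeo-part `H` of the minimal base is finite, then `N = min {card M_x : x ∈ H}` is a
positive integer and the fibre of `M` over every point of some residual subset of the base
has cardinality exactly `N`. -/
theorem typical_fibre_cardinality_eq_min_over_homeoPart
    {E B : Type*} [MetricSpace E] [CompactSpace E] [MetricSpace B] [CompactSpace B]
    (p : E → B) (hp : Continuous p) (hps : Function.Surjective p)
    (f : B → B) (hf : Continuous f)
    (hfmin : ∀ b : B, Dense (Set.range fun n => f^[n] b))
    (F : E → E) (hF : Continuous F) (hcomm : p ∘ F = f ∘ p)
    (M : Set E) (hMne : M.Nonempty) (hMcl : IsClosed M)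
    (hMinv : Set.MapsTo F M M)
    (hMmin : ∀ x ∈ M, M ⊆ closure (Set.range fun n => F^[n] x))
    (hproj : p '' M = Set.univ)
    (z : B) (hz : z ∈ homeoPart f) (hfin : (M ∩ p ⁻¹' {z}).Finite) :
    ∃ N : ℕ, 0 < N ∧ (N : ℕ∞) = ⨅ x ∈ homeoPart f, (M ∩ p ⁻¹' {x}).encard ∧
      ∃ R ∈ residual B, ∀ b ∈ R, (M ∩ p ⁻¹' {b}).encard = N := by
  classical
  haveI : Nonempty B := ⟨z⟩
  have hdi : Function.Injective f ∨ ∀ (b : B) (n : ℕ), 0 < n → f^[n] b ≠ b := by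
    by_cases hper : ∃ (b : B) (n : ℕ), 0 < n ∧ f^[n] b = b
    · exact Or.inl (injective_of_periodic hf hfmin hper)
    · push_neg at hper
      exact Or.inr fun b n hn => hper b n hn
  -- fibres are nonempty
  have hfib_ne : ∀ b : B, (M ∩ p ⁻¹' {b}).Nonempty := by
    intro b
    have hb : b ∈ p '' M := by rw [hproj]; trivial
    obtain ⟨e, heM, hpe⟩ := hb
    exact ⟨e, heM, by simp [hpe]⟩
  -- F maps M onto M
  have hFM : F '' M = M := by
    refine subset_antisymm hMinv.image_subset ?_
    obtain ⟨x₀, hx₀⟩ := hMne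
    have hcl : IsClosed (F '' M) := (hMcl.isCompact.image hF).isClosed
    refine (hMmin (F x₀) (hMinv hx₀)).trans ?_
    rw [← hcl.closure_eq]
    refine closure_mono ?_
    rintro e ⟨n, rfl⟩
    refine ⟨F^[n] x₀, hMinv.iterate n hx₀, ?_⟩
    exact (Function.iterate_succ_apply' F n x₀).symm.trans (Function.iterate_succ_apply F n x₀)
  have hpF : ∀ e, p (F e) = f (p e) := fun e => congrFun hcomm e
  -- fibre mapping lemma over homeo-part points
  have hfiber : ∀ x ∈ homeoPart f, M ∩ p ⁻¹' {f x} = F '' (M ∩ p ⁻¹' {x}) := by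
    intro x hx
    apply subset_antisymm
    · rintro e ⟨heM, hpe⟩
      have hpe' : p e = f x := hpe
      have he' : e ∈ F '' M := by rw [hFM]; exact heM
      obtain ⟨e', he'M, rfl⟩ := he'
      have h1 : f (p e') = f x := by rw [← hpF]; exact hpe'
      have hss := GO_subsingleton hdi hx (f x) ⟨0, 1, by simp⟩
      have h2 : p e' = x := hss (show p e' ∈ f ⁻¹' {f x} from h1) (show x ∈ f ⁻¹' {f x} from rfl)
      exact ⟨e', ⟨he'M, by simp [h2]⟩, rfl⟩
    · rintro e ⟨e', ⟨he'M, hpe'⟩, rfl⟩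
      have h2 : p e' = x := hpe'
      refine ⟨hMinv he'M, ?_⟩
      simp only [mem_preimage, mem_singleton_iff, hpF, h2]
  have hmono : ∀ x ∈ homeoPart f,
      (M ∩ p ⁻¹' {f x}).encard ≤ (M ∩ p ⁻¹' {x}).encard := by
    intro x hx
    rw [hfiber x hx]
    exact Set.encard_image_le _ _
  -- N : the minimum of the fibre cardinalities over the homeo-part
  set 𝒩 : Set ℕ := {n : ℕ | ∃ x ∈ homeoPart f, (M ∩ p ⁻¹' {x}).encard = (n : ℕ∞)} with h𝒩
  have h𝒩ne : 𝒩.Nonempty := ⟨hfin.toFinset.card, z, hz, hfin.encard_eq_coe_toFinset_card⟩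
  set N := sInf 𝒩 with hNdef
  obtain ⟨x₀, hx₀H, hx₀g⟩ := Nat.sInf_mem h𝒩ne
  have hNle : ∀ x ∈ homeoPart f, (N : ℕ∞) ≤ (M ∩ p ⁻¹' {x}).encard := by
    intro x hx
    rcases eq_top_or_lt_top ((M ∩ p ⁻¹' {x}).encard) with h | h
    · rw [h]; exact le_top
    · obtain ⟨m, hm⟩ := WithTop.ne_top_iff_exists.mp h.ne
      rw [← hm, hNdef]
      have hmem : m ∈ 𝒩 := ⟨x, hx, hm.symm⟩
      exact Nat.cast_le.mpr (Nat.sInf_le hmem)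
  have hN1 : 1 ≤ N := by
    have h1e : (1:ℕ∞) ≤ (M ∩ p ⁻¹' {x₀}).encard :=
      Set.one_le_encard_iff_nonempty.mpr (hfib_ne x₀)
    rw [hx₀g] at h1e
    exact_mod_cast h1e
  -- the orbit of x₀ has constant fibre cardinality N
  have horb : ∀ n : ℕ, f^[n] x₀ ∈ homeoPart f ∧
      (M ∩ p ⁻¹' {f^[n] x₀}).encard = (N : ℕ∞) := by
    intro n
    induction n with
    | zero => exact ⟨hx₀H, by simpa using hx₀g⟩
    | succ n ih =>
      have hH : f^[n+1] x₀ ∈ homeoPart f := by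
        rw [Function.iterate_succ_apply']
        exact homeoPart_shift ih.1
      refine ⟨hH, le_antisymm ?_ (hNle _ hH)⟩
      rw [Function.iterate_succ_apply']
      calc (M ∩ p ⁻¹' {f (f^[n] x₀)}).encard ≤ (M ∩ p ⁻¹' {f^[n] x₀}).encard :=
            hmono _ ih.1
        _ = (N : ℕ∞) := ih.2
  -- residual subset of the homeo-part
  obtain ⟨T, hTres, hTH⟩ := residual_subset_homeoPart hf hfmin hz
  -- open dense sets controlling the fibre cardinality from above
  set r : ℕ → ℝ := fun j => 1/((j:ℝ)+1) with hr
  have hrpos : ∀ j, 0 < r j := by intro j; positivity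
  set U : ℕ → Set B := fun j => {b | ∃ s : Finset E, s.card ≤ N ∧
    M ∩ p ⁻¹' {b} ⊆ ⋃ e ∈ s, Metric.ball e (r j)} with hU
  have hUopen : ∀ j, IsOpen (U j) := by
    intro j
    refine isOpen_iff_mem_nhds.mpr ?_
    rintro b ⟨s, hscard, hscov⟩
    set G := ⋃ e ∈ s, Metric.ball e (r j) with hG
    have hGopen : IsOpen G := isOpen_biUnion fun e _ => Metric.isOpen_ball
    have hKcpt : IsCompact (M ∩ Gᶜ) := (hMcl.inter hGopen.isClosed_compl).isCompact
    have hclosed : IsClosed (p '' (M ∩ Gᶜ)) := (hKcpt.image hp).isClosed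
    have hbmem : b ∈ (p '' (M ∩ Gᶜ))ᶜ := by
      rintro ⟨e, ⟨heM, heG⟩, hpe⟩
      exact heG (hscov ⟨heM, by simp [hpe]⟩)
    refine Filter.mem_of_superset (hclosed.isOpen_compl.mem_nhds hbmem) ?_
    intro b' hb'
    refine ⟨s, hscard, ?_⟩
    rintro e ⟨heM, hpe⟩
    by_contra heG
    exact hb' ⟨e, ⟨heM, heG⟩, by simpa using hpe⟩
  have hUdense : ∀ j, Dense (U j) := by
    intro j
    have horbU : ∀ n : ℕ, f^[n] x₀ ∈ U j := by
      intro n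
      have hfin' : (M ∩ p ⁻¹' {f^[n] x₀}).Finite :=
        Set.finite_of_encard_eq_coe (horb n).2
      refine ⟨hfin'.toFinset, ?_, ?_⟩
      · have h1 := hfin'.encard_eq_coe_toFinset_card
        rw [(horb n).2] at h1
        have : N = hfin'.toFinset.card := by exact_mod_cast h1
        omega
      · intro e he
        rw [mem_iUnion₂]
        exact ⟨e, hfin'.mem_toFinset.mpr he, Metric.mem_ball_self (hrpos j)⟩
    exact (hfmin x₀).mono (by rintro y ⟨n, rfl⟩; exact horbU n)
  have hUres : (⋂ j, U j) ∈ residual B :=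
    countable_iInter_mem.mpr fun j => residual_of_dense_open (hUopen j) (hUdense j)
  refine ⟨N, by omega, ?_, (⋂ j, U j) ∩ T, Filter.inter_mem hUres hTres, ?_⟩
  · exact le_antisymm (le_iInf₂ hNle) ((iInf₂_le x₀ hx₀H).trans_eq hx₀g)
  · rintro b ⟨hbU, hbT⟩
    have h1 : (N:ℕ∞) ≤ (M ∩ p ⁻¹' {b}).encard := hNle b (hTH hbT)
    have h2 : (M ∩ p ⁻¹' {b}).encard ≤ (N:ℕ∞) := by
      by_contra h
      push_neg at h
      have h3 : ((N+1:ℕ) : ℕ∞) ≤ (M ∩ p ⁻¹' {b}).encard := by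
        push_cast
        exact (ENat.add_one_le_iff (by simp)).mpr h
      obtain ⟨t, hts, htcard⟩ := Set.exists_subset_encard_eq h3
      have htfin : t.Finite := Set.finite_of_encard_eq_coe htcard
      set t₀ := htfin.toFinset with ht₀
      have ht₀card : t₀.card = N+1 := by
        have h4 := htfin.encard_eq_coe_toFinset_card
        rw [htcard] at h4
        exact_mod_cast h4.symm
      have ht₀pairs : ∃ w ∈ t₀, ∃ w' ∈ t₀, w ≠ w' :=
        Finset.one_lt_card.mp (by omega)
      set P := (t₀ ×ˢ t₀).filter (fun q => q.1 ≠ q.2) with hP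
      have hPne : P.Nonempty := by
        obtain ⟨w, hw, w', hw', hne⟩ := ht₀pairs
        exact ⟨(w, w'), Finset.mem_filter.mpr ⟨Finset.mem_product.mpr ⟨hw, hw'⟩, hne⟩⟩
      set δ := P.inf' hPne (fun q => dist q.1 q.2) with hδ
      have hδpos : 0 < δ := by
        rw [hδ, Finset.lt_inf'_iff]
        rintro ⟨w, w'⟩ hq
        exact dist_pos.mpr (Finset.mem_filter.mp hq).2
      obtain ⟨j, hj⟩ := exists_nat_one_div_lt (by positivity : (0:ℝ) < δ/2)
      obtain ⟨s, hscard, hscov⟩ := mem_iInter.mp hbU j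
      have hmapsto : ∀ w ∈ t₀, ∃ e ∈ s, dist w e < r j := by
        intro w hw
        have hwfib : w ∈ M ∩ p ⁻¹' {b} := hts (htfin.mem_toFinset.mp hw)
        have h5 := hscov hwfib
        rw [mem_iUnion₂] at h5
        obtain ⟨e, hes, hwe⟩ := h5
        exact ⟨e, hes, by rwa [Metric.mem_ball] at hwe⟩
      choose! gch hgs hgd using hmapsto
      obtain ⟨w, hw, w', hw', hne, heq⟩ :=
        Finset.exists_ne_map_eq_of_card_lt_of_maps_to (by omega) hgs
      have hd1 : dist w w' < δ := by
        have t1 : dist w (gch w) < r j := hgd w hw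
        have t2 : dist w' (gch w') < r j := hgd w' hw'
        have t3 : dist (gch w) w' = dist w' (gch w') := by rw [heq, dist_comm]
        have t4 : dist w w' ≤ dist w (gch w) + dist (gch w) w' := dist_triangle _ _ _
        have t5 : r j < δ/2 := hj
        linarith
      have hmemP : (w, w') ∈ P :=
        Finset.mem_filter.mpr ⟨Finset.mem_product.mpr ⟨hw, hw'⟩, hne⟩
      have hd2 : δ ≤ dist w w' := Finset.inf'_le (fun q => dist q.1 q.2) hmemP
      linarith
    exact le_antisymm h2 h1
end

section
/- Let B be a compact metric space, S¹ = ℝ/ℤ the circle, and let M be a closed subset of B × S¹ that is nowhere dense in B × S¹. Then the set {b ∈ B : the fibre M_b = {y ∈ S¹ : (b, y) ∈ M} is totally disconnected} is residual in B; in other words, a typical fibre of M is totally disconnected. -/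
open Set Topology

private lemma interior_nonempty_of_isPreconnected_pair
    {C : Set (AddCircle (1 : ℝ))} (hC : IsPreconnected C) {a b : AddCircle (1 : ℝ)}
    (ha : a ∈ C) (hb : b ∈ C) (hab : a ≠ b) : (interior C).Nonempty := by
  haveI : Fact ((0 : ℝ) < 1) := ⟨one_pos⟩
  by_cases huniv : C = univ
  · refine ⟨a, ?_⟩
    rw [huniv, interior_univ]; trivial
  · obtain ⟨z, hz⟩ : ∃ z, z ∉ C := by
      by_contra h
      push_neg at h
      exact huniv (eq_univ_of_forall h)
    obtain ⟨z', rfl⟩ := QuotientAddGroup.mk_surjective z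
    set e := AddCircle.openPartialHomeomorphCoe (1 : ℝ) z' with he
    have hCt : C ⊆ e.target := by
      intro c hc
      simp only [he, AddCircle.openPartialHomeomorphCoe_target, mem_compl_iff,
        mem_singleton_iff]
      rintro rfl; exact hz hc
    have hcont : ContinuousOn e.symm C :=
      e.symm.continuousOn.mono (by rwa [e.symm_source])
    have hD : IsPreconnected (e.symm '' C) := hC.image _ hcont
    have hinj : a ≠ b → e.symm a ≠ e.symm b := by
      intro h heq
      exact h (e.symm.injOn (by rw [e.symm_source]; exact hCt ha)
        (by rw [e.symm_source]; exact hCt hb) heq)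
    have huv := hinj hab
    -- key subclaim: for u v in the image, the open interval maps into C
    have key : ∀ u v : ℝ, u ∈ e.symm '' C → v ∈ e.symm '' C → u < v →
        (interior C).Nonempty := by
      intro u v hu hv huv
      have hIcc : Icc u v ⊆ e.symm '' C := hD.Icc_subset hu hv
      have hsub : (fun x : ℝ => (x : AddCircle (1 : ℝ))) '' Ioo u v ⊆ C := by
        rintro _ ⟨s, hs, rfl⟩
        obtain ⟨c, hcC, hcs⟩ := hIcc (Ioo_subset_Icc_self hs)
        have : (↑(e.symm c) : AddCircle (1 : ℝ)) = c := e.right_inv (hCt hcC)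
        rw [hcs] at this
        rw [← this] at hcC
        exact hcC
      have hopen : IsOpen ((fun x : ℝ => (x : AddCircle (1 : ℝ))) '' Ioo u v) :=
        QuotientAddGroup.isOpenMap_coe _ isOpen_Ioo
      have hne : ((fun x : ℝ => (x : AddCircle (1 : ℝ))) '' Ioo u v).Nonempty :=
        (nonempty_Ioo.mpr huv).image _
      exact hne.mono (interior_maximal hsub hopen)
    rcases lt_or_gt_of_ne huv with h | h
    · exact key _ _ ⟨a, ha, rfl⟩ ⟨b, hb, rfl⟩ h
    · exact key _ _ ⟨b, hb, rfl⟩ ⟨a, ha, rfl⟩ h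

private lemma isTotallyDisconnected_of_interior_empty
    {s : Set (AddCircle (1 : ℝ))} (h : interior s = ∅) : IsTotallyDisconnected s := by
  intro t hts ht a ha b hb
  by_contra hab
  obtain ⟨x, hx⟩ := interior_nonempty_of_isPreconnected_pair ht ha hb hab
  have := interior_mono hts hx
  rw [h] at this
  exact this

/-- For a closed nowhere dense subset `M` of `B × S¹`, the set of `b ∈ B` over
which the fibre of `M` is totally disconnected is residual in `B`. -/
theorem typical_fibre_of_nowhere_dense_closed_set_totallyDisconnected
    {B : Type*} [MetricSpace B] [CompactSpace B]
    (M : Set (B × AddCircle (1 : ℝ))) (hMcl : IsClosed M) (hND : IsNowhereDense M) :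
    {b : B | IsTotallyDisconnected {y : AddCircle (1 : ℝ) | (b, y) ∈ M}} ∈ residual B := by
  haveI : Fact ((0 : ℝ) < 1) := ⟨one_pos⟩
  have hintM : interior M = ∅ := by
    rwa [IsNowhereDense, hMcl.closure_eq] at hND
  set S : ℚ → ℚ → Set B := fun q r =>
    {b : B | 0 < (r : ℝ) ∧
      ∀ y ∈ Metric.closedBall ((q : ℝ) : AddCircle (1 : ℝ)) (r : ℝ), (b, y) ∈ M} with hS
  -- each S q r is closed
  have hclosed : ∀ q r, IsClosed (S q r) := by
    intro q r
    have : S q r = {b : B | 0 < (r : ℝ)} ∩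
        ⋂ y ∈ Metric.closedBall ((q : ℝ) : AddCircle (1 : ℝ)) (r : ℝ),
          (fun b : B => (b, y)) ⁻¹' M := by
      ext b; simp [hS]
    rw [this]
    refine IsClosed.inter ?_ (isClosed_biInter fun y _ =>
      hMcl.preimage (continuous_id.prodMk continuous_const))
    by_cases h : 0 < (r : ℝ) <;> simp [h]
  -- each S q r has empty interior
  have hint : ∀ q r, interior (S q r) = ∅ := by
    intro q r
    by_contra h
    obtain ⟨b, hb⟩ := nonempty_iff_ne_empty.mpr h
    have hbS : b ∈ S q r := interior_subset hb
    have hr : 0 < (r : ℝ) := hbS.1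
    have hsub : interior (S q r) ×ˢ
        Metric.ball ((q : ℝ) : AddCircle (1 : ℝ)) (r : ℝ) ⊆ M := by
      rintro ⟨b', y⟩ ⟨hb', hy⟩
      exact (interior_subset hb').2 y (Metric.ball_subset_closedBall hy)
    have hsub' : interior (S q r) ×ˢ
        Metric.ball ((q : ℝ) : AddCircle (1 : ℝ)) (r : ℝ) ⊆ interior M :=
      interior_maximal hsub (isOpen_interior.prod Metric.isOpen_ball)
    have : (b, ((q : ℝ) : AddCircle (1 : ℝ))) ∈ interior M :=
      hsub' ⟨hb, Metric.mem_ball_self hr⟩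
    rw [hintM] at this
    exact this
  have hND' : ∀ q r, IsNowhereDense (S q r) := fun q r =>
    ((hclosed q r).isNowhereDense_iff).mpr (hint q r)
  -- the complement of the target set is covered by the S q r
  have hcover : {b : B | IsTotallyDisconnected {y : AddCircle (1:ℝ) | (b, y) ∈ M}}ᶜ ⊆
      ⋃₀ (range fun p : ℚ × ℚ => S p.1 p.2) := by
    intro b hb
    simp only [mem_compl_iff, mem_setOf_eq] at hb
    have hInt : (interior {y : AddCircle (1:ℝ) | (b, y) ∈ M}).Nonempty := by
      by_contra h
      exact hb (isTotallyDisconnected_of_interior_empty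
        (not_nonempty_iff_eq_empty.mp h))
    obtain ⟨y, hy⟩ := hInt
    obtain ⟨ε, hε, hball⟩ :=
      Metric.isOpen_iff.mp isOpen_interior y hy
    have hd : DenseRange (fun q : ℚ => ((q : ℝ) : AddCircle (1 : ℝ))) := by
      have h1 : DenseRange ((↑) : ℝ → AddCircle (1 : ℝ)) :=
        (QuotientAddGroup.mk_surjective).denseRange
      exact h1.comp Rat.denseRange_cast continuous_quotient_mk'
    obtain ⟨q, hq⟩ := hd.exists_dist_lt y (by positivity : (0:ℝ) < ε / 3)
    obtain ⟨r, hr0, hr⟩ := exists_rat_btwn (by positivity : (0:ℝ) < ε / 3)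
    refine ⟨S q r, ⟨(q, r), rfl⟩, ?_⟩
    have hr0' : 0 < (r : ℝ) := by exact_mod_cast hr0
    refine ⟨hr0', fun y' hy' => ?_⟩
    have hmem : y' ∈ Metric.ball y ε := by
      have h1 : dist y' ((q : ℝ) : AddCircle (1 : ℝ)) ≤ (r : ℝ) :=
        Metric.mem_closedBall.mp hy'
      have h2 : dist ((q : ℝ) : AddCircle (1 : ℝ)) y < ε / 3 := by
        rwa [dist_comm]
      calc dist y' y ≤ dist y' ((q : ℝ) : AddCircle (1 : ℝ)) +
            dist ((q : ℝ) : AddCircle (1 : ℝ)) y := dist_triangle _ _ _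
        _ < ε / 3 + ε / 3 := add_lt_add (lt_of_le_of_lt h1 hr) h2
        _ < ε := by linarith
    exact interior_subset (s := {y : AddCircle (1:ℝ) | (b, y) ∈ M}) (hball hmem)
  -- conclude
  have hmeagre : IsMeagre
      {b : B | IsTotallyDisconnected {y : AddCircle (1:ℝ) | (b, y) ∈ M}}ᶜ := by
    rw [isMeagre_iff_countable_union_isNowhereDense]
    refine ⟨range fun p : ℚ × ℚ => S p.1 p.2, ?_, countable_range _, hcover⟩
    rintro t ⟨⟨q, r⟩, rfl⟩
    exact hND' q r
  rw [IsMeagre, compl_compl] at hmeagre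
  exact hmeagre
end

section
/- Let X be a compact metric space and f : X → X a continuous minimal map. Then the homeo-part H of (X, f) is a dense Gδ subset of X. -/
open Set Topology

section Aux
variable {X : Type*} [MetricSpace X] [CompactSpace X] {f : X → X}

lemma my_surj (hf : Continuous f)
    (hmin : ∀ x : X, Dense (Set.range fun n => f^[n] x)) :
    Function.Surjective f := by
  rcases isEmpty_or_nonempty X with h | h
  · exact fun y => (h.false y).elim
  have x := Classical.arbitrary X
  have hsub : (Set.range fun n => f^[n] (f x)) ⊆ Set.range f := by
    rintro _ ⟨n, rfl⟩
    exact ⟨f^[n] x, ((Function.iterate_succ_apply' f n x).symm).trans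
      (Function.iterate_succ_apply f n x)⟩
  have hr : Set.range f = Set.univ := by
    have hd : Dense (Set.range f) := (hmin (f x)).mono hsub
    simpa [(isCompact_range hf).isClosed.closure_eq] using hd.closure_eq
  exact Set.range_eq_univ.mp hr

lemma my_irred (hf : Continuous f)
    (hmin : ∀ x : X, Dense (Set.range fun n => f^[n] x)) :
    ∀ A : Set X, IsClosed A → f '' A = Set.univ → A = Set.univ := by
  intro A hA hfA
  rcases isEmpty_or_nonempty X with h | h
  · exact Set.eq_univ_of_forall fun x => (h.false x).elim
  set S : Set (Set X) := {K | K.Nonempty ∧ IsClosed K ∧ K ⊆ A ∧ K ⊆ f '' K} with hS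
  have hAS : A ∈ S := by
    refine ⟨?_, hA, Set.Subset.rfl, ?_⟩
    · have : (f '' A).Nonempty := by rw [hfA]; exact Set.univ_nonempty
      exact this.of_image
    · intro a _; rw [hfA]; exact Set.mem_univ a
  have hzorn : ∀ c ⊆ S, IsChain (· ⊆ ·) c → c.Nonempty → ∃ lb ∈ S, ∀ s ∈ c, lb ⊆ s := by
    intro c hcS hchain hcne
    refine ⟨⋂₀ c, ?_, fun s hs => Set.sInter_subset_of_mem hs⟩
    haveI : Nonempty c := hcne.to_subtype
    have hdir : DirectedOn (· ⊇ ·) c := by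
      intro a ha b hb
      rcases hchain.total ha hb with h | h
      · exact ⟨a, ha, subset_rfl, h⟩
      · exact ⟨b, hb, h, subset_rfl⟩
    have hcl : ∀ K ∈ c, IsClosed K := fun K hK => (hcS hK).2.1
    have hne : ∀ K ∈ c, K.Nonempty := fun K hK => (hcS hK).1
    have hcomp : ∀ K ∈ c, IsCompact K := fun K hK => (hcl K hK).isCompact
    have hInt : (⋂₀ c).Nonempty :=
      IsCompact.nonempty_sInter_of_directed_nonempty_isCompact_isClosed hdir hne hcomp hcl
    refine ⟨hInt, isClosed_sInter hcl, ?_, ?_⟩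
    · obtain ⟨K0, hK0⟩ := hcne
      exact (Set.sInter_subset_of_mem hK0).trans (hcS hK0).2.2.1
    · intro x hx
      have h2 : (⋂ K : c, ((K : Set X) ∩ f ⁻¹' {x})).Nonempty := by
        apply IsCompact.nonempty_iInter_of_directed_nonempty_isCompact_isClosed
        · rintro ⟨K1, hK1⟩ ⟨K2, hK2⟩
          rcases hdir K1 hK1 K2 hK2 with ⟨K3, hK3, h31, h32⟩
          exact ⟨⟨K3, hK3⟩, Set.inter_subset_inter_left _ h31,
            Set.inter_subset_inter_left _ h32⟩
        · rintro ⟨K, hK⟩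
          obtain ⟨w, hwK, hw⟩ := (hcS hK).2.2.2 (hx K hK)
          exact ⟨w, hwK, hw⟩
        · rintro ⟨K, hK⟩
          exact ((hcl K hK).inter (isClosed_singleton.preimage hf)).isCompact
        · rintro ⟨K, hK⟩
          exact (hcl K hK).inter (isClosed_singleton.preimage hf)
      obtain ⟨w, hw⟩ := h2
      simp only [Set.mem_iInter, Set.mem_inter_iff, Set.mem_preimage,
        Set.mem_singleton_iff] at hw
      refine ⟨w, ?_, (hw ⟨_, hcne.choose_spec⟩).2⟩
      intro K hK
      exact (hw ⟨K, hK⟩).1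
  obtain ⟨K, hKA, hKmin⟩ := zorn_superset_nonempty S hzorn A hAS
  · have hKS : K ∈ S := hKmin.1
    obtain ⟨hKne, hKcl, hKsubA, hKsub⟩ := hKS
    -- K₁ = K ∩ f⁻¹ K is in S and ⊆ K, so equals K by minimality
    have hK1S : K ∩ f ⁻¹' K ∈ S := by
      refine ⟨?_, hKcl.inter (hKcl.preimage hf), Set.inter_subset_left.trans hKsubA, ?_⟩
      · obtain ⟨z, hz⟩ := hKne
        obtain ⟨w, hwK, hw⟩ := hKsub hz
        exact ⟨w, hwK, by rw [Set.mem_preimage, hw]; exact hz⟩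
      · rintro z ⟨hzK, _⟩
        obtain ⟨w, hwK, hw⟩ := hKsub hzK
        exact ⟨w, ⟨hwK, by rw [Set.mem_preimage, hw]; exact hzK⟩, hw⟩
    have hKsubK1 : K ⊆ K ∩ f ⁻¹' K := hKmin.2 hK1S Set.inter_subset_left
    have hinv : ∀ z ∈ K, f z ∈ K := fun z hz => (hKsubK1 hz).2
    -- K is closed, nonempty, forward invariant: so K = univ by minimality
    obtain ⟨z, hz⟩ := hKne
    have horb : ∀ n : ℕ, f^[n] z ∈ K := by
      intro n; induction n with
      | zero => exact hz
      | succ n ih => rw [Function.iterate_succ_apply']; exact hinv _ ih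
    have hKuniv : K = Set.univ := by
      apply Set.eq_univ_of_univ_subset
      have : closure (Set.range fun n => f^[n] z) ⊆ K := by
        apply closure_minimal _ hKcl
        rintro _ ⟨n, rfl⟩; exact horb n
      rwa [(hmin z).closure_eq] at this
    exact Set.eq_univ_of_univ_subset (hKuniv ▸ hKsubA)


lemma my_irred_iter (hf : Continuous f)
    (hmin : ∀ x : X, Dense (Set.range fun n => f^[n] x)) :
    ∀ n : ℕ, ∀ A : Set X, IsClosed A → f^[n] '' A = Set.univ → A = Set.univ := by
  intro n
  induction n with
  | zero => intro A _ h; simpa using h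
  | succ n ih =>
    intro A hA h
    have h1 : f '' (f^[n] '' A) = Set.univ := by
      rw [← Set.image_comp, ← Function.iterate_succ']; exact h
    have h2 : IsClosed (f^[n] '' A) :=
      (hA.isCompact.image (hf.iterate n)).isClosed
    exact ih A hA (my_irred hf hmin _ h2 h1)

lemma my_int_empty_image (hf : Continuous f)
    (hmin : ∀ x : X, Dense (Set.range fun n => f^[n] x)) (i : ℕ)
    {N : Set X} (hN : IsClosed N) (hNi : interior N = ∅) :
    interior (f^[i] '' N) = ∅ := by
  by_contra h
  obtain ⟨y, hy⟩ := Set.nonempty_iff_ne_empty.mpr h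
  set U := interior (f^[i] '' N) with hU
  have hUo : IsOpen U := isOpen_interior
  set A := N ∪ (f^[i] ⁻¹' U)ᶜ with hA
  have hAcl : IsClosed A := hN.union (isClosed_compl_iff.mpr (hUo.preimage (hf.iterate i)))
  have hAim : f^[i] '' A = Set.univ := by
    apply Set.eq_univ_of_forall
    intro z
    by_cases hz : z ∈ U
    · obtain ⟨w, hw, hwz⟩ := interior_subset hz
      exact ⟨w, Or.inl hw, hwz⟩
    · obtain ⟨w, hw⟩ := (my_surj hf hmin).iterate i z
      exact ⟨w, Or.inr (fun hwU => hz (by rwa [Set.mem_preimage, hw] at hwU)), hw⟩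
  have hAuniv : A = Set.univ := my_irred_iter hf hmin i A hAcl hAim
  have hsub : f^[i] ⁻¹' U ⊆ N := by
    intro w hw
    rcases (hAuniv ▸ Set.mem_univ w : w ∈ A) with h1 | h1
    · exact h1
    · exact absurd hw h1
  obtain ⟨w, hw⟩ := (my_surj hf hmin).iterate i y
  have : w ∈ interior N := by
    apply mem_interior.mpr
    exact ⟨f^[i] ⁻¹' U, hsub, hUo.preimage (hf.iterate i), by rwa [Set.mem_preimage, hw]⟩
  rw [hNi] at this
  exact this

lemma my_int_empty_preimage (hf : Continuous f)
    (hmin : ∀ x : X, Dense (Set.range fun n => f^[n] x)) (j : ℕ)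
    {N : Set X} (hN : IsClosed N) (hNi : interior N = ∅) :
    interior (f^[j] ⁻¹' N) = ∅ := by
  by_contra h
  obtain ⟨y, hy⟩ := Set.nonempty_iff_ne_empty.mpr h
  set U := interior (f^[j] ⁻¹' N) with hU
  set A := Uᶜ with hA
  have hAcl : IsClosed A := isClosed_compl_iff.mpr isOpen_interior
  have him : f^[j] '' A = Set.univ := by
    have hcl : IsClosed (f^[j] '' A) := (hAcl.isCompact.image (hf.iterate j)).isClosed
    have hsub : Nᶜ ⊆ f^[j] '' A := by
      intro z hz
      obtain ⟨w, hw⟩ := (my_surj hf hmin).iterate j z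
      refine ⟨w, fun hwU => hz ?_, hw⟩
      have : w ∈ f^[j] ⁻¹' N := interior_subset hwU
      rwa [Set.mem_preimage, hw] at this
    have hdense : Dense (Nᶜ) := interior_eq_empty_iff_dense_compl.mp hNi
    apply Set.eq_univ_of_univ_subset
    calc Set.univ = closure (Nᶜ) := hdense.closure_eq.symm
    _ ⊆ closure (f^[j] '' A) := closure_mono hsub
    _ = f^[j] '' A := hcl.closure_eq
  have : A = Set.univ := my_irred_iter hf hmin j A hAcl him
  have : y ∈ A := this ▸ Set.mem_univ y
  exact this hy

lemma my_D_closed (hf : Continuous f) (ε : ℝ) :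
    IsClosed {y : X | ∃ z₁ z₂, f z₁ = y ∧ f z₂ = y ∧ ε ≤ dist z₁ z₂} := by
  have : {y : X | ∃ z₁ z₂, f z₁ = y ∧ f z₂ = y ∧ ε ≤ dist z₁ z₂}
      = (fun p : X × X => f p.1) '' {p : X × X | f p.1 = f p.2 ∧ ε ≤ dist p.1 p.2} := by
    ext y
    constructor
    · rintro ⟨z₁, z₂, h1, h2, h3⟩
      exact ⟨(z₁, z₂), ⟨h1.trans h2.symm, h3⟩, h1⟩
    · rintro ⟨⟨z₁, z₂⟩, ⟨h1, h2⟩, h3⟩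
      exact ⟨z₁, z₂, h3, h1 ▸ h3, h2⟩
  rw [this]
  have hcp : IsCompact {p : X × X | f p.1 = f p.2 ∧ ε ≤ dist p.1 p.2} := by
    apply IsClosed.isCompact
    apply IsClosed.inter
    · exact isClosed_eq (hf.comp continuous_fst) (hf.comp continuous_snd)
    · exact isClosed_le continuous_const (continuous_dist)
  exact (hcp.image (hf.comp continuous_fst)).isClosed

lemma my_D_int_empty (hf : Continuous f)
    (hmin : ∀ x : X, Dense (Set.range fun n => f^[n] x))
    {ε : ℝ} (hε : 0 < ε) :
    interior {y : X | ∃ z₁ z₂, f z₁ = y ∧ f z₂ = y ∧ ε ≤ dist z₁ z₂} = ∅ := by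
  by_contra h
  obtain ⟨y, hy⟩ := Set.nonempty_iff_ne_empty.mpr h
  set D := {y : X | ∃ z₁ z₂, f z₁ = y ∧ f z₂ = y ∧ ε ≤ dist z₁ z₂} with hD
  set U := interior D with hU
  obtain ⟨v, hv⟩ := my_surj hf hmin y
  have hvU : v ∈ f ⁻¹' U := by rwa [Set.mem_preimage, hv]
  set V := Metric.ball v (ε/4) ∩ f ⁻¹' U with hV
  have hVo : IsOpen V := Metric.isOpen_ball.inter (isOpen_interior.preimage hf)
  have hvV : v ∈ V := ⟨Metric.mem_ball_self (by linarith), hvU⟩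
  have hAim : f '' Vᶜ = Set.univ := by
    apply Set.eq_univ_of_forall
    intro z
    by_cases hz : z ∈ U
    · obtain ⟨z₁, z₂, h1, h2, h3⟩ := interior_subset hz
      by_cases h1V : z₁ ∈ V
      · refine ⟨z₂, fun h2V => ?_, h2⟩
        have d1 : dist z₁ v < ε/4 := h1V.1
        have d2 : dist z₂ v < ε/4 := h2V.1
        have : dist z₁ z₂ < ε/2 := by
          calc dist z₁ z₂ ≤ dist z₁ v + dist z₂ v := dist_triangle_right _ _ _
          _ < ε/4 + ε/4 := by linarith
          _ = ε/2 := by ring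
        linarith
      · exact ⟨z₁, h1V, h1⟩
    · obtain ⟨w, hw⟩ := my_surj hf hmin z
      refine ⟨w, fun hwV => hz ?_, hw⟩
      have h2 := hwV.2
      rwa [Set.mem_preimage, hw] at h2
  have : Vᶜ = Set.univ :=
    my_irred hf hmin _ (isClosed_compl_iff.mpr hVo) hAim
  have : v ∈ Vᶜ := this ▸ Set.mem_univ v
  exact this hvV


def myInjSet (f : X → X) : Set X :=
  {x₀ | ∀ (i j : ℕ) (y : X), f^[i] y = f^[j] x₀ →
    ∀ z₁ z₂, f z₁ = y → f z₂ = y → z₁ = z₂}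

lemma my_injSet_props (hf : Continuous f)
    (hmin : ∀ x : X, Dense (Set.range fun n => f^[n] x)) :
    Dense (myInjSet f) ∧ IsGδ (myInjSet f) := by
  have hrepr : myInjSet f = ⋂ p : ℕ × ℕ × ℕ,
      (f^[p.2.1] ⁻¹' (f^[p.1] ''
        {y | ∃ z₁ z₂, f z₁ = y ∧ f z₂ = y ∧ 1/(p.2.2+1 : ℝ) ≤ dist z₁ z₂}))ᶜ := by
    ext x
    simp only [myInjSet, Set.mem_setOf_eq, Set.mem_iInter, Set.mem_compl_iff,
      Set.mem_preimage, Set.mem_image, not_exists, not_and]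
    constructor
    · rintro hx ⟨i, j, n⟩ y ⟨z₁, z₂, h1, h2, h3⟩ hyx
      have heq := hx i j y hyx z₁ z₂ h1 h2
      rw [heq, dist_self] at h3
      have hpos : 0 < 1/((n:ℝ)+1) := by positivity
      linarith
    · intro hx i j y hij z₁ z₂ h1 h2
      by_contra hne
      have hd : 0 < dist z₁ z₂ := dist_pos.mpr hne
      obtain ⟨n, hn⟩ := exists_nat_one_div_lt hd
      exact hx ⟨i, j, n⟩ y ⟨z₁, z₂, h1, h2, hn.le⟩ hij
  have hcl : ∀ p : ℕ × ℕ × ℕ, IsClosed (f^[p.2.1] ⁻¹' (f^[p.1] ''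
      {y | ∃ z₁ z₂, f z₁ = y ∧ f z₂ = y ∧ 1/(p.2.2+1 : ℝ) ≤ dist z₁ z₂})) := by
    rintro ⟨i, j, n⟩
    exact (((my_D_closed hf _).isCompact.image (hf.iterate i)).isClosed).preimage (hf.iterate j)
  have hint : ∀ p : ℕ × ℕ × ℕ, interior (f^[p.2.1] ⁻¹' (f^[p.1] ''
      {y | ∃ z₁ z₂, f z₁ = y ∧ f z₂ = y ∧ 1/(p.2.2+1 : ℝ) ≤ dist z₁ z₂})) = ∅ := by
    rintro ⟨i, j, n⟩
    have hpos : 0 < 1/((n:ℝ)+1) := by positivity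
    apply my_int_empty_preimage hf hmin j
      (((my_D_closed hf _).isCompact.image (hf.iterate i)).isClosed)
    exact my_int_empty_image hf hmin i (my_D_closed hf _) (my_D_int_empty hf hmin hpos)
  constructor
  · rw [hrepr]
    apply dense_iInter_of_isOpen
    · exact fun p => (hcl p).isOpen_compl
    · intro p
      exact interior_eq_empty_iff_dense_compl.mp (hint p)
  · rw [hrepr]
    exact IsGδ.iInter fun p => ((hcl p).isOpen_compl).isGδ

lemma my_iter_u (u : ℤ → X) (hstep : ∀ n : ℤ, f (u n) = u (n + 1)) :
    ∀ (k : ℕ) (m : ℤ), f^[k] (u m) = u (m + k) := by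
  intro k
  induction k with
  | zero => intro m; simp
  | succ k ih =>
    intro m
    rw [Function.iterate_succ_apply, hstep, ih]
    congr 1
    push_cast
    ring

lemma my_finite (hf : Continuous f)
    (hmin : ∀ x : X, Dense (Set.range fun n => f^[n] x))
    (u : ℤ → X) (hstep : ∀ n : ℤ, f (u n) = u (n + 1))
    {a b : ℤ} (hab : a < b) (huab : u a = u b) : Finite X := by
  set p := (b - a).toNat with hp
  have hp0 : 0 < p := by omega
  have hpa : a + (p : ℤ) = b := by omega
  have h1 := my_iter_u u hstep p a
  rw [huab, hpa] at h1
  have hper : Function.IsPeriodicPt f p (u b) := h1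
  have hsub : (Set.range fun k : ℕ => f^[k] (u b))
      ⊆ (fun k : ℕ => f^[k] (u b)) '' (Set.Iio p) := by
    rintro _ ⟨k, rfl⟩
    exact ⟨k % p, Nat.mod_lt _ hp0, hper.iterate_mod_apply k⟩
  have hfin : (Set.range fun k : ℕ => f^[k] (u b)).Finite :=
    ((Set.finite_Iio p).image _).subset hsub
  have huniv : (Set.univ : Set X) ⊆ Set.range fun k : ℕ => f^[k] (u b) := by
    have := (hmin (u b)).closure_eq
    rw [hfin.isClosed.closure_eq] at this
    rw [this]
  exact Set.finite_univ_iff.mp (Set.Finite.subset hfin huniv)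


lemma my_homeoPart_eq (hf : Continuous f)
    (hmin : ∀ x : X, Dense (Set.range fun n => f^[n] x)) :
    homeoPart f = myInjSet f := by
  apply Set.Subset.antisymm
  · rintro x₀ ⟨u, hu0, hstep, hset⟩ i j y hij z₁ z₂ h1 h2
    by_contra hne
    have hz₁ : z₁ ∈ {y | ∃ i j : ℕ, f^[i] y = f^[j] x₀} :=
      ⟨i + 1, j, by rw [Function.iterate_succ_apply, h1, hij]⟩
    have hz₂ : z₂ ∈ {y | ∃ i j : ℕ, f^[i] y = f^[j] x₀} :=
      ⟨i + 1, j, by rw [Function.iterate_succ_apply, h2, hij]⟩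
    rw [hset] at hz₁ hz₂
    obtain ⟨a, ha⟩ := hz₁
    obtain ⟨b, hb⟩ := hz₂
    have hne' : a ≠ b := fun h => hne (by rw [← ha, ← hb, h])
    have hfab : u (a + 1) = u (b + 1) := by
      rw [← hstep, ← hstep, ha, hb, h1, h2]
    haveI : Finite X := by
      rcases hne'.lt_or_gt with h | h
      · exact my_finite hf hmin u hstep (by omega : a + 1 < b + 1) hfab
      · exact my_finite hf hmin u hstep (by omega : b + 1 < a + 1) hfab.symm
    have hinj : Function.Injective f :=
      Finite.injective_iff_surjective.mpr (my_surj hf hmin)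
    exact hne (hinj (h1.trans h2.symm))
  · intro x₀ hx₀
    have hsurj := my_surj hf hmin
    set pre : X → X := fun y => (hsurj y).choose with hpre_def
    have hpre : ∀ y, f (pre y) = y := fun y => (hsurj y).choose_spec
    set u : ℤ → X := fun n => if 0 ≤ n then f^[n.toNat] x₀ else pre^[(-n).toNat] x₀ with hu
    have hu_pos : ∀ n : ℤ, 0 ≤ n → u n = f^[n.toNat] x₀ := by
      intro n hn; rw [hu]; exact if_pos hn
    have hu_neg : ∀ n : ℤ, ¬ 0 ≤ n → u n = pre^[(-n).toNat] x₀ := by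
      intro n hn; rw [hu]; exact if_neg hn
    have hu0 : u 0 = x₀ := by rw [hu_pos 0 le_rfl]; simp
    have hstep : ∀ n : ℤ, f (u n) = u (n + 1) := by
      intro n
      by_cases hn : 0 ≤ n
      · rw [hu_pos n hn, hu_pos (n+1) (by omega),
          ← Function.iterate_succ_apply' f n.toNat x₀]
        congr 1
        omega
      · have hm : (-n).toNat = (-(n+1)).toNat + 1 := by omega
        rw [hu_neg n hn, hm, Function.iterate_succ_apply' pre, hpre]
        by_cases hn1 : 0 ≤ n + 1
        · have hone : n + 1 = 0 := by omega
          rw [hone, hu0]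
          norm_num
        · rw [hu_neg (n+1) hn1]
    have hfp : ∀ (k : ℕ) (y : X), f^[k] (pre^[k] y) = y := by
      intro k
      induction k with
      | zero => intro y; simp
      | succ k ih =>
        intro y
        rw [Function.iterate_succ_apply pre, Function.iterate_succ_apply' f, ih, hpre]
    have hmem : ∀ n : ℤ, ∃ i j : ℕ, f^[i] (u n) = f^[j] x₀ := by
      intro n
      by_cases hn : 0 ≤ n
      · exact ⟨0, n.toNat, by rw [Function.iterate_zero_apply, hu_pos n hn]⟩
      · refine ⟨(-n).toNat, 0, ?_⟩
        rw [hu_neg n hn, hfp, Function.iterate_zero_apply]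
    refine ⟨u, hu0, hstep, ?_⟩
    have key : ∀ (i j : ℕ) (y : X), f^[i] y = f^[j] x₀ → ∃ n : ℤ, u n = y := by
      intro i
      induction i with
      | zero =>
        intro j y h
        refine ⟨(j : ℤ), ?_⟩
        rw [hu_pos (j : ℤ) (Int.natCast_nonneg j), Int.toNat_natCast]
        rw [Function.iterate_zero_apply] at h
        exact h.symm
      | succ i ih =>
        intro j y h
        rw [Function.iterate_succ_apply] at h
        obtain ⟨m, hm⟩ := ih j (f y) h
        obtain ⟨i', j', hij'⟩ := hmem m
        refine ⟨m - 1, hx₀ i' j' (u m) hij' (u (m-1)) y ?_ hm.symm⟩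
        rw [hstep (m-1)]
        congr 1
        omega
    ext y
    simp only [Set.mem_setOf_eq, Set.mem_range]
    constructor
    · rintro ⟨i, j, hij⟩
      obtain ⟨n, hn⟩ := key i j y hij
      exact ⟨n, hn⟩
    · rintro ⟨n, rfl⟩
      exact hmem n

end Aux

/-- The homeo-part of a continuous minimal map of a compact metric space is a
dense Gδ subset. -/
theorem homeoPart_dense_Gdelta
    {X : Type*} [MetricSpace X] [CompactSpace X]
    (f : X → X) (hf : Continuous f)
    (hmin : ∀ x : X, Dense (Set.range fun n => f^[n] x)) :
    Dense (homeoPart f) ∧ IsGδ (homeoPart f) := by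
  rw [my_homeoPart_eq hf hmin]
  exact my_injSet_props hf hmin
end

section
/- Let X be a compact metric space and f : X → X a continuous minimal map. Let (x_n)_{n∈ℤ} be a two-sided sequence in X with f(x_n) = x_{n+1} for every integer n, and set D = {x_n : n ∈ ℤ}. Suppose that some point of D has more than one f-preimage in X (equivalently, some point of D has an f-preimage in X \ D). Then every map g : D → D satisfying g(x_{n+1}) = x_n for all n ∈ ℤ fails to be continuous on D (with the subspace topology); in particular, if f restricted to D is a bijection onto D, its inverse map is not continuous. -/
open Set Topology

/-- Let `f` be a continuous minimal map of a compact metric space, and let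
`D = {xₙ : n ∈ ℤ}` be a full orbit (forward orbit plus one backward orbit). If some point of
`D` has more than one `f`-preimage in `X`, then no map `g : D → D` with `g(xₙ₊₁) = xₙ` for
all `n ∈ ℤ` is continuous. -/
theorem inverse_on_full_orbit_not_continuous
    {X : Type*} [MetricSpace X] [CompactSpace X]
    (f : X → X) (hf : Continuous f)
    (hmin : ∀ x : X, Dense (Set.range fun n => f^[n] x))
    (x : ℤ → X) (hx : ∀ n : ℤ, f (x n) = x (n + 1))
    (hpre : ∃ n : ℤ, ∃ a b : X, a ≠ b ∧ f a = x n ∧ f b = x n)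
    (g : ↥(Set.range x) → ↥(Set.range x))
    (hg : ∀ n : ℤ, (g ⟨x (n + 1), ⟨n + 1, rfl⟩⟩ : X) = x n) :
    ¬ Continuous g := by
  intro hcont
  obtain ⟨n, a, b, hab, ha, hb⟩ := hpre
  have hdense : Dense (Set.range x) := by
    refine (hmin (x 0)).mono ?_
    rintro _ ⟨k, rfl⟩
    refine ⟨(k : ℤ), ?_⟩
    induction k with
    | zero => simp
    | succ m ih =>
      push_cast
      have ih' : x (m : ℤ) = f^[m] (x 0) := ih
      rw [Function.iterate_succ_apply', ← ih', hx]
  have key : ∀ c : X, f c = x n → c = (g ⟨x n, ⟨n, rfl⟩⟩ : X) := by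
    intro c hc
    have hcmem : c ∈ closure (Set.range x) := by
      rw [hdense.closure_eq]; trivial
    rw [mem_closure_iff_seq_limit] at hcmem
    obtain ⟨u, hu_mem, hu_lim⟩ := hcmem
    choose m hm using hu_mem
    set v : ℕ → ↥(Set.range x) := fun i => ⟨x (m i + 1), ⟨m i + 1, rfl⟩⟩ with hv_def
    have hv : Filter.Tendsto v Filter.atTop (𝓝 ⟨x n, ⟨n, rfl⟩⟩) := by
      rw [tendsto_subtype_rng]
      have heq : (fun i => ((v i : X))) = fun i => f (u i) := by
        funext i; simp only [hv_def]; rw [← hm i, hx]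
      rw [heq]
      have : x n = f c := hc.symm
      rw [show ((⟨x n, ⟨n, rfl⟩⟩ : ↥(Set.range x)) : X) = f c from hc.symm]
      exact (hf.tendsto c).comp hu_lim
    have hgv := (hcont.tendsto _).comp hv
    have hgv' : Filter.Tendsto (fun i => (g (v i) : X)) Filter.atTop
        (𝓝 (g ⟨x n, ⟨n, rfl⟩⟩ : X)) :=
      (continuous_subtype_val.tendsto _).comp hgv
    have heq2 : (fun i => (g (v i) : X)) = u := by
      funext i; simp only [hv_def]; rw [hg (m i), hm i]
    rw [heq2] at hgv'
    exact tendsto_nhds_unique hu_lim hgv'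
  exact hab ((key a ha).trans (key b hb).symm)
end

section
/- Let X be a compact metric space, f : X → X a continuous minimal map, and H the homeo-part of (X, f). Then: (1) f(H) = H = f⁻¹(H); (2) every point of H has exactly one f-preimage in X, and this preimage lies in H; (3) f restricted to H is a homeomorphism of H onto itself (with the subspace topology), and for every x ∈ H both the forward orbit {f^n(x) : n ≥ 0} and the backward orbit {y ∈ H : f^n(y) = x for some n ≥ 0} are dense in X. -/
open Set Topology Filter

section Helpers

variable {X : Type*} {f : X → X} {u : ℤ → X}

lemma iter_u (hu : ∀ n : ℤ, f (u n) = u (n + 1)) :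
    ∀ (k : ℕ) (m : ℤ), f^[k] (u m) = u (m + k)
  | 0, m => by simp
  | k + 1, m => by
      rw [Function.iterate_succ_apply', iter_u hu k m, hu]
      congr 1
      push_cast
      ring

lemma reach_u (hu : ∀ n : ℤ, f (u n) = u (n + 1)) (m m' : ℤ) :
    f^[(m' - m).toNat] (u m) = f^[(m - m').toNat] (u m') := by
  rw [iter_u hu, iter_u hu]
  congr 1
  omega

lemma go_shift (hu : ∀ n : ℤ, f (u n) = u (n + 1))
    (hGO : {y | ∃ i j : ℕ, f^[i] y = f^[j] (u 0)} = Set.range u) (n : ℤ) :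
    {y | ∃ i j : ℕ, f^[i] y = f^[j] (u n)} = Set.range u := by
  ext y
  simp only [Set.mem_setOf_eq]
  constructor
  · rintro ⟨i, j, h⟩
    have h1 : f^[i] y = u (n + j) := by rw [h, iter_u hu]
    have h2 : f^[(0 - (n + j)).toNat] (u (n + j)) = f^[((n + j) - 0).toNat] (u 0) :=
      reach_u hu _ _
    have h3 : y ∈ {y | ∃ i j : ℕ, f^[i] y = f^[j] (u 0)} := by
      refine ⟨(0 - (n + (j : ℤ))).toNat + i, ((n + (j : ℤ)) - 0).toNat, ?_⟩
      rw [Function.iterate_add_apply, h1, h2]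
    rwa [hGO] at h3
  · rintro ⟨m, rfl⟩
    exact ⟨(n - m).toNat, (m - n).toNat, reach_u hu m n⟩

lemma mem_homeoPart_of_witness (hu : ∀ n : ℤ, f (u n) = u (n + 1))
    (hGO : {y | ∃ i j : ℕ, f^[i] y = f^[j] (u 0)} = Set.range u) (n : ℤ) :
    u n ∈ homeoPart f := by
  refine ⟨fun m => u (n + m), by simp, fun m => ?_, ?_⟩
  · rw [hu]; congr 1; ring
  · rw [go_shift hu hGO n]
    ext y
    simp only [Set.mem_range]
    constructor
    · rintro ⟨m, rfl⟩
      exact ⟨m - n, by congr 1; ring⟩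
    · rintro ⟨m, rfl⟩
      exact ⟨n + m, rfl⟩

lemma mem_homeoPart_of_apply_mem {y : X} (h : f y ∈ homeoPart f) : y ∈ homeoPart f := by
  obtain ⟨u, hu0, hu, hGO⟩ := h
  rw [← hu0] at hGO
  have hy : y ∈ Set.range u := by
    rw [← hGO]
    exact ⟨1, 0, by simp [hu0]⟩
  obtain ⟨n, rfl⟩ := hy
  exact mem_homeoPart_of_witness hu hGO n

lemma injective_of_periodic_s11 {X : Type*} [MetricSpace X] [CompactSpace X]
    {f : X → X} (hmin : ∀ x : X, Dense (Set.range fun n => f^[n] x))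
    {z : X} {p : ℕ} (hp : 0 < p) (hz : f^[p] z = z) : Function.Injective f := by
  have hmul : ∀ q : ℕ, f^[p * q] z = z := by
    intro q
    induction q with
    | zero => simp
    | succ q ih => rw [Nat.mul_succ, Function.iterate_add_apply, hz, ih]
  have hrange : Set.range (fun n : ℕ => f^[n] z) ⊆ Set.range (fun k : Fin p => f^[(k : ℕ)] z) := by
    rintro _ ⟨n, rfl⟩
    refine ⟨⟨n % p, Nat.mod_lt n hp⟩, ?_⟩
    show f^[n % p] z = f^[n] z
    conv_rhs => rw [← Nat.mod_add_div n p]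
    rw [Function.iterate_add_apply, hmul]
  have hSfin : (Set.range (fun k : Fin p => f^[(k : ℕ)] z)).Finite := Set.finite_range _
  have huniv : (Set.univ : Set X) ⊆ Set.range (fun k : Fin p => f^[(k : ℕ)] z) := by
    calc (Set.univ : Set X) = closure (Set.range fun n : ℕ => f^[n] z) := (hmin z).closure_eq.symm
      _ ⊆ closure (Set.range (fun k : Fin p => f^[(k : ℕ)] z)) := closure_mono hrange
      _ = _ := hSfin.isClosed.closure_eq
  have hfin : Finite X := Set.finite_univ_iff.mp (hSfin.subset huniv)
  have hsurj : Function.Surjective f := by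
    intro y
    obtain ⟨k, rfl⟩ := huniv (Set.mem_univ y)
    refine ⟨f^[(k : ℕ) + p - 1] z, ?_⟩
    show f (f^[(k : ℕ) + p - 1] z) = f^[(k : ℕ)] z
    rw [← Function.iterate_succ_apply' f,
      show ((k : ℕ) + p - 1).succ = (k : ℕ) + p from by omega,
      Function.iterate_add_apply, hz]
  exact Finite.injective_iff_surjective.mpr hsurj

lemma existsUnique_preimage {X : Type*} [MetricSpace X] [CompactSpace X]
    {f : X → X} (hmin : ∀ x : X, Dense (Set.range fun n => f^[n] x))
    {x : X} (hx : x ∈ homeoPart f) : ∃! y : X, f y = x := by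
  obtain ⟨u, hu0, hu, hGO⟩ := hx
  have h1 : f (u (-1)) = x := by
    have he : (-1 : ℤ) + 1 = 0 := by ring
    rw [hu, he, hu0]
  refine ⟨u (-1), h1, fun y hy => ?_⟩
  by_cases hper : ∃ z : X, ∃ p : ℕ, 0 < p ∧ f^[p] z = z
  · obtain ⟨z, p, hp, hz⟩ := hper
    exact injective_of_periodic_s11 hmin hp hz (hy.trans h1.symm)
  · push_neg at hper
    have key : ∀ a b : ℤ, a < b → u a ≠ u b := by
      intro a b h hab
      refine hper (u a) (b - a).toNat (by omega) ?_
      rw [iter_u hu, show a + (((b - a).toNat : ℕ) : ℤ) = b from by omega]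
      exact hab.symm
    have huinj : Function.Injective u := by
      intro a b hab
      rcases lt_trichotomy a b with h | h | h
      · exact absurd hab (key a b h)
      · exact h
      · exact absurd hab.symm (key b a h)
    have hy' : y ∈ Set.range u := by
      rw [← hGO]
      exact ⟨1, 0, by simpa using hy⟩
    obtain ⟨n, rfl⟩ := hy'
    have h2 : u (n + 1) = u 0 := by rw [← hu, hy, hu0]
    have hn : n = -1 := by have := huinj h2; omega
    rw [hn]

lemma backward_dense {X : Type*} [MetricSpace X] [CompactSpace X]
    {f : X → X} (hf : Continuous f)
    (hmin : ∀ x : X, Dense (Set.range fun n => f^[n] x)) {u : ℤ → X}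
    (hu : ∀ n : ℤ, f (u n) = u (n + 1)) :
    Dense (Set.range (fun k : ℕ => u (-(0 : ℤ) - (k : ℤ)))) := by
  set S : ℕ → Set X := fun N => closure (Set.range (fun k : ℕ => u (-(N : ℤ) - (k : ℤ)))) with hS
  have hsub : ∀ N : ℕ,
      f '' (Set.range (fun k : ℕ => u (-((N + 1 : ℕ) : ℤ) - (k : ℤ)))) ⊆
        Set.range (fun k : ℕ => u (-(N : ℤ) - (k : ℤ))) := by
    rintro N _ ⟨_, ⟨k, rfl⟩, rfl⟩
    refine ⟨k, ?_⟩
    show u (-(N : ℤ) - (k : ℤ)) = f (u (-((N + 1 : ℕ) : ℤ) - (k : ℤ)))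
    rw [hu]
    congr 1
    push_cast
    ring
  have hfS : ∀ N : ℕ, ∀ z ∈ S (N + 1), f z ∈ S N := by
    intro N z hz
    exact closure_mono (hsub N) (image_closure_subset_closure_image hf ⟨z, hz, rfl⟩)
  have hanti : ∀ N : ℕ, S (N + 1) ⊆ S N := by
    intro N
    apply closure_mono
    rintro _ ⟨k, rfl⟩
    refine ⟨k + 1, ?_⟩
    show u (-(N : ℤ) - ((k + 1 : ℕ) : ℤ)) = u (-((N + 1 : ℕ) : ℤ) - (k : ℤ))
    congr 1
    push_cast
    ring
  have hne : ∀ N : ℕ, (S N).Nonempty :=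
    fun N => ⟨u (-(N : ℤ)), subset_closure ⟨0, by norm_num⟩⟩
  obtain ⟨c, hc⟩ := IsCompact.nonempty_iInter_of_sequence_nonempty_isCompact_isClosed S hanti hne
    (isClosed_closure.isCompact) (fun N => isClosed_closure)
  have hck : ∀ (k : ℕ) (N : ℕ), f^[k] c ∈ S N := by
    intro k
    induction k with
    | zero => intro N; exact Set.mem_iInter.mp hc N
    | succ k ih =>
        intro N
        rw [Function.iterate_succ_apply']
        exact hfS N _ (ih (N + 1))
  have h1 : Set.range (fun k : ℕ => f^[k] c) ⊆ S 0 := by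
    rintro _ ⟨k, rfl⟩
    exact hck k 0
  have h2 : closure (Set.range fun k : ℕ => f^[k] c) ⊆
      closure (Set.range (fun k : ℕ => u (-(0 : ℤ) - (k : ℤ)))) := by
    rw [← closure_closure (s := Set.range (fun k : ℕ => u (-(0 : ℤ) - (k : ℤ))))]
    exact closure_mono h1
  intro x
  exact h2 (hmin c x)

end Helpers

/-- Properties of the homeo-part `H` of a continuous minimal map `f` of a
compact metric space: (1) `f(H) = H = f⁻¹(H)`; (2) every point of `H` has exactly one
`f`-preimage in `X`, and it lies in `H`; (3) `f` restricted to `H` is a homeomorphism of `H`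
onto itself, and the forward and backward orbits of every point of `H` are dense in `X`. -/
theorem homeoPart_properties
    {X : Type*} [MetricSpace X] [CompactSpace X]
    (f : X → X) (hf : Continuous f)
    (hmin : ∀ x : X, Dense (Set.range fun n => f^[n] x)) :
    f '' homeoPart f = homeoPart f ∧
    f ⁻¹' homeoPart f = homeoPart f ∧
    (∀ x ∈ homeoPart f, ∃! y : X, f y = x) ∧
    (∀ x ∈ homeoPart f, ∀ y : X, f y = x → y ∈ homeoPart f) ∧
    (∃ h : ↥(homeoPart f) ≃ₜ ↥(homeoPart f), ∀ a : ↥(homeoPart f), (h a : X) = f a) ∧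
    (∀ x ∈ homeoPart f, Dense (Set.range fun n => f^[n] x)) ∧
    (∀ x ∈ homeoPart f, Dense {y | y ∈ homeoPart f ∧ ∃ n : ℕ, f^[n] y = x}) := by
  have hmapsto : ∀ x ∈ homeoPart f, f x ∈ homeoPart f := by
    intro x hx
    obtain ⟨u, hu0, hu, hGO⟩ := hx
    rw [← hu0] at hGO
    have h1 : f x = u 1 := by rw [← hu0, hu]; norm_num
    rw [h1]
    exact mem_homeoPart_of_witness hu hGO 1
  have hsurjH : ∀ x ∈ homeoPart f, ∃ y ∈ homeoPart f, f y = x := by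
    intro x hx
    obtain ⟨u, hu0, hu, hGO⟩ := hx
    rw [← hu0] at hGO
    refine ⟨u (-1), mem_homeoPart_of_witness hu hGO (-1), ?_⟩
    have he : (-1 : ℤ) + 1 = 0 := by ring
    rw [hu, he, hu0]
  have h1 : f '' homeoPart f = homeoPart f := by
    apply Set.Subset.antisymm
    · rintro _ ⟨x, hx, rfl⟩
      exact hmapsto x hx
    · intro x hx
      obtain ⟨y, hy, hfy⟩ := hsurjH x hx
      exact ⟨y, hy, hfy⟩
  have h2 : f ⁻¹' homeoPart f = homeoPart f := by
    apply Set.Subset.antisymm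
    · intro y hy
      exact mem_homeoPart_of_apply_mem hy
    · intro x hx
      exact hmapsto x hx
  have h3 : ∀ x ∈ homeoPart f, ∃! y : X, f y = x := fun x hx => existsUnique_preimage hmin hx
  have h4 : ∀ x ∈ homeoPart f, ∀ y : X, f y = x → y ∈ homeoPart f := by
    intro x hx y hfy
    exact mem_homeoPart_of_apply_mem (by rw [hfy]; exact hx)
  have h5 : ∃ h : ↥(homeoPart f) ≃ₜ ↥(homeoPart f), ∀ a : ↥(homeoPart f), (h a : X) = f a := by
    have hmem : ∀ a : ↥(homeoPart f), f (a : X) ∈ homeoPart f := fun a => hmapsto _ a.2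
    set F : ↥(homeoPart f) → ↥(homeoPart f) := fun a => ⟨f a, hmem a⟩ with hF
    have hFinj : Function.Injective F := by
      intro a b hab
      have hab' : f (a : X) = f (b : X) := congrArg Subtype.val hab
      exact Subtype.ext ((existsUnique_preimage hmin (hmem a)).unique rfl hab'.symm)
    have hFsurj : Function.Surjective F := by
      intro b
      obtain ⟨y, hy, hfy⟩ := hsurjH (b : X) b.2
      exact ⟨⟨y, hy⟩, Subtype.ext hfy⟩
    set E : ↥(homeoPart f) ≃ ↥(homeoPart f) := Equiv.ofBijective F ⟨hFinj, hFsurj⟩ with hE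
    have hcontF : Continuous F := Continuous.subtype_mk (hf.comp continuous_subtype_val) _
    have hfsymm : ∀ b : ↥(homeoPart f), f ((E.symm b : ↥(homeoPart f)) : X) = (b : X) :=
      fun b => congrArg Subtype.val (E.apply_symm_apply b)
    have hcontInv : Continuous E.symm := by
      apply SeqContinuous.continuous
      intro aseq a ha
      rw [tendsto_subtype_rng]
      apply tendsto_of_subseq_tendsto
      intro ns hns
      obtain ⟨z, -, ms, hms, hz⟩ := isCompact_univ.tendsto_subseq
        (fun k => Set.mem_univ (((E.symm (aseq (ns k)) : ↥(homeoPart f)) : X)))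
      refine ⟨ms, ?_⟩
      have hzt : Tendsto (fun k => f ((E.symm (aseq (ns (ms k))) : ↥(homeoPart f)) : X))
          atTop (𝓝 (f z)) := (hf.continuousAt.tendsto).comp hz
      have heq : (fun k => f ((E.symm (aseq (ns (ms k))) : ↥(homeoPart f)) : X)) =
          fun k => ((aseq (ns (ms k))) : X) := funext fun k => hfsymm _
      have hat : Tendsto (fun k => ((aseq (ns (ms k))) : X)) atTop (𝓝 (a : X)) :=
        (tendsto_subtype_rng.mp ha).comp (hns.comp hms.tendsto_atTop)
      have hfz : f z = (a : X) := tendsto_nhds_unique (heq ▸ hzt) hat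
      have hzeq : z = ((E.symm a : ↥(homeoPart f)) : X) :=
        (existsUnique_preimage hmin a.2).unique hfz (hfsymm a)
      rw [← hzeq]
      exact hz
    exact ⟨⟨E, hcontF, hcontInv⟩, fun a => rfl⟩
  have h7 : ∀ x ∈ homeoPart f, Dense {y | y ∈ homeoPart f ∧ ∃ n : ℕ, f^[n] y = x} := by
    intro x hx
    obtain ⟨u, hu0, hu, hGO⟩ := hx
    rw [← hu0] at hGO
    refine (backward_dense hf hmin hu).mono ?_
    rintro _ ⟨k, rfl⟩
    refine ⟨mem_homeoPart_of_witness hu hGO _, k, ?_⟩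
    rw [iter_u hu, show -(0 : ℤ) - (k : ℤ) + (k : ℤ) = 0 from by ring, hu0]
  exact ⟨h1, h2, h3, h4, h5, fun x _ => hmin x, h7⟩
end
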